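/- arXiv:2009.03471 — 10 statements merged into one kernel-verified Lean document; each statement's English description precedes it below -/
import Mathlib

section
/- Let H be a perfect Abelian Polish group in which the set of elements of order greater than 2 is dense. Then for any nonempty open sets U₀,…,U_{n-1} ⊆ H there exist pairwise disjoint nonempty open sets Vᵢ ⊆ Uᵢ (i < n) such that {Vᵢ : i < n} is an n-good qif. -/
def GoodQif {H : Type*} [AddCommGroup H] (n : ℕ) (𝒱 : Set (Set H)) : Prop :=
  (∀ V ∈ 𝒱, V.Nonempty) ∧ (n : ℕ∞) ≤ 𝒱.encard ∧ 𝒱.PairwiseDisjoint id ∧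
  ∀ V : Fin n → Set H, Function.Injective V → (∀ i, V i ∈ 𝒱) →
    ∀ (b bb : Fin n → H) (ι ιι : Fin n → ℤ),
      (∀ i, b i ∈ V i) → (∀ i, bb i ∈ V i) →
      (∀ i, |ι i| ≤ 1) → (∀ i, |ιι i| ≤ 1) →
      (∑ i, (ι i + ιι i) ^ 2 ≠ 0) →
      ∑ i, (ι i • b i + ιι i • bb i) ≠ 0

/-!
Choose points `x i ∈ U i` one at a time so that no combination `∑ c i • x i` with `|c i| ≤ 2`,
not all zero, vanishes. Each new point only has to avoid finitely many sets `{y | c • y = t}` with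
`c ∈ {±1, ±2}`, whose complements are open and dense: for `c = ±1` because `H` is perfect, for
`c = ±2` because they are translates of the set of elements of order `> 2`. At `b = bb = x` a
forbidden relation `∑ (ι i • b i + ιι i • bb i)` is such a combination with `c = ι + ιι`, so by
continuity it stays nonzero on small open boxes `V i ∋ x i`. Disjointness of the `V i` is itself
an instance of the relation condition: a point `y ∈ V i ∩ V j` would give the relation `y - y = 0`.
-/

open Set Filter Topology

theorem sum_sq_ne_zero_iff {ι R : Type*} [Fintype ι] [Semiring R] [LinearOrder R]
    [IsStrictOrderedRing R] [ExistsAddOfLE R] (c : ι → R) :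
    ∑ i, c i ^ 2 ≠ 0 ↔ c ≠ 0 := by
  simp [sq, Finset.sum_mul_self_eq_zero_iff, funext_iff]

theorem exists_isOpen_pi_subset_of_mem_nhds {ι : Type*} [Finite ι] {X : ι → Type*}
    [∀ i, TopologicalSpace (X i)] {x : ∀ i, X i} {s : Set (∀ i, X i)} (hs : s ∈ 𝓝 x) :
    ∃ V : ∀ i, Set (X i), (∀ i, IsOpen (V i) ∧ x i ∈ V i) ∧ univ.pi V ⊆ s := by
  obtain ⟨V, hV, hVs⟩ := isOpen_pi_iff'.1 isOpen_interior x (mem_interior_iff_mem_nhds.2 hs)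
  exact ⟨V, hV, hVs.trans interior_subset⟩

section

variable {H : Type*} [AddCommGroup H] {n : ℕ}

def IndepUpTo (k : ℤ) (x : Fin n → H) : Prop :=
  ∀ c : Fin n → ℤ, (∀ i, |c i| ≤ k) → c ≠ 0 → ∑ i, c i • x i ≠ 0

def QifIndependent (V : Fin n → Set H) : Prop :=
  ∀ (b bb : Fin n → H) (ι ιι : Fin n → ℤ),
    (∀ i, b i ∈ V i) → (∀ i, bb i ∈ V i) →
    (∀ i, |ι i| ≤ 1) → (∀ i, |ιι i| ≤ 1) →
    (∑ i, (ι i + ιι i) ^ 2 ≠ 0) →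
    ∑ i, (ι i • b i + ιι i • bb i) ≠ 0

namespace QifIndependent

variable {V : Fin n → Set H}

theorem comp_equiv (hV : QifIndependent V) (e : Fin n ≃ Fin n) : QifIndependent (V ∘ e) := by
  intro b bb ι ιι hb hbb hι hιι hsq
  have key := hV (b ∘ e.symm) (bb ∘ e.symm) (ι ∘ e.symm) (ιι ∘ e.symm)
    (fun i => by simpa using hb (e.symm i)) (fun i => by simpa using hbb (e.symm i))
    (fun i => hι _) (fun i => hιι _)
    (by simpa only [Function.comp_apply, Equiv.sum_comp e.symm fun i => (ι i + ιι i) ^ 2])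
  simpa only [Function.comp_apply, Equiv.sum_comp e.symm fun i => ι i • b i + ιι i • bb i]
    using key

theorem pairwise_disjoint (hV : QifIndependent V) (hne : ∀ i, (V i).Nonempty) :
    Pairwise (Function.onFun Disjoint V) := by
  classical
  intro i j hij
  rw [Function.onFun, Set.disjoint_left]
  intro y hyi hyj
  choose x hx using hne
  have hmem : ∀ l (k : Fin n), y ∈ V l → Function.update x l y k ∈ V k := fun l k hy => by
    rcases eq_or_ne k l with rfl | hk
    · simpa using hy
    · simpa [hk] using hx k
  refine hV (Function.update x i y) (Function.update x j y) (Pi.single i 1) (Pi.single j (-1))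
    (fun k => hmem i k hyi) (fun k => hmem j k hyj) (fun k => ?_) (fun k => ?_) ?_ ?_
  · by_cases hk : k = i <;> simp [hk]
  · by_cases hk : k = j <;> simp [hk]
  · refine (sum_sq_ne_zero_iff _).2 fun h => ?_
    simpa [hij.symm] using congr_fun h i
  · simp [Finset.sum_add_distrib, Pi.single_apply, ite_smul]

theorem goodQif_range (hV : QifIndependent V) (hne : ∀ i, (V i).Nonempty) :
    GoodQif n (range V) := by
  have hdisj := hV.pairwise_disjoint hne
  have hinj : Function.Injective V := fun i j hij => by
    by_contra hne'
    have := hdisj hne'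
    rw [Function.onFun, hij, disjoint_self] at this
    exact (hne j).ne_empty this
  refine ⟨forall_mem_range.2 hne, by simpa using hinj.encard_range, hdisj.range_pairwise, ?_⟩
  intro W hW hWV
  choose σ hσ using hWV
  have hσbij : Function.Bijective σ := Finite.injective_iff_bijective.1 fun i j h => hW <| by
    rw [← hσ i, ← hσ j, h]
  have hWe : W = V ∘ Equiv.ofBijective σ hσbij := funext fun i => (hσ i).symm
  exact hWe ▸ hV.comp_equiv _

end QifIndependent

section Topology

variable [TopologicalSpace H] [IsTopologicalAddGroup H]

theorem dense_setOf_add_self_ne (hdense : Dense {a : H | a + a ≠ 0}) (t : H) :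
    Dense {y : H | y + y ≠ t} := by
  by_cases ht : ∃ y₀, y₀ + y₀ = t
  · obtain ⟨y₀, rfl⟩ := ht
    have : {y : H | y + y ≠ y₀ + y₀} = (· - y₀) ⁻¹' {a | a + a ≠ 0} := by
      ext y
      simp [sub_add_sub_comm, sub_ne_zero]
    exact this ▸ hdense.preimage (isOpenMap_sub_right y₀)
  · have : {y : H | y + y ≠ t} = univ := eq_univ_of_forall fun y hy => ht ⟨y, hy⟩
    exact this ▸ dense_univ

theorem dense_setOf_zsmul_ne [PerfectSpace H] (hdense : Dense {a : H | a + a ≠ 0}) {c : ℤ}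
    (hc0 : c ≠ 0) (hc2 : |c| ≤ 2) (t : H) : Dense {y : H | c • y ≠ t} := by
  obtain ⟨hlo, hhi⟩ := abs_le.1 hc2
  interval_cases c
  · convert dense_setOf_add_self_ne hdense (-t) using 3 with y
    rw [neg_smul, two_zsmul, Ne, Ne, neg_eq_iff_eq_neg]
  · convert dense_compl_singleton (-t) using 1
    ext y
    simp [neg_eq_iff_eq_neg]
  · exact absurd rfl hc0
  · convert dense_compl_singleton t using 1
    ext y
    simp
  · simpa [two_zsmul] using dense_setOf_add_self_ne hdense t

theorem IndepUpTo.exists_cons [T1Space H] [PerfectSpace H] (hdense : Dense {a : H | a + a ≠ 0})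
    {x : Fin n → H} (hx : IndepUpTo 2 x) {U : Set H} (hUo : IsOpen U) (hU : U.Nonempty) :
    ∃ y ∈ U, IndepUpTo 2 (Fin.cons y x : Fin (n + 1) → H) := by
  set C : Set (Fin n → ℤ) := univ.pi fun _ => Icc (-2) 2
  set G : Set (Set H) :=
    (fun p : ℤ × (Fin n → ℤ) => {y | p.1 • y ≠ -∑ i, p.2 i • x i}) '' ((Icc (-2) 2 \ {0}) ×ˢ C)
  have hG : Dense (⋂₀ G) := by
    refine (((finite_Icc _ _).sdiff).prod (Finite.pi fun _ => finite_Icc _ _)).image _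
      |>.dense_sInter ?_ ?_
    · rintro _ ⟨p, -, rfl⟩
      exact isOpen_compl_singleton.preimage (continuous_zsmul p.1)
    · rintro _ ⟨p, ⟨⟨hp, hp0⟩, -⟩, rfl⟩
      exact dense_setOf_zsmul_ne hdense hp0 (abs_le.2 hp) _
  obtain ⟨y, hyU, hyG⟩ := hG.inter_open_nonempty U hUo hU
  refine ⟨y, hyU, fun c hc hc0 => ?_⟩
  rw [Fin.sum_univ_succ]
  simp only [Fin.cons_zero, Fin.cons_succ]
  by_cases h0 : c 0 = 0
  · have htail : Fin.tail c ≠ 0 := fun h => hc0 <| funext fun i => Fin.cases h0 (congr_fun h) i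
    simpa [h0, Fin.tail] using hx (Fin.tail c) (fun i => hc _) htail
  · rw [Ne, add_eq_zero_iff_eq_neg]
    exact hyG _ ⟨(c 0, Fin.tail c), ⟨⟨abs_le.1 (hc 0), h0⟩, fun i _ => abs_le.1 (hc _)⟩, rfl⟩

theorem exists_indepUpTo_two_mem [T1Space H] [PerfectSpace H]
    (hdense : Dense {a : H | a + a ≠ 0}) :
    ∀ {n : ℕ} (U : Fin n → Set H), (∀ i, IsOpen (U i)) → (∀ i, (U i).Nonempty) →
      ∃ x : Fin n → H, (∀ i, x i ∈ U i) ∧ IndepUpTo 2 x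
  | 0, _, _, _ => ⟨finZeroElim, finZeroElim, fun _ _ hc => (hc (Subsingleton.elim _ _)).elim⟩
  | _ + 1, U, hUo, hUne => by
    obtain ⟨x, hxU, hx⟩ := exists_indepUpTo_two_mem hdense (Fin.tail U) (fun i => hUo _)
      (fun i => hUne _)
    obtain ⟨y, hyU, hy⟩ := hx.exists_cons hdense (hUo 0) (hUne 0)
    exact ⟨Fin.cons y x, Fin.cases hyU hxU, hy⟩

theorem IndepUpTo.exists_qifIndependent [T1Space H] {x : Fin n → H} (hx : IndepUpTo 2 x)
    {U : Fin n → Set H} (hUo : ∀ i, IsOpen (U i)) (hxU : ∀ i, x i ∈ U i) :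
    ∃ V : Fin n → Set H, (∀ i, IsOpen (V i)) ∧ (∀ i, x i ∈ V i) ∧ (∀ i, V i ⊆ U i) ∧
      QifIndependent V := by
  set C : Set (Fin n → ℤ) := univ.pi fun _ => Icc (-1) 1
  have hC : C.Finite := Finite.pi fun _ => finite_Icc _ _
  have hev : ∀ᶠ p in 𝓝 x ×ˢ 𝓝 x, ∀ ι ∈ C, ∀ ιι ∈ C, ι + ιι ≠ 0 →
      ∑ i, (ι i • p.1 i + ιι i • p.2 i) ≠ 0 := by
    simp only [eventually_all_finite hC, eventually_imp_distrib_left]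
    intro ι hι ιι hιι hne
    have hcont : Continuous fun p : (Fin n → H) × (Fin n → H) =>
        ∑ i, (ι i • p.1 i + ιι i • p.2 i) := by fun_prop
    rw [← nhds_prod_eq]
    refine hcont.continuousAt.eventually_ne ?_
    have hbound : ∀ i, |(ι + ιι) i| ≤ 2 := fun i =>
      (abs_add_le _ _).trans (by linarith [abs_le.2 (hι i trivial), abs_le.2 (hιι i trivial)])
    simpa [← add_smul] using hx (ι + ιι) hbound hne
  obtain ⟨t, ht, htr⟩ := eventually_prod_self_iff'.1 hev
  obtain ⟨W, hW, hWt⟩ := exists_isOpen_pi_subset_of_mem_nhds ht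
  refine ⟨fun i => W i ∩ U i, fun i => (hW i).1.inter (hUo i), fun i => ⟨(hW i).2, hxU i⟩,
    fun i => inter_subset_right, ?_⟩
  intro b bb ι ιι hb hbb hι hιι hsq
  exact htr b (hWt fun i _ => (hb i).1) bb (hWt fun i _ => (hbb i).1) ι
    (fun i _ => abs_le.1 (hι i)) ιι (fun i _ => abs_le.1 (hιι i)) ((sum_sq_ne_zero_iff _).1 hsq)

end Topology

end

theorem exists_goodQif_of_dense_order_gt_two {H : Type*} [AddCommGroup H]
    [TopologicalSpace H] [IsTopologicalAddGroup H] [PolishSpace H]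
    (hperf : Perfect (Set.univ : Set H))
    (hdense : Dense {a : H | a + a ≠ 0})
    (n : ℕ) (U : Fin n → Set H)
    (hUo : ∀ i, IsOpen (U i)) (hUne : ∀ i, (U i).Nonempty) :
    ∃ V : Fin n → Set H,
      (∀ i, IsOpen (V i)) ∧ (∀ i, (V i).Nonempty) ∧ (∀ i, V i ⊆ U i) ∧
      Pairwise (Function.onFun Disjoint V) ∧ GoodQif n (Set.range V) := by
  have : PerfectSpace H := ⟨hperf.acc⟩
  obtain ⟨x, hxU, hx⟩ := exists_indepUpTo_two_mem hdense U hUo hUne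
  obtain ⟨V, hVo, hxV, hVU, hV⟩ := hx.exists_qifIndependent hUo hxU
  have hVne : ∀ i, (V i).Nonempty := fun i => ⟨x i, hxV i⟩
  exact ⟨V, hVo, hVne, hVU, hV.pairwise_disjoint hVne, hV.goodQif_range hVne⟩
end

section
/- Let H be an Abelian Polish group, N < ω, V₀,…,V_{N-1} ⊆ H disjoint open sets, and bᵢ ∈ Vᵢ. Then there exist open sets Wᵢ with bᵢ ∈ Wᵢ ⊆ Vᵢ for i < N such that {Wᵢ : i < N} is immersed in {Vᵢ : i < N}: i.e. there is a bijection π from the W's to the V's with W ⊆ π(W), and whenever a,a' ∈ W₀ and b ∈ W₁ (for any W₀,W₁ in the family), (a−a')+b ∈ π(W₁). -/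
open Filter Topology

/- Every `V j` is a neighbourhood of `b j`, so by continuity of `(x, y, z) ↦ x - y + z` at the
origin there is one open neighbourhood `U` of `0` with `b j + (U - U + U) ⊆ V j` for all `j`.
Take `W i := b i + U`: for `a, a' ∈ W i` and `c ∈ W j`, commutativity gives
`a - a' + c ∈ b j + (U - U + U) ⊆ V j`, and `W i ⊆ V i` since `0 ∈ U`. -/

theorem exists_open_nhds_zero_sub_add {G : Type*} [AddGroup G] [TopologicalSpace G]
    [IsTopologicalAddGroup G] {s : Set G} (hs : s ∈ 𝓝 0) :
    ∃ U : Set G, IsOpen U ∧ (0 : G) ∈ U ∧ ∀ x ∈ U, ∀ y ∈ U, ∀ z ∈ U, x - y + z ∈ s := by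
  obtain ⟨V, hV, hVs⟩ := exists_nhds_zero_half hs
  obtain ⟨D, hD, hDV⟩ := exists_nhds_half_neg hV
  obtain ⟨U, hUDV, hUo, hU0⟩ := mem_nhds_iff.1 (inter_mem hD hV)
  exact ⟨U, hUo, hU0, fun x hx y hy z hz =>
    hVs _ (hDV _ (hUDV hx).1 _ (hUDV hy).1) _ (hUDV hz).2⟩

theorem exists_immersed_shrinking_general {H : Type*} [AddCommGroup H]
    [TopologicalSpace H] [IsTopologicalAddGroup H]
    (N : ℕ) (V : Fin N → Set H) (b : Fin N → H)
    (hVo : ∀ i, IsOpen (V i))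
    (hb : ∀ i, b i ∈ V i) :
    ∃ W : Fin N → Set H,
      (∀ i, IsOpen (W i)) ∧ (∀ i, b i ∈ W i) ∧ (∀ i, W i ⊆ V i) ∧
      ∀ i j : Fin N, ∀ a ∈ W i, ∀ a' ∈ W i, ∀ c ∈ W j, (a - a') + c ∈ V j := by
  have hs : (⋂ j, (· + b j) ⁻¹' V j) ∈ 𝓝 (0 : H) := iInter_mem.2 fun j =>
    (continuous_add_const (b j)).continuousAt.preimage_mem_nhds
      (by simpa using (hVo j).mem_nhds (hb j))
  obtain ⟨U, hUo, hU0, hUs⟩ := exists_open_nhds_zero_sub_add hs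
  have hUV : ∀ j, ∀ x ∈ U, ∀ y ∈ U, ∀ z ∈ U, x - y + z + b j ∈ V j := fun j x hx y hy z hz =>
    Set.mem_iInter.1 (hUs x hx y hy z hz) j
  refine ⟨fun i => (· - b i) ⁻¹' U, fun i => hUo.preimage (continuous_sub_right (b i)),
    fun i => by simpa using hU0, fun i a ha => ?_, fun i j a ha a' ha' c hc => ?_⟩
  · simpa using hUV i _ ha 0 hU0 0 hU0
  · have h := hUV j _ ha _ ha' _ hc
    rwa [sub_sub_sub_cancel_right, add_assoc, sub_add_cancel] at h

theorem exists_immersed_shrinking {H : Type*} [AddCommGroup H]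
    [TopologicalSpace H] [IsTopologicalAddGroup H] [PolishSpace H]
    (N : ℕ) (V : Fin N → Set H) (b : Fin N → H)
    (hVo : ∀ i, IsOpen (V i)) (hdisj : Pairwise (Function.onFun Disjoint V))
    (hb : ∀ i, b i ∈ V i) :
    ∃ W : Fin N → Set H,
      (∀ i, IsOpen (W i)) ∧ (∀ i, b i ∈ W i) ∧ (∀ i, W i ⊆ V i) ∧
      ∀ i j : Fin N, ∀ a ∈ W i, ∀ a' ∈ W i, ∀ c ∈ W j, (a - a') + c ∈ V j :=
  exists_immersed_shrinking_general N V b hVo hb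
end

section
/- Let W₀,…,W₇ and W₀',…,W₇' and W₀'',…,W₇'' be elements of a family with W₀,…,W₇ pairwise distinct. Then there exist distinct i*,j* < 8 such that W_{i*} ∉ {W'_{j*}, W''_{j*}} and W_{j*} ∉ {W'_{i*}, W''_{i*}}. -/
theorem exists_avoiding_pair {α : Type*} (W W' W'' : Fin 8 → α)
    (hinj : Function.Injective W) :
    ∃ i j : Fin 8, i ≠ j ∧ W i ≠ W' j ∧ W i ≠ W'' j ∧ W j ≠ W' i ∧ W j ≠ W'' i := by
  classical
  set S : Finset (Fin 8 × Fin 8) := Finset.univ.filter (fun p => p.1 < p.2) with hSdef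
  set B : Finset (Fin 8 × Fin 8) := S.filter
    (fun p => W p.1 = W' p.2 ∨ W p.1 = W'' p.2 ∨ W p.2 = W' p.1 ∨ W p.2 = W'' p.1) with hBdef
  set g : Fin 8 × Fin 8 → Fin 8 × Fin 2 := fun p =>
    if W p.1 = W' p.2 then (p.2, 0)
    else if W p.1 = W'' p.2 then (p.2, 1)
    else if W p.2 = W' p.1 then (p.1, 0)
    else (p.1, 1) with hgdef
  have hinjOn : Set.InjOn g ↑B := by
    intro p hp q hq h
    rw [hBdef, Finset.coe_filter] at hp hq
    simp only [Set.mem_setOf_eq, hSdef, Finset.mem_filter, Finset.mem_univ, true_and] at hp hq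
    obtain ⟨hpS, hpbad⟩ := hp
    obtain ⟨hqS, hqbad⟩ := hq
    simp only [hgdef] at h
    split_ifs at h <;>
      simp only [Prod.mk.injEq] at h <;>
      try exact absurd h.2 (by decide)
    -- G1 : (A1,B1)
    · obtain ⟨he, -⟩ := h
      have hP : W p.1 = W' p.2 := by assumption
      have hQ : W q.1 = W' q.2 := by assumption
      exact Prod.ext (hinj (by rw [hP, he, ← hQ])) he
    -- G2 : (A1,B3)
    · obtain ⟨he, -⟩ := h
      have hP : W p.1 = W' p.2 := by assumption
      have hQ : W q.2 = W' q.1 := by assumption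
      have h12 : p.1 = q.2 := hinj (by rw [hP, he, ← hQ])
      rw [h12] at hpS
      rw [← he] at hqS
      exact absurd (hpS.trans hqS) (lt_irrefl _)
    -- G3 : (A2,B2)
    · obtain ⟨he, -⟩ := h
      have hP : W p.1 = W'' p.2 := by assumption
      have hQ : W q.1 = W'' q.2 := by assumption
      exact Prod.ext (hinj (by rw [hP, he, ← hQ])) he
    -- G4 : (A2,B4)
    · obtain ⟨he, -⟩ := h
      have hP : W p.1 = W'' p.2 := by assumption
      have hQ : W q.2 = W'' q.1 := by tauto
      have h12 : p.1 = q.2 := hinj (by rw [hP, he, ← hQ])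
      rw [h12] at hpS
      rw [← he] at hqS
      exact absurd (hpS.trans hqS) (lt_irrefl _)
    -- G5 : (A3,B1)
    · obtain ⟨he, -⟩ := h
      have hP : W p.2 = W' p.1 := by assumption
      have hQ : W q.1 = W' q.2 := by assumption
      have h21 : p.2 = q.1 := hinj (by rw [hP, he, ← hQ])
      rw [he] at hpS
      rw [h21] at hpS
      exact absurd (hqS.trans hpS) (lt_irrefl _)
    -- G6 : (A3,B3)
    · obtain ⟨he, -⟩ := h
      have hP : W p.2 = W' p.1 := by assumption
      have hQ : W q.2 = W' q.1 := by assumption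
      exact Prod.ext he (hinj (by rw [hP, he, ← hQ]))
    -- G7 : (A4,B2)
    · obtain ⟨he, -⟩ := h
      have hP : W p.2 = W'' p.1 := by tauto
      have hQ : W q.1 = W'' q.2 := by assumption
      have h21 : p.2 = q.1 := hinj (by rw [hP, he, ← hQ])
      rw [he] at hpS
      rw [h21] at hpS
      exact absurd (hqS.trans hpS) (lt_irrefl _)
    -- G8 : (A4,B4)
    · obtain ⟨he, -⟩ := h
      have hP : W p.2 = W'' p.1 := by tauto
      have hQ : W q.2 = W'' q.1 := by tauto
      exact Prod.ext he (hinj (by rw [hP, he, ← hQ]))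
  have hB16 : B.card ≤ 16 := by
    have h1 := Finset.card_le_card_of_injOn g (fun a _ => Finset.mem_univ (g a)) hinjOn
    simpa using h1
  have hS28 : S.card = 28 := by rw [hSdef]; decide
  have hBS : B ⊆ S := by rw [hBdef]; exact Finset.filter_subset _ _
  have hne : (S \ B).Nonempty := by
    rw [← Finset.card_pos, Finset.card_sdiff_of_subset hBS]
    omega
  obtain ⟨p, hp⟩ := hne
  rw [Finset.mem_sdiff] at hp
  obtain ⟨hpS, hpB⟩ := hp
  have hlt : p.1 < p.2 := by
    have := hpS
    rw [hSdef, Finset.mem_filter] at this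
    exact this.2
  have hnbad : ¬(W p.1 = W' p.2 ∨ W p.1 = W'' p.2 ∨ W p.2 = W' p.1 ∨ W p.2 = W'' p.1) := by
    intro hb
    exact hpB (by rw [hBdef]; exact Finset.mem_filter.mpr ⟨hpS, hb⟩)
  push_neg at hnbad
  exact ⟨p.1, p.2, ne_of_lt hlt, hnbad.1, hnbad.2.1, hnbad.2.2.1, hnbad.2.2.2⟩
end

section
/- Suppose (H,+,0) is an Abelian group, B ⊆ H is quasi independent, m → (10)⁴_{2^{144}}, A ⊆ H with |A| ≥ m, and A−A ⊆ B−B. Then exactly one of the following holds: (A) there is a unique c ∈ H with A+c ⊆ B; (B) there is a unique c ∈ H with c−A ⊆ B. -/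
open Pointwise
open scoped Classical

def QuasiIndep {H : Type*} [AddCommGroup H] (B : Set H) : Prop :=
  8 ≤ B.encard ∧
  ∀ (b : Fin 8 → H) (ι : Fin 8 → ℤ),
    Function.Injective b → (∀ i, b i ∈ B) → (∀ i, |ι i| ≤ 2) →
    (∃ i, ι i ≠ 0) → ∑ i, ι i • b i ≠ 0

def ErdosRado (m n k c : ℕ) : Prop :=
  ∀ f : Finset (Fin m) → Fin c,
    ∃ s : Finset (Fin m), s.card = n ∧
      ∀ t₁ t₂ : Finset (Fin m), t₁ ⊆ s → t₂ ⊆ s → t₁.card = k → t₂.card = k → f t₁ = f t₂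

section QIHelpers

variable {H : Type*} [AddCommGroup H] {B : Set H}

lemma qi_solve {x y u v : H} (h : x - y = u - v) : y = x - u + v := by
  have h2 : y - (x - u + v) = -((x - y) - (u - v)) := by abel
  rw [h, sub_self, neg_zero] at h2
  exact sub_eq_zero.mp h2

lemma qi_eqpt {x y u v : H} (h : x - y = u - v) (he : x = y) : u = v := by
  rw [he, sub_self] at h
  exact (sub_eq_zero.mp h.symm)

lemma qi_transfer {X Y W Z : H} (hid : X - Y = W - Z) (h : W = Z) : X = Y := by
  rw [h, sub_self] at hid
  exact sub_eq_zero.mp hid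

lemma qi_flip {x y u v : H} (h : x - y = u - v) : y - x = v - u := by
  rw [← neg_sub x y, h, neg_sub]

lemma qi_pad (hB : QuasiIndep B) : ∀ k (s : Finset H), ↑s ⊆ B → s.card + k = 8 →
    ∃ t : Finset H, s ⊆ t ∧ ↑t ⊆ B ∧ t.card = 8 := by
  intro k
  induction k with
  | zero => intro s hs hc; exact ⟨s, Finset.Subset.refl s, hs, by omega⟩
  | succ n ih =>
    intro s hs hc
    have hlt : s.card < 8 := by omega
    have hx : ∃ x ∈ B, x ∉ s := by
      by_contra h
      push_neg at h
      have hsub : B ⊆ ↑s := fun x hx => h x hx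
      have := hB.1.trans (Set.encard_mono hsub)
      rw [Set.encard_coe_eq_coe_finsetCard] at this
      have : (8:ℕ) ≤ s.card := by exact_mod_cast this
      omega
    obtain ⟨x, hxB, hxs⟩ := hx
    obtain ⟨t, h1, h2, h3⟩ := ih (insert x s)
      (by rw [Finset.coe_insert]; exact Set.insert_subset hxB hs)
      (by rw [Finset.card_insert_of_notMem hxs]; omega)
    exact ⟨t, (Finset.subset_insert _ _).trans h1, h2, h3⟩

lemma qi_Lzero (hB : QuasiIndep B) (s : Finset H) (g : H → ℤ) (hs : ↑s ⊆ B)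
    (hcard : s.card ≤ 8) (hcoef : ∀ z ∈ s, |g z| ≤ 2)
    (hsum : ∑ z ∈ s, g z • z = 0) : ∀ z ∈ s, g z = 0 := by
  obtain ⟨t, hst, htB, htc⟩ := qi_pad hB (8 - s.card) s hs (by omega)
  set g' : H → ℤ := fun z => if z ∈ s then g z else 0 with hg'
  have hsum' : ∑ z ∈ t, g' z • z = 0 := by
    rw [← Finset.sum_subset hst (by intro x _ hxs; simp [hg', hxs])]
    rw [← hsum]
    exact Finset.sum_congr rfl (by intro x hx; simp [hg', hx])
  have e : t ≃ Fin 8 := t.equivFinOfCardEq htc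
  set b : Fin 8 → H := fun i => ((e.symm i : t) : H) with hb
  have hbinj : Function.Injective b :=
    fun i j h => e.symm.injective (Subtype.coe_injective h)
  have hbB : ∀ i, b i ∈ B := fun i => htB (e.symm i).2
  have hsum8 : ∑ i, g' (b i) • b i = 0 := by
    rw [← hsum', ← Finset.sum_attach t (fun z => g' z • z)]
    rw [show (∑ x ∈ t.attach, g' (x:H) • (x:H)) = ∑ z : t, g' (z:H) • (z:H) from rfl]
    exact Equiv.sum_comp e.symm (fun z : t => g' (z : H) • (z : H))
  have hcoef' : ∀ i, |g' (b i)| ≤ 2 := by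
    intro i
    by_cases h : b i ∈ s
    · simpa [hg', h] using hcoef _ h
    · simp [hg', h]
  have hall : ∀ i, g' (b i) = 0 := by
    by_contra h
    push_neg at h
    obtain ⟨i, hi⟩ := h
    exact hB.2 b (fun i => g' (b i)) hbinj hbB hcoef' ⟨i, hi⟩ hsum8
  intro z hz
  have hzt : z ∈ t := hst hz
  have hzb : b (e ⟨z, hzt⟩) = z := by simp [hb]
  have h0 := hall (e ⟨z, hzt⟩)
  rw [hzb] at h0
  simpa [hg', hz] using h0

lemma qi_sumind (s : Finset H) {x : H} (hx : x ∈ s) (k : ℤ) :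
    ∑ z ∈ s, (if z = x then k else 0) • z = k • x := by
  rw [Finset.sum_eq_single x]
  · simp
  · intro z _ hz; simp [hz]
  · intro h; exact absurd hx h

lemma qi_four (hB : QuasiIndep B) {x1 x2 y1 y2 : H}
    (m1 : x1 ∈ B) (m2 : x2 ∈ B) (m3 : y1 ∈ B) (m4 : y2 ∈ B)
    (h : x1 + x2 = y1 + y2) :
    (x1 = y1 ∧ x2 = y2) ∨ (x1 = y2 ∧ x2 = y1) := by
  set s : Finset H := {x1, x2, y1, y2} with hsdef
  have hmem : x1 ∈ s ∧ x2 ∈ s ∧ y1 ∈ s ∧ y2 ∈ s := by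
    refine ⟨?_, ?_, ?_, ?_⟩ <;> simp [hsdef]
  set g : H → ℤ := fun z => (if z = x1 then 1 else 0) + (if z = x2 then 1 else 0)
    - (if z = y1 then 1 else 0) - (if z = y2 then 1 else 0) with hg
  have hsum : ∑ z ∈ s, g z • z = 0 := by
    have : ∀ z ∈ s, g z • z = (if z = x1 then (1:ℤ) else 0) • z
        + (if z = x2 then (1:ℤ) else 0) • z
        - (if z = y1 then (1:ℤ) else 0) • z - (if z = y2 then (1:ℤ) else 0) • z := by
      intro z _; simp [hg, add_smul, sub_smul]
    rw [Finset.sum_congr rfl this]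
    rw [Finset.sum_sub_distrib, Finset.sum_sub_distrib, Finset.sum_add_distrib,
      qi_sumind s hmem.1, qi_sumind s hmem.2.1, qi_sumind s hmem.2.2.1, qi_sumind s hmem.2.2.2]
    simp only [one_smul]
    rw [sub_eq_zero, sub_eq_iff_eq_add]
    rw [h]; abel
  have hcoef : ∀ z ∈ s, |g z| ≤ 2 := by
    intro z _
    simp only [hg]
    split_ifs <;> norm_num
  have hsub : ↑s ⊆ B := by
    intro z hz
    simp only [hsdef, Finset.coe_insert, Set.mem_insert_iff, Finset.coe_singleton,
      Set.mem_singleton_iff] at hz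
    rcases hz with h'|h'|h'|h' <;> subst h' <;> assumption
  have hcard : s.card ≤ 8 := by
    apply le_trans (Finset.card_insert_le _ _)
    apply Nat.succ_le_succ
    apply le_trans (Finset.card_insert_le _ _)
    apply Nat.succ_le_succ
    apply le_trans (Finset.card_insert_le _ _)
    simp
  have hz := qi_Lzero hB s g hsub hcard hcoef hsum
  have h1 := hz x1 hmem.1
  simp only [hg, if_pos rfl] at h1
  have hx1 : x1 = y1 ∨ x1 = y2 := by
    by_contra hc
    push_neg at hc
    simp only [hc.1, hc.2, if_false] at h1
    split_ifs at h1 <;> omega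
  rcases hx1 with he | he
  · left
    refine ⟨he, ?_⟩
    have := h; rw [he] at this
    exact add_left_cancel this
  · right
    refine ⟨he, ?_⟩
    have h2 : x2 + x1 = y1 + y2 := by rw [← h]; abel
    rw [he] at h2
    exact add_right_cancel h2

lemma qi_six (hB : QuasiIndep B) {x1 x2 x3 y1 y2 y3 : H}
    (m1 : x1 ∈ B) (m2 : x2 ∈ B) (m3 : x3 ∈ B)
    (m4 : y1 ∈ B) (m5 : y2 ∈ B) (m6 : y3 ∈ B)
    (h : x1 + x2 + x3 = y1 + y2 + y3) :
    (x1 = x2 ∧ x2 = x3) ∨ (y1 = y2 ∧ y2 = y3) ∨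
    (x1 = y1 ∧ x2 = y2 ∧ x3 = y3) ∨ (x1 = y1 ∧ x2 = y3 ∧ x3 = y2) ∨
    (x1 = y2 ∧ x2 = y1 ∧ x3 = y3) ∨ (x1 = y2 ∧ x2 = y3 ∧ x3 = y1) ∨
    (x1 = y3 ∧ x2 = y1 ∧ x3 = y2) ∨ (x1 = y3 ∧ x2 = y2 ∧ x3 = y1) := by
  by_cases hx : x1 = x2 ∧ x2 = x3
  · exact Or.inl hx
  by_cases hy : y1 = y2 ∧ y2 = y3
  · exact Or.inr (Or.inl hy)
  set s : Finset H := {x1, x2, x3, y1, y2, y3} with hsdef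
  have hmem : x1 ∈ s ∧ x2 ∈ s ∧ x3 ∈ s ∧ y1 ∈ s ∧ y2 ∈ s ∧ y3 ∈ s := by
    refine ⟨?_, ?_, ?_, ?_, ?_, ?_⟩ <;> simp [hsdef]
  set g : H → ℤ := fun z => (if z = x1 then 1 else 0) + (if z = x2 then 1 else 0)
    + (if z = x3 then 1 else 0) - (if z = y1 then 1 else 0)
    - (if z = y2 then 1 else 0) - (if z = y3 then 1 else 0) with hg
  have hsum : ∑ z ∈ s, g z • z = 0 := by
    have hco : ∀ z ∈ s, g z • z = (if z = x1 then (1:ℤ) else 0) • z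
        + (if z = x2 then (1:ℤ) else 0) • z + (if z = x3 then (1:ℤ) else 0) • z
        - (if z = y1 then (1:ℤ) else 0) • z - (if z = y2 then (1:ℤ) else 0) • z
        - (if z = y3 then (1:ℤ) else 0) • z := by
      intro z _; simp [hg, add_smul, sub_smul]
    rw [Finset.sum_congr rfl hco, Finset.sum_sub_distrib, Finset.sum_sub_distrib,
      Finset.sum_sub_distrib, Finset.sum_add_distrib, Finset.sum_add_distrib,
      qi_sumind s hmem.1, qi_sumind s hmem.2.1, qi_sumind s hmem.2.2.1, qi_sumind s hmem.2.2.2.1,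
      qi_sumind s hmem.2.2.2.2.1, qi_sumind s hmem.2.2.2.2.2]
    simp only [one_smul]
    rw [sub_eq_zero, sub_eq_iff_eq_add, sub_eq_iff_eq_add]
    rw [h]; abel
  have hsub : ↑s ⊆ B := by
    intro z hz
    simp only [hsdef, Finset.coe_insert, Set.mem_insert_iff, Finset.coe_singleton,
      Set.mem_singleton_iff] at hz
    rcases hz with h'|h'|h'|h'|h'|h' <;> subst h' <;> assumption
  have hcard : s.card ≤ 8 := by
    apply le_trans (Finset.card_insert_le _ _); apply Nat.succ_le_succ
    apply le_trans (Finset.card_insert_le _ _); apply Nat.succ_le_succ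
    apply le_trans (Finset.card_insert_le _ _); apply Nat.succ_le_succ
    apply le_trans (Finset.card_insert_le _ _); apply Nat.succ_le_succ
    apply le_trans (Finset.card_insert_le _ _); simp
  have iteone : ∀ z x : H, (if z = x then (1:ℤ) else 0) = 1 → z = x := by
    intro z x h
    by_cases c : z = x
    · exact c
    · simp [c] at h
  have itebd : ∀ z x : H, 0 ≤ (if z = x then (1:ℤ) else 0) ∧ (if z = x then (1:ℤ) else 0) ≤ 1 := by
    intro z x; constructor <;> split_ifs <;> norm_num
  have hcoef : ∀ z ∈ s, |g z| ≤ 2 := by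
    intro z _
    simp only [hg]
    obtain ⟨p1, p1'⟩ := itebd z x1
    obtain ⟨p2, p2'⟩ := itebd z x2
    obtain ⟨p3, p3'⟩ := itebd z x3
    obtain ⟨n1, n1'⟩ := itebd z y1
    obtain ⟨n2, n2'⟩ := itebd z y2
    obtain ⟨n3, n3'⟩ := itebd z y3
    have hax : ¬((if z = x1 then (1:ℤ) else 0) = 1 ∧ (if z = x2 then (1:ℤ) else 0) = 1
        ∧ (if z = x3 then (1:ℤ) else 0) = 1) := by
      rintro ⟨f1, f2, f3⟩
      exact hx ⟨(iteone z x1 f1).symm.trans (iteone z x2 f2),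
        (iteone z x2 f2).symm.trans (iteone z x3 f3)⟩
    have hay : ¬((if z = y1 then (1:ℤ) else 0) = 1 ∧ (if z = y2 then (1:ℤ) else 0) = 1
        ∧ (if z = y3 then (1:ℤ) else 0) = 1) := by
      rintro ⟨f1, f2, f3⟩
      exact hy ⟨(iteone z y1 f1).symm.trans (iteone z y2 f2),
        (iteone z y2 f2).symm.trans (iteone z y3 f3)⟩
    rw [abs_le]
    constructor <;> omega
  have hz := qi_Lzero hB s g hsub hcard hcoef hsum
  have h1 := hz x1 hmem.1
  simp only [hg, if_pos rfl] at h1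
  have hx1 : x1 = y1 ∨ x1 = y2 ∨ x1 = y3 := by
    by_contra hc
    push_neg at hc
    simp only [hc.1, hc.2.1, hc.2.2, if_false] at h1
    split_ifs at h1 <;> omega
  rcases hx1 with he | he | he
  · have h2 : x2 + x3 = y2 + y3 := by
      have : x1 + (x2 + x3) = x1 + (y2 + y3) := by rw [show x1 + (y2+y3) = y1+y2+y3 by rw [he]; abel, ← h]; abel
      exact add_left_cancel this
    rcases qi_four hB m2 m3 m5 m6 h2 with ⟨e1, e2⟩ | ⟨e1, e2⟩
    · exact Or.inr (Or.inr (Or.inl ⟨he, e1, e2⟩))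
    · exact Or.inr (Or.inr (Or.inr (Or.inl ⟨he, e1, e2⟩)))
  · have h2 : x2 + x3 = y1 + y3 := by
      have : x1 + (x2 + x3) = x1 + (y1 + y3) := by rw [show x1 + (y1+y3) = y1+y2+y3 by rw [he]; abel, ← h]; abel
      exact add_left_cancel this
    rcases qi_four hB m2 m3 m4 m6 h2 with ⟨e1, e2⟩ | ⟨e1, e2⟩
    · exact Or.inr (Or.inr (Or.inr (Or.inr (Or.inl ⟨he, e1, e2⟩))))
    · exact Or.inr (Or.inr (Or.inr (Or.inr (Or.inr (Or.inl ⟨he, e1, e2⟩)))))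
  · have h2 : x2 + x3 = y1 + y2 := by
      have : x1 + (x2 + x3) = x1 + (y1 + y2) := by rw [show x1 + (y1+y2) = y1+y2+y3 by rw [he]; abel, ← h]; abel
      exact add_left_cancel this
    rcases qi_four hB m2 m3 m4 m5 h2 with ⟨e1, e2⟩ | ⟨e1, e2⟩
    · exact Or.inr (Or.inr (Or.inr (Or.inr (Or.inr (Or.inr (Or.inl ⟨he, e1, e2⟩))))))
    · exact Or.inr (Or.inr (Or.inr (Or.inr (Or.inr (Or.inr (Or.inr ⟨he, e1, e2⟩))))))


end QIHelpers

theorem gettransl_diff {H : Type*} [AddCommGroup H] (B : Set H) (hB : QuasiIndep B)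
    (m : ℕ) (harrow : ErdosRado m 10 4 (2 ^ 144))
    (A : Set H) (hA : (m : ℕ∞) ≤ A.encard) (hdiff : A - A ⊆ B - B) :
    Xor' (∃! c : H, (· + c) '' A ⊆ B) (∃! c : H, (fun a => c - a) '' A ⊆ B) := by
  classical
  -- Step 1 : m ≥ 10
  have hm10 : 10 ≤ m := by
    obtain ⟨s, hs, -⟩ := harrow (fun _ => ⟨0, by norm_num⟩)
    calc 10 = s.card := hs.symm
      _ ≤ (Finset.univ : Finset (Fin m)).card := Finset.card_le_univ s
      _ = m := by simp
  -- Step 2 : find 10 distinct points of A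
  have h10 : ((10:ℕ) : ℕ∞) ≤ A.encard := le_trans (by exact_mod_cast hm10) hA
  obtain ⟨A10, hA10sub, hA10card⟩ := Set.exists_subset_encard_eq h10
  have hfin : A10.Finite := Set.finite_of_encard_eq_coe hA10card
  set s10 := hfin.toFinset with hs10def
  have hs10A : ↑s10 ⊆ A := by rw [hs10def, Set.Finite.coe_toFinset]; exact hA10sub
  have hs10card : s10.card = 10 := by
    have := hfin.encard_eq_coe_toFinset_card
    rw [hA10card] at this
    exact_mod_cast this.symm
  -- pick the base pair
  obtain ⟨a0, ha0s, a1, ha1s, hne01⟩ := Finset.one_lt_card.mp (by omega : 1 < s10.card)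
  have hA0 : a0 ∈ A := hs10A ha0s
  have hA1 : a1 ∈ A := hs10A ha1s
  set s8 := (s10.erase a0).erase a1 with hs8def
  have hs8card : s8.card = 8 := by
    rw [hs8def, Finset.card_erase_of_mem, Finset.card_erase_of_mem ha0s, hs10card]
    exact Finset.mem_erase.mpr ⟨fun h => hne01 h.symm, ha1s⟩
  have hs8T : ∀ a ∈ s8, a ∈ A ∧ a ≠ a0 ∧ a ≠ a1 := by
    intro a ha
    rw [hs8def] at ha
    obtain ⟨h1, h2⟩ := Finset.mem_erase.mp ha
    obtain ⟨h0, h3⟩ := Finset.mem_erase.mp h2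
    exact ⟨hs10A h3, h0, h1⟩
  -- three distinct points of A for later use
  obtain ⟨p1, p2, p3, hp1, hp2, hp3, hp12, hp13, hp23⟩ :=
    Finset.two_lt_card_iff.mp (by omega : 2 < s10.card)
  have hp1A := hs10A hp1
  have hp2A := hs10A hp2
  have hp3A := hs10A hp3
  -- representation machinery
  have hex : ∀ u v : H, ∃ p q : H,
      (u ∈ A ∧ v ∈ A ∧ u ≠ v) → (p ∈ B ∧ q ∈ B ∧ p - q = u - v ∧ p ≠ q) := by
    intro u v
    by_cases h : u ∈ A ∧ v ∈ A ∧ u ≠ v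
    · have hm : u - v ∈ B - B := hdiff (Set.sub_mem_sub h.1 h.2.1)
      obtain ⟨p, hp, q, hq, hpq⟩ := Set.mem_sub.mp hm
      refine ⟨p, q, fun _ => ⟨hp, hq, hpq, fun hpq' => h.2.2 ?_⟩⟩
      rw [hpq'] at hpq
      rw [sub_self] at hpq
      exact sub_eq_zero.mp hpq.symm
    · exact ⟨0, 0, fun hc => absurd hc h⟩
  choose P Q hPQ using hex
  have hpair : ∀ u v : H, u ∈ A → v ∈ A → u ≠ v →
      P u v ∈ B ∧ Q u v ∈ B ∧ P u v - Q u v = u - v ∧ P u v ≠ Q u v :=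
    fun u v hu hv hne => hPQ u v ⟨hu, hv, hne⟩
  obtain ⟨hwm, hym, hwy, hwyne⟩ := hpair a0 a1 hA0 hA1 hne01
  set wB := P a0 a1
  set yB := Q a0 a1
  -- labels
  set LabA : H → Prop := fun a => P a0 a = wB ∧ P a1 a = yB ∧ Q a0 a = Q a1 a with hLabA
  set LabB : H → Prop := fun a => Q a1 a = wB ∧ P a1 a = P a0 a ∧ Q a0 a = yB with hLabB
  set DgP : H → Prop := fun a => P a1 a = wB ∧ Q a0 a = wB with hDgP
  set DgQ : H → Prop := fun a => Q a1 a = yB ∧ P a0 a = yB with hDgQ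
  -- trichotomy
  have htri : ∀ a, a ∈ A → a ≠ a0 → a ≠ a1 → LabA a ∨ LabB a ∨ DgP a ∨ DgQ a := by
    intro a ha h0 h1
    obtain ⟨hSm, hTm, hST, hSTne⟩ := hpair a0 a hA0 ha (fun h => h0 h.symm)
    obtain ⟨hUm, hVm, hUV, hUVne⟩ := hpair a1 a hA1 ha (fun h => h1 h.symm)
    have key : wB + P a1 a + Q a0 a = yB + Q a1 a + P a0 a := by
      have hid : (wB + P a1 a + Q a0 a) - (yB + Q a1 a + P a0 a)
          = (wB - yB) + (P a1 a - Q a1 a) - (P a0 a - Q a0 a) := by abel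
      rw [hwy, hUV, hST] at hid
      have h2 : (wB + P a1 a + Q a0 a) - (yB + Q a1 a + P a0 a) = 0 := by
        rw [hid]; abel
      exact sub_eq_zero.mp h2
    rcases qi_six hB hwm hUm hTm hym hVm hSm key with ⟨e1,e2⟩|⟨e1,e2⟩|⟨e1,e2,e3⟩|
      ⟨e1,e2,e3⟩|⟨e1,e2,e3⟩|⟨e1,e2,e3⟩|⟨e1,e2,e3⟩|⟨e1,e2,e3⟩
    · exact Or.inr (Or.inr (Or.inl ⟨e1.symm, (e1.trans e2).symm⟩))
    · exact Or.inr (Or.inr (Or.inr ⟨e1.symm, (e1.trans e2).symm⟩))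
    · exact absurd e1 hwyne
    · exact absurd e1 hwyne
    · exact absurd e3.symm hSTne
    · exact Or.inr (Or.inl ⟨e1.symm, e2, e3⟩)
    · exact Or.inl ⟨e1.symm, e2, e3⟩
    · exact absurd e2 hUVne
  -- mixed A/B interaction
  have hF1 : ∀ a b, a ∈ A → a ≠ a0 → a ≠ a1 → b ∈ A → b ≠ a0 → b ≠ a1 → a ≠ b →
      LabA a → LabB b → a + b = a0 + a1 := by
    intro a b haA ha0 ha1 hbA hb0 hb1 hab hLa hLb
    obtain ⟨hSam, hTam, hSTa, hSTnea⟩ := hpair a0 a hA0 haA (fun h => ha0 h.symm)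
    obtain ⟨hUbm, hVbm, hUVb, hUVneb⟩ := hpair a1 b hA1 hbA (fun h => hb1 h.symm)
    obtain ⟨hrm, hr'm, hrr, hrne⟩ := hpair a b haA hbA hab
    have eA : wB - Q a0 a = a0 - a := by rw [← hLa.1]; exact hSTa
    have eB : P a1 b - wB = a1 - b := by rw [← hLb.1]; exact hUVb
    have key : P a b + wB + yB = Q a b + Q a0 a + P a1 b := by
      have hid : (P a b + wB + yB) - (Q a b + Q a0 a + P a1 b)
          = (P a b - Q a b) - ((Q a0 a - wB) + (wB - yB) + (P a1 b - wB)) := by abel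
      rw [hrr, qi_flip eA, hwy, eB] at hid
      have h2 : (P a b + wB + yB) - (Q a b + Q a0 a + P a1 b) = 0 := by rw [hid]; abel
      exact sub_eq_zero.mp h2
    rcases qi_six hB hrm hwm hym hr'm hTam hUbm key with ⟨e1,e2⟩|⟨e1,e2⟩|⟨e1,e2,e3⟩|
      ⟨e1,e2,e3⟩|⟨e1,e2,e3⟩|⟨e1,e2,e3⟩|⟨e1,e2,e3⟩|⟨e1,e2,e3⟩
    · exact absurd e2 hwyne
    · -- Q a b = Q a0 a ∧ Q a0 a = P a1 b
      have hid2 : (a + b) - (a0 + a1) = Q a0 a - P a1 b := by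
        have h3 : Q a0 a - P a1 b = -((wB - Q a0 a) + (P a1 b - wB)) := by abel
        rw [eA, eB] at h3
        rw [h3]; abel
      exact qi_transfer hid2 e2
    · exact absurd e1 hrne
    · exact absurd e1 hrne
    · -- M3 : yB = P a1 b
      have e' : yB - wB = a1 - b := by rw [e3]; exact eB
      exact absurd (sub_right_injective (e'.symm.trans (qi_flip hwy))) hb0
    · -- M4 : wB = P a1 b
      have e' := eB
      rw [← e2] at e'
      rw [sub_self] at e'
      exact absurd (sub_eq_zero.mp e'.symm).symm hb1
    · -- M5 : yB = Q a0 a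
      have e' : wB - yB = a0 - a := by rw [e3]; exact eA
      exact absurd (sub_right_injective (e'.symm.trans hwy)) ha1
    · -- M6 : wB = Q a0 a
      have e' := eA
      rw [← e2] at e'
      rw [sub_self] at e'
      exact absurd (sub_eq_zero.mp e'.symm).symm ha0
  -- DgP pair
  have hI2 : ∀ a b, a ∈ A → a ≠ a0 → a ≠ a1 → b ∈ A → b ≠ a0 → b ≠ a1 → a ≠ b →
      DgP a → DgP b → a + b = a0 + a1 := by
    intro a b haA ha0 ha1 hbA hb0 hb1 hab hPa hPb
    obtain ⟨hSam, hTam, hSTa, hSTnea⟩ := hpair a0 a hA0 haA (fun h => ha0 h.symm)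
    obtain ⟨hUam, hVam, hUVa, hUVnea⟩ := hpair a1 a hA1 haA (fun h => ha1 h.symm)
    obtain ⟨hSbm, hTbm, hSTb, hSTneb⟩ := hpair a0 b hA0 hbA (fun h => hb0 h.symm)
    obtain ⟨hUbm, hVbm, hUVb, hUVneb⟩ := hpair a1 b hA1 hbA (fun h => hb1 h.symm)
    have eSa : P a0 a - wB = a0 - a := by rw [← hPa.2]; exact hSTa
    have eVa : wB - Q a1 a = a1 - a := by rw [← hPa.1]; exact hUVa
    have eSb : P a0 b - wB = a0 - b := by rw [← hPb.2]; exact hSTb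
    have eVb : wB - Q a1 b = a1 - b := by rw [← hPb.1]; exact hUVb
    have key : P a0 b + Q a1 b = Q a1 a + P a0 a := by
      have hid : (P a0 b + Q a1 b) - (Q a1 a + P a0 a)
          = ((P a0 b - wB) - (P a0 a - wB)) + ((wB - Q a1 a) - (wB - Q a1 b)) := by abel
      rw [eSb, eSa, eVa, eVb] at hid
      have h2 : (P a0 b + Q a1 b) - (Q a1 a + P a0 a) = 0 := by rw [hid]; abel
      exact sub_eq_zero.mp h2
    rcases qi_four hB hSbm hVbm hVam hSam key with ⟨e1, e2⟩ | ⟨e1, e2⟩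
    · have h3 : Q a1 a - P a0 b = -((wB - Q a1 a) + (P a0 b - wB)) := by abel
      rw [eVa, eSb] at h3
      have hid2 : (a + b) - (a0 + a1) = Q a1 a - P a0 b := by rw [h3]; abel
      exact qi_transfer hid2 e1.symm
    · have e' : P a0 a - wB = a0 - b := by rw [← e1]; exact eSb
      exact absurd (sub_right_injective (eSa.symm.trans e')) hab
  -- DgQ pair
  have hI3 : ∀ a b, a ∈ A → a ≠ a0 → a ≠ a1 → b ∈ A → b ≠ a0 → b ≠ a1 → a ≠ b →
      DgQ a → DgQ b → a + b = a0 + a1 := by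
    intro a b haA ha0 ha1 hbA hb0 hb1 hab hQa hQb
    obtain ⟨hSam, hTam, hSTa, hSTnea⟩ := hpair a0 a hA0 haA (fun h => ha0 h.symm)
    obtain ⟨hUam, hVam, hUVa, hUVnea⟩ := hpair a1 a hA1 haA (fun h => ha1 h.symm)
    obtain ⟨hSbm, hTbm, hSTb, hSTneb⟩ := hpair a0 b hA0 hbA (fun h => hb0 h.symm)
    obtain ⟨hUbm, hVbm, hUVb, hUVneb⟩ := hpair a1 b hA1 hbA (fun h => hb1 h.symm)
    have eTa : yB - Q a0 a = a0 - a := by rw [← hQa.2]; exact hSTa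
    have eUa : P a1 a - yB = a1 - a := by rw [← hQa.1]; exact hUVa
    have eTb : yB - Q a0 b = a0 - b := by rw [← hQb.2]; exact hSTb
    have eUb : P a1 b - yB = a1 - b := by rw [← hQb.1]; exact hUVb
    have key : Q a0 a + P a1 a = P a1 b + Q a0 b := by
      have hid : (Q a0 a + P a1 a) - (P a1 b + Q a0 b)
          = ((yB - Q a0 b) - (yB - Q a0 a)) - ((P a1 b - yB) - (P a1 a - yB)) := by abel
      rw [eTb, eTa, eUb, eUa] at hid
      have h2 : (Q a0 a + P a1 a) - (P a1 b + Q a0 b) = 0 := by rw [hid]; abel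
      exact sub_eq_zero.mp h2
    rcases qi_four hB hTam hUam hUbm hTbm key with ⟨e1, e2⟩ | ⟨e1, e2⟩
    · have h3 : Q a0 a - P a1 b = -((yB - Q a0 a) + (P a1 b - yB)) := by abel
      rw [eTa, eUb] at h3
      have hid2 : (a + b) - (a0 + a1) = Q a0 a - P a1 b := by rw [h3]; abel
      exact qi_transfer hid2 e1
    · have e' : yB - Q a0 a = a0 - b := by rw [e1]; exact eTb
      exact absurd (sub_right_injective (eTa.symm.trans e')) hab
  -- DgP d vs LabA b
  have hI4 : ∀ d b, d ∈ A → d ≠ a0 → d ≠ a1 → b ∈ A → b ≠ a0 → b ≠ a1 →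
      DgP d → LabA b → (b + d = a0 + a0 ∨ b + a1 = d + a0) := by
    intro d b hdA hd0 hd1 hbA hb0 hb1 hPd hLb
    have hdb : d ≠ b := by
      intro h
      apply hwyne
      rw [← hPd.1, h, hLb.2.1]
    obtain ⟨hSdm, hTdm, hSTd, hSTned⟩ := hpair a0 d hA0 hdA (fun h => hd0 h.symm)
    obtain ⟨hUdm, hVdm, hUVd, hUVned⟩ := hpair a1 d hA1 hdA (fun h => hd1 h.symm)
    obtain ⟨hSbm, hTbm, hSTb, hSTneb⟩ := hpair a0 b hA0 hbA (fun h => hb0 h.symm)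
    obtain ⟨hUbm, hVbm, hUVb, hUVneb⟩ := hpair a1 b hA1 hbA (fun h => hb1 h.symm)
    obtain ⟨hrm, hr'm, hrr, hrne⟩ := hpair d b hdA hbA hdb
    have eSd : P a0 d - wB = a0 - d := by rw [← hPd.2]; exact hSTd
    have eVd : wB - Q a1 d = a1 - d := by rw [← hPd.1]; exact hUVd
    have eTb : wB - Q a0 b = a0 - b := by rw [← hLb.1]; exact hSTb
    have eYb : yB - Q a0 b = a1 - b := by
      rw [hLb.2.2, ← hLb.2.1]; exact hUVb
    have key : P d b + P a0 d + Q a0 b = Q d b + wB + wB := by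
      have hid : (P d b + P a0 d + Q a0 b) - (Q d b + wB + wB)
          = (P d b - Q d b) - ((wB - P a0 d) + (wB - Q a0 b)) := by abel
      rw [hrr, qi_flip eSd, eTb] at hid
      have h2 : (P d b + P a0 d + Q a0 b) - (Q d b + wB + wB) = 0 := by rw [hid]; abel
      exact sub_eq_zero.mp h2
    rcases qi_six hB hrm hSdm hTbm hr'm hwm hwm key with ⟨e1,e2⟩|⟨e1,e2⟩|⟨e1,e2,e3⟩|
      ⟨e1,e2,e3⟩|⟨e1,e2,e3⟩|⟨e1,e2,e3⟩|⟨e1,e2,e3⟩|⟨e1,e2,e3⟩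
    · -- P d b = P a0 d ∧ P a0 d = Q a0 b
      left
      have h3 : Q a0 b - P a0 d = -((wB - Q a0 b) + (P a0 d - wB)) := by abel
      rw [eTb, eSd] at h3
      have hid2 : (b + d) - (a0 + a0) = Q a0 b - P a0 d := by rw [h3]; abel
      exact qi_transfer hid2 e2.symm
    · -- Q d b = wB
      right
      have hrr' : P d b - wB = d - b := by rw [← e1]; exact hrr
      have k2 : P d b + Q a0 b = Q a1 d + yB := by
        have hid : (P d b + Q a0 b) - (Q a1 d + yB)
            = (P d b - wB) - ((Q a1 d - wB) + (yB - Q a0 b)) := by abel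
        rw [hrr', qi_flip eVd, eYb] at hid
        have h2 : (P d b + Q a0 b) - (Q a1 d + yB) = 0 := by rw [hid]; abel
        exact sub_eq_zero.mp h2
      rcases qi_four hB hrm hTbm hVdm hym k2 with ⟨f1, f2⟩ | ⟨f1, f2⟩
      · -- Q a0 b = yB : b = a1, contradiction
        exfalso
        have e' := eYb
        rw [f2, sub_self] at e'
        exact hb1 (sub_eq_zero.mp e'.symm).symm
      · -- Q a0 b = Q a1 d
        have h3 : Q a0 b - Q a1 d = -((wB - Q a0 b) - (wB - Q a1 d)) := by abel
        rw [eTb, eVd] at h3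
        have hid2 : (b + a1) - (d + a0) = Q a0 b - Q a1 d := by rw [h3]; abel
        exact qi_transfer hid2 f2
    · exact absurd e1 hrne
    · exact absurd e1 hrne
    · -- Q a0 b = wB : b = a0
      exfalso
      have e' := eTb
      rw [e3, sub_self] at e'
      exact hb0 (sub_eq_zero.mp e'.symm).symm
    · -- P a0 d = wB : d = a0
      exfalso
      have e' := eSd
      rw [e2, sub_self] at e'
      exact hd0 (sub_eq_zero.mp e'.symm).symm
    · -- M5 : Q a0 b = wB
      exfalso
      have e' := eTb
      rw [e3, sub_self] at e'
      exact hb0 (sub_eq_zero.mp e'.symm).symm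
    · -- M6 : P a0 d = wB
      exfalso
      have e' := eSd
      rw [e2, sub_self] at e'
      exact hd0 (sub_eq_zero.mp e'.symm).symm
  -- DgQ d vs LabA b
  have hI5 : ∀ d b, d ∈ A → d ≠ a0 → d ≠ a1 → b ∈ A → b ≠ a0 → b ≠ a1 →
      DgQ d → LabA b → (b + d = a1 + a1 ∨ b + a0 = d + a1) := by
    intro d b hdA hd0 hd1 hbA hb0 hb1 hQd hLb
    have hdb : d ≠ b := by
      intro h
      apply hwyne
      rw [← hLb.1, ← h, hQd.2]
    obtain ⟨hSdm, hTdm, hSTd, hSTned⟩ := hpair a0 d hA0 hdA (fun h => hd0 h.symm)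
    obtain ⟨hUdm, hVdm, hUVd, hUVned⟩ := hpair a1 d hA1 hdA (fun h => hd1 h.symm)
    obtain ⟨hSbm, hTbm, hSTb, hSTneb⟩ := hpair a0 b hA0 hbA (fun h => hb0 h.symm)
    obtain ⟨hUbm, hVbm, hUVb, hUVneb⟩ := hpair a1 b hA1 hbA (fun h => hb1 h.symm)
    obtain ⟨hrm, hr'm, hrr, hrne⟩ := hpair d b hdA hbA hdb
    have eTd : yB - Q a0 d = a0 - d := by rw [← hQd.2]; exact hSTd
    have eUd : P a1 d - yB = a1 - d := by rw [← hQd.1]; exact hUVd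
    have eTb : wB - Q a0 b = a0 - b := by rw [← hLb.1]; exact hSTb
    have eYb : yB - Q a0 b = a1 - b := by
      rw [hLb.2.2, ← hLb.2.1]; exact hUVb
    have key : P d b + P a1 d + Q a0 b = Q d b + yB + yB := by
      have hid : (P d b + P a1 d + Q a0 b) - (Q d b + yB + yB)
          = (P d b - Q d b) - ((yB - P a1 d) + (yB - Q a0 b)) := by abel
      rw [hrr, qi_flip eUd, eYb] at hid
      have h2 : (P d b + P a1 d + Q a0 b) - (Q d b + yB + yB) = 0 := by rw [hid]; abel
      exact sub_eq_zero.mp h2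
    rcases qi_six hB hrm hUdm hTbm hr'm hym hym key with ⟨e1,e2⟩|⟨e1,e2⟩|⟨e1,e2,e3⟩|
      ⟨e1,e2,e3⟩|⟨e1,e2,e3⟩|⟨e1,e2,e3⟩|⟨e1,e2,e3⟩|⟨e1,e2,e3⟩
    · -- P d b = P a1 d ∧ P a1 d = Q a0 b
      left
      have h3 : Q a0 b - P a1 d = -((yB - Q a0 b) + (P a1 d - yB)) := by abel
      rw [eYb, eUd] at h3
      have hid2 : (b + d) - (a1 + a1) = Q a0 b - P a1 d := by rw [h3]; abel
      exact qi_transfer hid2 e2.symm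
    · -- Q d b = yB
      right
      have hrr' : P d b - yB = d - b := by rw [← e1]; exact hrr
      have k2 : P d b + Q a0 b = Q a0 d + wB := by
        have hid : (P d b + Q a0 b) - (Q a0 d + wB)
            = (P d b - yB) - ((Q a0 d - yB) + (wB - Q a0 b)) := by abel
        rw [hrr', qi_flip eTd, eTb] at hid
        have h2 : (P d b + Q a0 b) - (Q a0 d + wB) = 0 := by rw [hid]; abel
        exact sub_eq_zero.mp h2
      rcases qi_four hB hrm hTbm hTdm hwm k2 with ⟨f1, f2⟩ | ⟨f1, f2⟩
      · -- Q a0 b = wB : b = a0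
        exfalso
        have e' := eTb
        rw [f2, sub_self] at e'
        exact hb0 (sub_eq_zero.mp e'.symm).symm
      · -- Q a0 b = Q a0 d
        have h3 : Q a0 b - Q a0 d = -((wB - Q a0 b) - (yB - Q a0 d)) - (yB - wB) := by abel
        rw [eTb, eTd, qi_flip hwy] at h3
        have hid2 : (b + a0) - (d + a1) = Q a0 b - Q a0 d := by rw [h3]; abel
        exact qi_transfer hid2 f2
    · exact absurd e1 hrne
    · exact absurd e1 hrne
    · -- M3 : Q a0 b = yB : b = a1
      exfalso
      have e' := eYb
      rw [e3, sub_self] at e'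
      exact hb1 (sub_eq_zero.mp e'.symm).symm
    · -- M4 : P a1 d = yB : d = a1
      exfalso
      have e' := eUd
      rw [e2, sub_self] at e'
      exact hd1 (sub_eq_zero.mp e'.symm).symm
    · -- M5 : Q a0 b = yB
      exfalso
      have e' := eYb
      rw [e3, sub_self] at e'
      exact hb1 (sub_eq_zero.mp e'.symm).symm
    · -- M6 : P a1 d = yB
      exfalso
      have e' := eUd
      rw [e2, sub_self] at e'
      exact hd1 (sub_eq_zero.mp e'.symm).symm
  -- DgP d vs LabB b
  have hI6 : ∀ d b, d ∈ A → d ≠ a0 → d ≠ a1 → b ∈ A → b ≠ a0 → b ≠ a1 →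
      DgP d → LabB b → (b + d = a1 + a1 ∨ b + a0 = d + a1) := by
    intro d b hdA hd0 hd1 hbA hb0 hb1 hPd hLb
    have hdb : d ≠ b := by
      intro h
      apply hwyne
      rw [← hPd.2, h, hLb.2.2]
    obtain ⟨hSdm, hTdm, hSTd, hSTned⟩ := hpair a0 d hA0 hdA (fun h => hd0 h.symm)
    obtain ⟨hUdm, hVdm, hUVd, hUVned⟩ := hpair a1 d hA1 hdA (fun h => hd1 h.symm)
    obtain ⟨hSbm, hTbm, hSTb, hSTneb⟩ := hpair a0 b hA0 hbA (fun h => hb0 h.symm)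
    obtain ⟨hUbm, hVbm, hUVb, hUVneb⟩ := hpair a1 b hA1 hbA (fun h => hb1 h.symm)
    obtain ⟨hrm, hr'm, hrr, hrne⟩ := hpair d b hdA hbA hdb
    have eSd : P a0 d - wB = a0 - d := by rw [← hPd.2]; exact hSTd
    have eVd : wB - Q a1 d = a1 - d := by rw [← hPd.1]; exact hUVd
    have eUb : P a1 b - wB = a1 - b := by rw [← hLb.1]; exact hUVb
    have eSb : P a0 b - yB = a0 - b := by rw [← hLb.2.2]; exact hSTb
    have eUb' : P a0 b - wB = a1 - b := by rw [← hLb.2.1]; exact eUb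
    have key : P d b + P a0 d + yB = Q d b + wB + P a0 b := by
      have hid : (P d b + P a0 d + yB) - (Q d b + wB + P a0 b)
          = (P d b - Q d b) - ((wB - P a0 d) + (P a0 b - yB)) := by abel
      rw [hrr, qi_flip eSd, eSb] at hid
      have h2 : (P d b + P a0 d + yB) - (Q d b + wB + P a0 b) = 0 := by rw [hid]; abel
      exact sub_eq_zero.mp h2
    rcases qi_six hB hrm hSdm hym hr'm hwm hSbm key with ⟨e1,e2⟩|⟨e1,e2⟩|⟨e1,e2,e3⟩|
      ⟨e1,e2,e3⟩|⟨e1,e2,e3⟩|⟨e1,e2,e3⟩|⟨e1,e2,e3⟩|⟨e1,e2,e3⟩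
    · -- P d b = P a0 d ∧ P a0 d = yB : go to second relation
      have hrr'' : yB - Q d b = d - b := by rw [← (e1.trans e2)]; exact hrr
      have k2 : yB + wB + wB = Q d b + Q a1 d + P a0 b := by
        have hid : (yB + wB + wB) - (Q d b + Q a1 d + P a0 b)
            = (yB - Q d b) - ((Q a1 d - wB) + (P a0 b - wB)) := by abel
        rw [hrr'', qi_flip eVd, eUb'] at hid
        have h2 : (yB + wB + wB) - (Q d b + Q a1 d + P a0 b) = 0 := by rw [hid]; abel
        exact sub_eq_zero.mp h2
      rcases qi_six hB hym hwm hwm hr'm hVdm hSbm k2 with ⟨f1,f2⟩|⟨f1,f2⟩|⟨f1,f2,f3⟩|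
        ⟨f1,f2,f3⟩|⟨f1,f2,f3⟩|⟨f1,f2,f3⟩|⟨f1,f2,f3⟩|⟨f1,f2,f3⟩
      · exact absurd f1.symm hwyne
      · -- Q d b = Q a1 d ∧ Q a1 d = P a0 b
        left
        have h3 : Q a1 d - P a0 b = -((wB - Q a1 d) + (P a0 b - wB)) := by abel
        rw [eVd, eUb'] at h3
        have hid2 : (b + d) - (a1 + a1) = Q a1 d - P a0 b := by rw [h3]; abel
        exact qi_transfer hid2 f2
      · -- f2 : wB = Q a1 d : d = a1
        exfalso
        have e' := eVd
        rw [← f2, sub_self] at e'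
        exact hd1 (sub_eq_zero.mp e'.symm).symm
      · -- f2 : wB = P a0 b : b = a1
        exfalso
        have e' := eUb'
        rw [← f2, sub_self] at e'
        exact hb1 (sub_eq_zero.mp e'.symm).symm
      · -- f3 : wB = P a0 b? M3 : f1 : yB = Q a1 d, f2 : wB = Q d b, f3 : wB = P a0 b
        exfalso
        have e' := eUb'
        rw [← f3, sub_self] at e'
        exact hb1 (sub_eq_zero.mp e'.symm).symm
      · -- M4 : f2 : wB = P a0 b
        exfalso
        have e' := eUb'
        rw [← f2, sub_self] at e'
        exact hb1 (sub_eq_zero.mp e'.symm).symm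
      · -- M5 : f3 : wB = Q a1 d
        exfalso
        have e' := eVd
        rw [← f3, sub_self] at e'
        exact hd1 (sub_eq_zero.mp e'.symm).symm
      · -- M6 : f2 : wB = Q a1 d
        exfalso
        have e' := eVd
        rw [← f2, sub_self] at e'
        exact hd1 (sub_eq_zero.mp e'.symm).symm
    · -- y const : wB = P a0 b : b = a1
      exfalso
      have e' := eUb'
      rw [← e2, sub_self] at e'
      exact hb1 (sub_eq_zero.mp e'.symm).symm
    · exact absurd e1 hrne
    · exact absurd e1 hrne
    · -- M3 : e3 : yB = P a0 b : b = a0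
      exfalso
      have e' := eSb
      rw [← e3, sub_self] at e'
      exact hb0 (sub_eq_zero.mp e'.symm).symm
    · -- M4 : e2 : P a0 d = P a0 b
      right
      have h3 : P a0 d - P a0 b = ((P a0 d - wB) - (P a0 b - yB)) + (wB - yB) := by abel
      rw [eSd, eSb, hwy] at h3
      have hid2 : (b + a0) - (d + a1) = P a0 d - P a0 b := by rw [h3]; abel
      exact qi_transfer hid2 e2
    · -- M5 : e3 : yB = wB
      exact absurd e3.symm hwyne
    · -- M6 : e2 : P a0 d = wB : d = a0
      exfalso
      have e' := eSd
      rw [e2, sub_self] at e'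
      exact hd0 (sub_eq_zero.mp e'.symm).symm
  -- DgQ d vs LabB b
  have hI7 : ∀ d b, d ∈ A → d ≠ a0 → d ≠ a1 → b ∈ A → b ≠ a0 → b ≠ a1 →
      DgQ d → LabB b → (b + d = a0 + a0 ∨ b + a1 = d + a0) := by
    intro d b hdA hd0 hd1 hbA hb0 hb1 hQd hLb
    have hdb : d ≠ b := by
      intro h
      apply hwyne
      rw [← hLb.1, ← h, hQd.1]
    obtain ⟨hSdm, hTdm, hSTd, hSTned⟩ := hpair a0 d hA0 hdA (fun h => hd0 h.symm)
    obtain ⟨hUdm, hVdm, hUVd, hUVned⟩ := hpair a1 d hA1 hdA (fun h => hd1 h.symm)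
    obtain ⟨hSbm, hTbm, hSTb, hSTneb⟩ := hpair a0 b hA0 hbA (fun h => hb0 h.symm)
    obtain ⟨hUbm, hVbm, hUVb, hUVneb⟩ := hpair a1 b hA1 hbA (fun h => hb1 h.symm)
    obtain ⟨hrm, hr'm, hrr, hrne⟩ := hpair d b hdA hbA hdb
    have eTd : yB - Q a0 d = a0 - d := by rw [← hQd.2]; exact hSTd
    have eUd : P a1 d - yB = a1 - d := by rw [← hQd.1]; exact hUVd
    have eUb : P a1 b - wB = a1 - b := by rw [← hLb.1]; exact hUVb
    have eSb : P a0 b - yB = a0 - b := by rw [← hLb.2.2]; exact hSTb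
    have eUb' : P a0 b - wB = a1 - b := by rw [← hLb.2.1]; exact eUb
    have key : P d b + yB + yB = Q d b + Q a0 d + P a0 b := by
      have hid : (P d b + yB + yB) - (Q d b + Q a0 d + P a0 b)
          = (P d b - Q d b) - ((Q a0 d - yB) + (P a0 b - yB)) := by abel
      rw [hrr, qi_flip eTd, eSb] at hid
      have h2 : (P d b + yB + yB) - (Q d b + Q a0 d + P a0 b) = 0 := by rw [hid]; abel
      exact sub_eq_zero.mp h2
    rcases qi_six hB hrm hym hym hr'm hTdm hSbm key with ⟨e1,e2⟩|⟨e1,e2⟩|⟨e1,e2,e3⟩|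
      ⟨e1,e2,e3⟩|⟨e1,e2,e3⟩|⟨e1,e2,e3⟩|⟨e1,e2,e3⟩|⟨e1,e2,e3⟩
    · -- P d b = yB : second relation
      right
      have hrr'' : yB - Q d b = d - b := by rw [← e1]; exact hrr
      have k2 : Q d b + P a0 b = P a1 d + wB := by
        have hid : (Q d b + P a0 b) - (P a1 d + wB)
            = -((yB - Q d b) - ((yB - P a1 d) + (P a0 b - wB))) := by abel
        rw [hrr'', qi_flip eUd, eUb'] at hid
        have h2 : (Q d b + P a0 b) - (P a1 d + wB) = 0 := by rw [hid]; abel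
        exact sub_eq_zero.mp h2
      rcases qi_four hB hr'm hSbm hUdm hwm k2 with ⟨f1, f2⟩ | ⟨f1, f2⟩
      · -- f2 : P a0 b = wB : b = a1
        exfalso
        have e' := eUb'
        rw [f2, sub_self] at e'
        exact hb1 (sub_eq_zero.mp e'.symm).symm
      · -- f2 : P a0 b = P a1 d
        have h3 : P a1 d - P a0 b = (P a1 d - yB) - (P a0 b - yB) := by abel
        rw [eUd, eSb] at h3
        have hid2 : (b + a1) - (d + a0) = P a1 d - P a0 b := by rw [h3]; abel
        exact qi_transfer hid2 f2.symm
    · -- y const : Q d b = Q a0 d ∧ Q a0 d = P a0 b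
      left
      have h3 : Q a0 d - P a0 b = -((yB - Q a0 d) + (P a0 b - yB)) := by abel
      rw [eTd, eSb] at h3
      have hid2 : (b + d) - (a0 + a0) = Q a0 d - P a0 b := by rw [h3]; abel
      exact qi_transfer hid2 e2
    · exact absurd e1 hrne
    · exact absurd e1 hrne
    · -- M3 : e3 : yB = P a0 b : b = a0
      exfalso
      have e' := eSb
      rw [← e3, sub_self] at e'
      exact hb0 (sub_eq_zero.mp e'.symm).symm
    · -- M4 : e2 : yB = P a0 b
      exfalso
      have e' := eSb
      rw [← e2, sub_self] at e'
      exact hb0 (sub_eq_zero.mp e'.symm).symm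
    · -- M5 : e3 : yB = Q a0 d : d = a0
      exfalso
      have e' := eTd
      rw [← e3, sub_self] at e'
      exact hd0 (sub_eq_zero.mp e'.symm).symm
    · -- M6 : e2 : yB = Q a0 d
      exfalso
      have e' := eTd
      rw [← e2, sub_self] at e'
      exact hd0 (sub_eq_zero.mp e'.symm).symm
  -- counting: ≤ 2 DgP points in s8
  have hDgP2 : (s8.filter DgP).card ≤ 2 := by
    by_contra hcon
    push_neg at hcon
    obtain ⟨a, b, c, ha, hbb, hc, hab, hac, hbc⟩ := Finset.two_lt_card_iff.mp hcon
    obtain ⟨haf, haP⟩ := Finset.mem_filter.mp ha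
    obtain ⟨hbf, hbP⟩ := Finset.mem_filter.mp hbb
    obtain ⟨hcf, hcP⟩ := Finset.mem_filter.mp hc
    obtain ⟨haA, ha0, ha1⟩ := hs8T a haf
    obtain ⟨hbA, hb0, hb1⟩ := hs8T b hbf
    obtain ⟨hcA, hc0, hc1⟩ := hs8T c hcf
    have e1 := hI2 a b haA ha0 ha1 hbA hb0 hb1 hab haP hbP
    have e2 := hI2 a c haA ha0 ha1 hcA hc0 hc1 hac haP hcP
    exact hbc (add_left_cancel (e1.trans e2.symm))
  have hDgQ2 : (s8.filter DgQ).card ≤ 2 := by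
    by_contra hcon
    push_neg at hcon
    obtain ⟨a, b, c, ha, hbb, hc, hab, hac, hbc⟩ := Finset.two_lt_card_iff.mp hcon
    obtain ⟨haf, haP⟩ := Finset.mem_filter.mp ha
    obtain ⟨hbf, hbP⟩ := Finset.mem_filter.mp hbb
    obtain ⟨hcf, hcP⟩ := Finset.mem_filter.mp hc
    obtain ⟨haA, ha0, ha1⟩ := hs8T a haf
    obtain ⟨hbA, hb0, hb1⟩ := hs8T b hbf
    obtain ⟨hcA, hc0, hc1⟩ := hs8T c hcf
    have e1 := hI3 a b haA ha0 ha1 hbA hb0 hb1 hab haP hbP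
    have e2 := hI3 a c haA ha0 ha1 hcA hc0 hc1 hac haP hcP
    exact hbc (add_left_cancel (e1.trans e2.symm))
  -- ≥ 3 points with LabA ∨ LabB
  have hABcard : 2 < (s8.filter (fun a => LabA a ∨ LabB a)).card := by
    have hsplit := Finset.card_filter_add_card_filter_not
      (s := s8) (p := fun a => LabA a ∨ LabB a)
    have hsubneg : s8.filter (fun a => ¬(LabA a ∨ LabB a)) ⊆
        s8.filter DgP ∪ s8.filter DgQ := by
      intro a ha
      obtain ⟨haf, hnab⟩ := Finset.mem_filter.mp ha
      obtain ⟨haA, ha0, ha1⟩ := hs8T a haf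
      rcases htri a haA ha0 ha1 with h | h | h | h
      · exact absurd (Or.inl h) hnab
      · exact absurd (Or.inr h) hnab
      · exact Finset.mem_union_left _ (Finset.mem_filter.mpr ⟨haf, h⟩)
      · exact Finset.mem_union_right _ (Finset.mem_filter.mpr ⟨haf, h⟩)
    have hneg : (s8.filter (fun a => ¬(LabA a ∨ LabB a))).card ≤ 4 := by
      calc (s8.filter (fun a => ¬(LabA a ∨ LabB a))).card
          ≤ (s8.filter DgP ∪ s8.filter DgQ).card := Finset.card_le_card hsubneg
        _ ≤ (s8.filter DgP).card + (s8.filter DgQ).card := Finset.card_union_le _ _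
        _ ≤ 4 := by omega
    omega
  obtain ⟨u, v, x, hu, hv, hx, huv, hux, hvx⟩ := Finset.two_lt_card_iff.mp hABcard
  obtain ⟨hus, huAB⟩ := Finset.mem_filter.mp hu
  obtain ⟨hvs, hvAB⟩ := Finset.mem_filter.mp hv
  obtain ⟨hxs, hxAB⟩ := Finset.mem_filter.mp hx
  obtain ⟨huA, hu0, hu1⟩ := hs8T u hus
  obtain ⟨hvA, hv0, hv1⟩ := hs8T v hvs
  obtain ⟨hxA, hx0, hx1⟩ := hs8T x hxs
  -- all three have same label
  have hsame : (LabA u ∧ LabA v ∧ LabA x) ∨ (LabB u ∧ LabB v ∧ LabB x) := by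
    rcases huAB with hu' | hu' <;> rcases hvAB with hv' | hv' <;> rcases hxAB with hx' | hx'
    · exact Or.inl ⟨hu', hv', hx'⟩
    · exact absurd (add_right_cancel ((hF1 u x huA hu0 hu1 hxA hx0 hx1 hux hu' hx').trans
        (hF1 v x hvA hv0 hv1 hxA hx0 hx1 hvx hv' hx').symm)) huv
    · exact absurd (add_right_cancel ((hF1 u v huA hu0 hu1 hvA hv0 hv1 huv hu' hv').trans
        (hF1 x v hxA hx0 hx1 hvA hv0 hv1 (fun h => hvx h.symm) hx' hv').symm)) hux
    · exact absurd (add_left_cancel ((hF1 u v huA hu0 hu1 hvA hv0 hv1 huv hu' hv').trans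
        (hF1 u x huA hu0 hu1 hxA hx0 hx1 hux hu' hx').symm)) hvx
    · exact absurd (add_right_cancel ((hF1 v u hvA hv0 hv1 huA hu0 hu1 (fun h => huv h.symm) hv' hu').trans
        (hF1 x u hxA hx0 hx1 huA hu0 hu1 (fun h => hux h.symm) hx' hu').symm)) hvx
    · exact absurd (add_left_cancel ((hF1 v u hvA hv0 hv1 huA hu0 hu1 (fun h => huv h.symm) hv' hu').trans
        (hF1 v x hvA hv0 hv1 hxA hx0 hx1 hvx hv' hx').symm)) hux
    · exact absurd (add_left_cancel ((hF1 x u hxA hx0 hx1 huA hu0 hu1 (fun h => hux h.symm) hx' hu').trans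
        (hF1 x v hxA hx0 hx1 hvA hv0 hv1 (fun h => hvx h.symm) hx' hv').symm)) huv
    · exact Or.inr ⟨hu', hv', hx'⟩
  have main : (∃ c : H, ∀ a ∈ A, a + c ∈ B) ∨ (∃ c : H, ∀ a ∈ A, c - a ∈ B) := by
    rcases hsame with ⟨hAu, hAv, hAx⟩ | ⟨hBu, hBv, hBx⟩
    · left
      refine ⟨wB - a0, ?_⟩
      intro a ha
      by_cases he0 : a = a0
      · subst he0
        rw [show a + (wB - a) = wB from by abel]
        exact hwm
      by_cases he1 : a = a1
      · subst he1
        rw [show a + (wB - a0) = wB - a0 + a from by abel, ← qi_solve hwy]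
        exact hym
      rcases htri a ha he0 he1 with hA' | hB' | hP' | hQ'
      · obtain ⟨hSm, hTm, hST, hSTne⟩ := hpair a0 a hA0 ha (fun h => he0 h.symm)
        have h2 : wB - Q a0 a = a0 - a := by rw [← hA'.1]; exact hST
        rw [show a + (wB - a0) = wB - a0 + a from by abel, ← qi_solve h2]
        exact hTm
      · exfalso
        by_cases hau : a = u
        · exact hvx (add_right_cancel
            ((hF1 v a hvA hv0 hv1 ha he0 he1 (fun h => huv (h.trans hau).symm) hAv hB').trans
             (hF1 x a hxA hx0 hx1 ha he0 he1 (fun h => hux (h.trans hau).symm) hAx hB').symm))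
        · by_cases hav : a = v
          · exact hux (add_right_cancel
              ((hF1 u a huA hu0 hu1 ha he0 he1 (fun h => huv (h.trans hav)) hAu hB').trans
               (hF1 x a hxA hx0 hx1 ha he0 he1 (fun h => hvx (h.trans hav).symm) hAx hB').symm))
          · exact huv (add_right_cancel
              ((hF1 u a huA hu0 hu1 ha he0 he1 (fun h => hau h.symm) hAu hB').trans
               (hF1 v a hvA hv0 hv1 ha he0 he1 (fun h => hav h.symm) hAv hB').symm))
      · exfalso
        rcases hI4 a u ha he0 he1 huA hu0 hu1 hP' hAu with h1 | h1 <;>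
          rcases hI4 a v ha he0 he1 hvA hv0 hv1 hP' hAv with h2 | h2 <;>
          rcases hI4 a x ha he0 he1 hxA hx0 hx1 hP' hAx with h3 | h3
        · exact huv (add_right_cancel (h1.trans h2.symm))
        · exact huv (add_right_cancel (h1.trans h2.symm))
        · exact hux (add_right_cancel (h1.trans h3.symm))
        · exact hvx (add_right_cancel (h2.trans h3.symm))
        · exact hvx (add_right_cancel (h2.trans h3.symm))
        · exact hux (add_right_cancel (h1.trans h3.symm))
        · exact huv (add_right_cancel (h1.trans h2.symm))
        · exact huv (add_right_cancel (h1.trans h2.symm))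
      · exfalso
        rcases hI5 a u ha he0 he1 huA hu0 hu1 hQ' hAu with h1 | h1 <;>
          rcases hI5 a v ha he0 he1 hvA hv0 hv1 hQ' hAv with h2 | h2 <;>
          rcases hI5 a x ha he0 he1 hxA hx0 hx1 hQ' hAx with h3 | h3
        · exact huv (add_right_cancel (h1.trans h2.symm))
        · exact huv (add_right_cancel (h1.trans h2.symm))
        · exact hux (add_right_cancel (h1.trans h3.symm))
        · exact hvx (add_right_cancel (h2.trans h3.symm))
        · exact hvx (add_right_cancel (h2.trans h3.symm))
        · exact hux (add_right_cancel (h1.trans h3.symm))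
        · exact huv (add_right_cancel (h1.trans h2.symm))
        · exact huv (add_right_cancel (h1.trans h2.symm))
    · right
      refine ⟨wB + a1, ?_⟩
      intro a ha
      by_cases he0 : a = a0
      · subst he0
        rw [show wB + a1 - a = wB - a + a1 from by abel, ← qi_solve hwy]
        exact hym
      by_cases he1 : a = a1
      · subst he1
        rw [show wB + a - a = wB from by abel]
        exact hwm
      rcases htri a ha he0 he1 with hA' | hB' | hP' | hQ'
      · exfalso
        by_cases hau : a = u
        · exact hvx (add_left_cancel
            ((hF1 a v ha he0 he1 hvA hv0 hv1 (fun h => huv (hau.symm.trans h)) hA' hBv).trans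
             (hF1 a x ha he0 he1 hxA hx0 hx1 (fun h => hux (hau.symm.trans h)) hA' hBx).symm))
        · by_cases hav : a = v
          · exact hux (add_left_cancel
              ((hF1 a u ha he0 he1 huA hu0 hu1 (fun h => huv (hav.symm.trans h).symm) hA' hBu).trans
               (hF1 a x ha he0 he1 hxA hx0 hx1 (fun h => hvx (hav.symm.trans h)) hA' hBx).symm))
          · exact huv (add_left_cancel
              ((hF1 a u ha he0 he1 huA hu0 hu1 (fun h => hau h) hA' hBu).trans
               (hF1 a v ha he0 he1 hvA hv0 hv1 (fun h => hav h) hA' hBv).symm))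
      · obtain ⟨hUm, hVm, hUV, hUVne⟩ := hpair a1 a hA1 ha (fun h => he1 h.symm)
        have h2 : P a1 a - wB = a1 - a := by rw [← hB'.1]; exact hUV
        have h3 : P a1 a = wB - a + a1 := qi_solve (qi_flip h2)
        rw [show wB + a1 - a = wB - a + a1 from by abel, ← h3]
        exact hUm
      · exfalso
        rcases hI6 a u ha he0 he1 huA hu0 hu1 hP' hBu with h1 | h1 <;>
          rcases hI6 a v ha he0 he1 hvA hv0 hv1 hP' hBv with h2 | h2 <;>
          rcases hI6 a x ha he0 he1 hxA hx0 hx1 hP' hBx with h3 | h3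
        · exact huv (add_right_cancel (h1.trans h2.symm))
        · exact huv (add_right_cancel (h1.trans h2.symm))
        · exact hux (add_right_cancel (h1.trans h3.symm))
        · exact hvx (add_right_cancel (h2.trans h3.symm))
        · exact hvx (add_right_cancel (h2.trans h3.symm))
        · exact hux (add_right_cancel (h1.trans h3.symm))
        · exact huv (add_right_cancel (h1.trans h2.symm))
        · exact huv (add_right_cancel (h1.trans h2.symm))
      · exfalso
        rcases hI7 a u ha he0 he1 huA hu0 hu1 hQ' hBu with h1 | h1 <;>
          rcases hI7 a v ha he0 he1 hvA hv0 hv1 hQ' hBv with h2 | h2 <;>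
          rcases hI7 a x ha he0 he1 hxA hx0 hx1 hQ' hBx with h3 | h3
        · exact huv (add_right_cancel (h1.trans h2.symm))
        · exact huv (add_right_cancel (h1.trans h2.symm))
        · exact hux (add_right_cancel (h1.trans h3.symm))
        · exact hvx (add_right_cancel (h2.trans h3.symm))
        · exact hvx (add_right_cancel (h2.trans h3.symm))
        · exact hux (add_right_cancel (h1.trans h3.symm))
        · exact huv (add_right_cancel (h1.trans h2.symm))
        · exact huv (add_right_cancel (h1.trans h2.symm))
  -- final assembly
  have hconv1 : ∀ c : H, ((· + c) '' A ⊆ B) ↔ ∀ a ∈ A, a + c ∈ B := by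
    intro c
    constructor
    · intro h a ha; exact h ⟨a, ha, rfl⟩
    · rintro h z ⟨a, ha, rfl⟩; exact h a ha
  have hconv2 : ∀ c : H, ((fun a => c - a) '' A ⊆ B) ↔ ∀ a ∈ A, c - a ∈ B := by
    intro c
    constructor
    · intro h a ha; exact h ⟨a, ha, rfl⟩
    · rintro h z ⟨a, ha, rfl⟩; exact h a ha
  have hnotboth : ¬((∃ c : H, ∀ a ∈ A, a + c ∈ B) ∧ (∃ c : H, ∀ a ∈ A, c - a ∈ B)) := by
    rintro ⟨⟨c, hc⟩, ⟨c', hc'⟩⟩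
    have k1 : p1 + c = c' - p2 := by
      rcases qi_four hB (hc p1 hp1A) (hc' p1 hp1A) (hc p2 hp2A) (hc' p2 hp2A)
        (show (p1 + c) + (c' - p1) = (p2 + c) + (c' - p2) from by abel) with ⟨e1, e2⟩ | ⟨e1, e2⟩
      · exact absurd (add_right_cancel e1) hp12
      · exact e1
    have k2 : p1 + c = c' - p3 := by
      rcases qi_four hB (hc p1 hp1A) (hc' p1 hp1A) (hc p3 hp3A) (hc' p3 hp3A)
        (show (p1 + c) + (c' - p1) = (p3 + c) + (c' - p3) from by abel) with ⟨e1, e2⟩ | ⟨e1, e2⟩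
      · exact absurd (add_right_cancel e1) hp13
      · exact e1
    exact hp23 (sub_right_injective (k1.symm.trans k2))
  have huniqA : ∀ c c' : H, (∀ a ∈ A, a + c ∈ B) → (∀ a ∈ A, a + c' ∈ B) → c = c' := by
    intro c c' h h'
    rcases qi_four hB (h p1 hp1A) (h' p2 hp2A) (h' p1 hp1A) (h p2 hp2A)
      (show (p1 + c) + (p2 + c') = (p1 + c') + (p2 + c) from by abel) with ⟨e1, e2⟩ | ⟨e1, e2⟩
    · exact add_left_cancel e1
    · exact absurd (add_right_cancel e1) hp12
  have huniqB : ∀ c c' : H, (∀ a ∈ A, c - a ∈ B) → (∀ a ∈ A, c' - a ∈ B) → c = c' := by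
    intro c c' h h'
    rcases qi_four hB (h p1 hp1A) (h' p2 hp2A) (h' p1 hp1A) (h p2 hp2A)
      (show (c - p1) + (c' - p2) = (c' - p1) + (c - p2) from by abel) with ⟨e1, e2⟩ | ⟨e1, e2⟩
    · exact sub_left_injective e1
    · exact absurd (sub_right_injective e1) hp12
  rcases main with ⟨c, hc⟩ | ⟨c, hc⟩
  · left
    constructor
    · exact ⟨c, (hconv1 c).mpr hc, fun c' hc' => huniqA c' c ((hconv1 c').mp hc') hc⟩
    · rintro ⟨c', hc', -⟩
      exact hnotboth ⟨⟨c, hc⟩, ⟨c', (hconv2 c').mp hc'⟩⟩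
  · right
    constructor
    · exact ⟨c, (hconv2 c).mpr hc, fun c' hc' => huniqB c' c ((hconv2 c').mp hc') hc⟩
    · rintro ⟨c', hc', -⟩
      exact hnotboth ⟨⟨c', (hconv1 c').mp hc'⟩, ⟨c, hc⟩⟩
end

section
/- Suppose (H,+,0) is an Abelian group, B ⊆ H is quasi independent, A' ⊆ A ⊆ H, A+A ⊆ B+B, |A'| = 4, and A'+c ⊆ B for some c ∈ H. Then A−c ⊆ B. -/
open Pointwise

/-!
Put `x = a - c` and suppose `x ∉ B`. For `a' ∈ A'` the element `β = a' + c` lies in `B` and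
`x + β = a + a' = u + v` with `u, v ∈ B`. Two such identities for `β₁ ≠ β₂` give the relation
`u₁ + v₁ + β₂ = u₂ + v₂ + β₁` among at most six elements of `B`. Its coefficients lie in `[-2, 2]`
unless one side is `3 • b`, which excludes at most two choices of `β₂`; the four elements of `A'`
leave a valid one. Quasi-independence then forces the two sides to agree as multisets, so
`β₁ ∈ {u₁, v₁}`, and cancelling gives `x ∈ B`.
-/

theorem Set.exists_mem_ne_ne_ne_of_three_lt_encard {α : Type*} {s : Set α}
    (hs : 3 < s.encard) (p q r : α) : ∃ a ∈ s, a ≠ p ∧ a ≠ q ∧ a ≠ r := by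
  classical
  by_contra! h
  have hsub : s ⊆ (({p, q, r} : Finset α) : Set α) := fun a ha => by
    by_cases hp : a = p
    · simp [hp]
    by_cases hq : a = q
    · simp [hq]
    simp [h a ha hp hq]
  have : s.encard ≤ 3 := (Set.encard_le_encard hsub).trans <| by
    rw [Set.encard_coe_eq_coe_finsetCard]; exact_mod_cast Finset.card_le_three
  exact absurd hs (not_lt.2 this)

theorem Multiset.count_triple_le_two {α : Type*} [DecidableEq α] {u v w : α}
    (h : ¬(u = w ∧ v = w)) (y : α) : count y {u, v, w} ≤ 2 := by
  simp only [Multiset.insert_eq_cons, Multiset.count_cons, Multiset.count_singleton]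
  split_ifs <;> simp_all

namespace QuasiIndep

variable {H : Type*} [AddCommGroup H] {B : Set H}

theorem exists_superset_card_eq (hB : QuasiIndep B) {F : Finset H} (hFB : ↑F ⊆ B)
    (hF : F.card ≤ 8) : ∃ T : Finset H, F ⊆ T ∧ ↑T ⊆ B ∧ T.card = 8 := by
  obtain ⟨T, hFT, hTB, hT⟩ := Set.exists_superset_subset_encard_eq hFB
    (by rw [Set.encard_coe_eq_coe_finsetCard]; exact_mod_cast hF) hB.1
  have hfin : T.Finite := Set.finite_of_encard_eq_coe hT
  refine ⟨hfin.toFinset, by simpa using hFT, by simpa using hTB, ?_⟩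
  rw [← Set.ncard_eq_toFinset_card T hfin, Set.ncard_def, hT]
  rfl

theorem finset_sum_ne_zero (hB : QuasiIndep B) {T : Finset H} (hTB : ↑T ⊆ B)
    (hT : T.card = 8) (ι : H → ℤ) (hι : ∀ y, |ι y| ≤ 2) (hne : ∃ y ∈ T, ι y ≠ 0) :
    ∑ y ∈ T, ι y • y ≠ 0 := by
  set e := T.equivFinOfCardEq hT
  have hsum : ∑ y ∈ T, ι y • y = ∑ i, ι (e.symm i) • (e.symm i : H) := by
    rw [← Finset.sum_coe_sort T, ← e.symm.sum_comp]
  obtain ⟨y, hyT, hy⟩ := hne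
  rw [hsum]
  refine hB.2 (fun i => e.symm i) (fun i => ι (e.symm i))
    (fun i j hij => e.symm.injective (Subtype.ext hij)) (fun i => hTB (e.symm i).2)
    (fun i => hι _) ⟨e ⟨y, hyT⟩, by simpa using hy⟩

theorem multiset_eq_of_sum_eq [DecidableEq H] (hB : QuasiIndep B) {s t : Multiset H}
    (hsB : ∀ x ∈ s, x ∈ B) (htB : ∀ x ∈ t, x ∈ B) (hcard : (s + t).toFinset.card ≤ 8)
    (hs : ∀ x, s.count x ≤ 2) (ht : ∀ x, t.count x ≤ 2) (hsum : s.sum = t.sum) : s = t := by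
  by_contra hst
  obtain ⟨x, hx⟩ : ∃ x, s.count x ≠ t.count x := by
    by_contra! h; exact hst (Multiset.ext.2 h)
  obtain ⟨T, hsubT, hTB, hT⟩ := hB.exists_superset_card_eq (F := (s + t).toFinset)
    (fun y hy => by
      rcases Multiset.mem_add.1 (Multiset.mem_toFinset.1 hy) with h | h
      exacts [hsB y h, htB y h]) hcard
  have hxT : x ∈ T := hsubT <| Multiset.mem_toFinset.2 <| by
    by_contra h
    simp_all [Multiset.count_eq_zero_of_notMem]
  refine hB.finset_sum_ne_zero hTB hT (fun y => (s.count y : ℤ) - t.count y)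
    (fun y => by have := hs y; have := ht y; rw [abs_le]; omega) ⟨x, hxT, by omega⟩ ?_
  have hsT : s.toFinset ⊆ T := fun y hy => hsubT (by simp_all)
  have htT : t.toFinset ⊆ T := fun y hy => hsubT (by simp_all)
  simp only [sub_smul, Finset.sum_sub_distrib, natCast_zsmul,
    ← Finset.sum_multiset_count_of_subset s T hsT, ← Finset.sum_multiset_count_of_subset t T htT,
    hsum, sub_self]

theorem mem_of_add_eq_add_of_add_eq_add (hB : QuasiIndep B)
    {x β₁ β₂ u₁ v₁ u₂ v₂ : H} (hβ₁ : β₁ ∈ B) (hβ₂ : β₂ ∈ B) (hu₁ : u₁ ∈ B) (hv₁ : v₁ ∈ B)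
    (hu₂ : u₂ ∈ B) (hv₂ : v₂ ∈ B) (e₁ : x + β₁ = u₁ + v₁) (e₂ : x + β₂ = u₂ + v₂)
    (hβ : β₁ ≠ β₂) (hβ₂u₁ : β₂ ≠ u₁) (hx : x + β₂ ≠ β₁ + β₁) : x ∈ B := by
  classical
  -- `u₁ + v₁ + β₂ = u₂ + v₂ + β₁`, and the hypotheses keep every coefficient in `[-2, 2]`
  have hrel : ({u₁, v₁, β₂} : Multiset H) = {u₂, v₂, β₁} := by
    refine hB.multiset_eq_of_sum_eq (by simp [*]) (by simp [*])
      ((Multiset.toFinset_card_le _).trans (by simp))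
      (Multiset.count_triple_le_two fun h => hβ₂u₁ h.1.symm)
      (Multiset.count_triple_le_two fun h => hx (by rw [e₂, h.1, h.2])) ?_
    simp only [Multiset.insert_eq_cons, Multiset.sum_cons, Multiset.sum_singleton]
    rw [← add_assoc u₁, ← add_assoc u₂, ← e₁, ← e₂]
    abel
  have hmem : β₁ ∈ ({u₁, v₁, β₂} : Multiset H) := hrel ▸ by simp
  simp only [Multiset.insert_eq_cons, Multiset.mem_cons, Multiset.mem_singleton] at hmem
  rcases hmem with rfl | rfl | rfl
  · rwa [add_right_cancel (e₁.trans (add_comm _ _))]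
  · rwa [add_right_cancel e₁]
  · exact absurd rfl hβ

end QuasiIndep

theorem fromKup {H : Type*} [AddCommGroup H] (B : Set H) (hB : QuasiIndep B)
    (A' A : Set H) (hsub : A' ⊆ A) (hAA : A + A ⊆ B + B) (hcard : A'.encard = 4)
    (c : H) (hc : (· + c) '' A' ⊆ B) :
    (fun a => a - c) '' A ⊆ B := by
  classical
  rintro _ ⟨a, haA, rfl⟩
  have hrep : ∀ a' ∈ A', ∃ u ∈ B, ∃ v ∈ B, a - c + (a' + c) = u + v := fun a' ha' => by
    obtain ⟨u, hu, v, hv, huv⟩ := hAA (Set.add_mem_add haA (hsub ha'))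
    exact ⟨u, hu, v, hv, by rw [show u + v = a + a' from huv]; abel⟩
  obtain ⟨a₁, ha₁⟩ : A'.Nonempty := Set.nonempty_of_encard_ne_zero (by simp [hcard])
  obtain ⟨u₁, hu₁, v₁, hv₁, e₁⟩ := hrep a₁ ha₁
  obtain ⟨a₂, ha₂, hne, hneu, hnex⟩ := Set.exists_mem_ne_ne_ne_of_three_lt_encard
    (by rw [hcard]; norm_num) a₁ (u₁ - c) (a₁ + c + (a₁ + c) - (a - c) - c)
  obtain ⟨u₂, hu₂, v₂, hv₂, e₂⟩ := hrep a₂ ha₂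
  exact hB.mem_of_add_eq_add_of_add_eq_add (x := a - c) (β₁ := a₁ + c) (β₂ := a₂ + c)
    (hc ⟨a₁, ha₁, rfl⟩) (hc ⟨a₂, ha₂, rfl⟩)
    hu₁ hv₁ hu₂ hv₂ e₁ e₂ (fun h => hne (add_right_cancel h).symm)
    (fun h => hneu (by rw [← h]; abel)) (fun h => hnex (by rw [← h]; abel))
end

section
/- Suppose (H,+,0) is an Abelian group, B ⊆ H is quasi independent, A' ⊆ A ⊆ H, A+A ⊆ B+B, |A'| ≥ 4, and A'+c ⊆ B for some c ∈ H. Then A+c ⊆ B and c has order at most 2 (i.e. c+c = 0). -/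
open Pointwise

section FourUpAux

variable {H : Type*} [AddCommGroup H]

private lemma keyQI (B : Set H) (hB : QuasiIndep B) (s : Finset H) (f : H → ℤ)
    (hsB : ∀ x ∈ s, x ∈ B) (hcard : s.card ≤ 8)
    (hf : ∀ x ∈ s, |f x| ≤ 2) (hsum : ∑ x ∈ s, f x • x = 0) :
    ∀ x ∈ s, f x = 0 := by
  classical
  -- extend s to a finset t of card 8 inside B
  have hdiff : ((8 - s.card : ℕ) : ℕ∞) ≤ (B \ ↑s).encard := by
    have h2 := Set.encard_le_encard_diff_add_encard B (↑s : Set H)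
    have h3 : (↑s : Set H).encard = s.card := Set.encard_coe_eq_coe_finsetCard s
    rw [h3] at h2
    have h4 : (8 : ℕ∞) ≤ (B \ ↑s).encard + s.card := le_trans hB.1 h2
    rw [ENat.coe_sub]
    exact tsub_le_iff_right.mpr h4
  obtain ⟨u, huB, hucard⟩ := Set.exists_subset_encard_eq hdiff
  have hufin : u.Finite := Set.finite_of_encard_eq_coe hucard
  set t : Finset H := s ∪ hufin.toFinset with ht
  have hdisj : Disjoint s hufin.toFinset := by
    rw [Finset.disjoint_left]
    intro x hxs hxu
    exact (huB (hufin.mem_toFinset.mp hxu)).2 hxs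
  have hucard' : hufin.toFinset.card = 8 - s.card := by
    have := hufin.encard_eq_coe_toFinset_card
    rw [hucard] at this
    exact_mod_cast this.symm
  have htcard : t.card = 8 := by
    rw [ht, Finset.card_union_of_disjoint hdisj, hucard']
    omega
  have htB : ∀ x ∈ t, x ∈ B := by
    intro x hx
    rcases Finset.mem_union.mp hx with h | h
    · exact hsB x h
    · exact (huB (hufin.mem_toFinset.mp h)).1
  have hst : s ⊆ t := Finset.subset_union_left
  -- enumerate t
  let e : Fin 8 ≃ t := (finCongr htcard.symm).trans t.equivFin.symm
  let b : Fin 8 → H := fun i => (e i : H)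
  have hbinj : Function.Injective b :=
    Subtype.val_injective.comp e.injective
  have hbmem : ∀ i, b i ∈ t := fun i => (e i).2
  let ι : Fin 8 → ℤ := fun i => if b i ∈ s then f (b i) else 0
  have hι : ∀ i, |ι i| ≤ 2 := by
    intro i
    simp only [ι]
    split_ifs with h
    · exact hf _ h
    · simp
  have hsum8 : ∑ i, ι i • b i = 0 := by
    have h1 : ∑ i, ι i • b i = ∑ x ∈ t, (if x ∈ s then f x else 0) • x := by
      rw [← Finset.sum_coe_sort t (fun x => (if x ∈ s then f x else 0) • x)]
      exact Fintype.sum_equiv e _ _ (fun i => rfl)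
    rw [h1, ← Finset.sum_subset hst]
    · rw [← hsum]
      exact Finset.sum_congr rfl (fun x hx => by rw [if_pos hx])
    · intro x hxt hxs
      rw [if_neg hxs, zero_smul]
  intro x hxs
  by_contra hfx
  refine hB.2 b ι hbinj (fun i => htB _ (hbmem i)) hι ?_ hsum8
  refine ⟨e.symm ⟨x, hst hxs⟩, ?_⟩
  have hbx : b (e.symm ⟨x, hst hxs⟩) = x := by simp [b]
  simp only [ι, hbx, if_pos hxs]
  exact hfx

private lemma ind_nonneg' {p : Prop} [Decidable p] : (0:ℤ) ≤ if p then 1 else 0 := by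
  split_ifs <;> omega

private lemma tri_le_two' {p q r : Prop} [Decidable p] [Decidable q] [Decidable r]
    (h : ¬(p ∧ q ∧ r)) :
    (if p then (1:ℤ) else 0) + (if q then 1 else 0) + (if r then 1 else 0) ≤ 2 := by
  split_ifs <;> first | omega | exact absurd ⟨‹p›, ‹q›, ‹r›⟩ h

private lemma chiSum [DecidableEq H] (s : Finset H) (b : H) (hb : b ∈ s) :
    ∑ t ∈ s, (if t = b then (1:ℤ) else 0) • t = b := by
  rw [Finset.sum_eq_single_of_mem b hb]
  · simp
  · intro t _ ht; simp [ht]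

private lemma sixQI [DecidableEq H] (B : Set H)
    (hkey : ∀ (s : Finset H) (f : H → ℤ), (∀ x ∈ s, x ∈ B) → s.card ≤ 8 →
      (∀ x ∈ s, |f x| ≤ 2) → ∑ x ∈ s, f x • x = 0 → ∀ x ∈ s, f x = 0)
    (u v w x y z : H)
    (hu : u ∈ B) (hv : v ∈ B) (hw : w ∈ B) (hx : x ∈ B) (hy : y ∈ B) (hz : z ∈ B)
    (hsum : u + v + w = x + y + z)
    (hpos : ¬(u = v ∧ v = w)) (hneg : ¬(x = y ∧ y = z)) :
    ∀ t : H, ((if t = u then (1:ℤ) else 0) + (if t = v then 1 else 0) + (if t = w then 1 else 0))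
      = ((if t = x then 1 else 0) + (if t = y then 1 else 0) + (if t = z then 1 else 0)) := by
  have hmem : u ∈ ({u,v,w,x,y,z} : Finset H) ∧ v ∈ ({u,v,w,x,y,z} : Finset H)
      ∧ w ∈ ({u,v,w,x,y,z} : Finset H) ∧ x ∈ ({u,v,w,x,y,z} : Finset H)
      ∧ y ∈ ({u,v,w,x,y,z} : Finset H) ∧ z ∈ ({u,v,w,x,y,z} : Finset H) := by
    refine ⟨?_, ?_, ?_, ?_, ?_, ?_⟩ <;> simp
  have hcard : ({u,v,w,x,y,z} : Finset H).card ≤ 8 := by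
    have h1 := Finset.card_insert_le u ({v,w,x,y,z} : Finset H)
    have h2 := Finset.card_insert_le v ({w,x,y,z} : Finset H)
    have h3 := Finset.card_insert_le w ({x,y,z} : Finset H)
    have h4 := Finset.card_insert_le x ({y,z} : Finset H)
    have h5 := Finset.card_insert_le y ({z} : Finset H)
    have h6 : ({z} : Finset H).card = 1 := Finset.card_singleton z
    omega
  have hsB : ∀ t ∈ ({u,v,w,x,y,z} : Finset H), t ∈ B := by
    intro t ht
    simp only [Finset.mem_insert, Finset.mem_singleton] at ht
    rcases ht with h|h|h|h|h|h <;> (subst h; assumption)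
  have hzero := hkey {u,v,w,x,y,z}
    (fun t => ((if t = u then (1:ℤ) else 0) + (if t = v then 1 else 0) + (if t = w then 1 else 0))
      - ((if t = x then 1 else 0) + (if t = y then 1 else 0) + (if t = z then 1 else 0)))
    hsB hcard
    (by
      intro t _
      show |((if t = u then (1:ℤ) else 0) + (if t = v then 1 else 0) + (if t = w then 1 else 0))
        - ((if t = x then 1 else 0) + (if t = y then 1 else 0) + (if t = z then 1 else 0))| ≤ 2
      rw [abs_le]
      have hP : ((if t = u then (1:ℤ) else 0) + (if t = v then 1 else 0)
          + (if t = w then 1 else 0)) ≤ 2 :=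
        tri_le_two' (fun ⟨e1, e2, e3⟩ => hpos ⟨e1.symm.trans e2, e2.symm.trans e3⟩)
      have hN : ((if t = x then (1:ℤ) else 0) + (if t = y then 1 else 0)
          + (if t = z then 1 else 0)) ≤ 2 :=
        tri_le_two' (fun ⟨e1, e2, e3⟩ => hneg ⟨e1.symm.trans e2, e2.symm.trans e3⟩)
      have n1 : (0:ℤ) ≤ if t = u then 1 else 0 := ind_nonneg'
      have n2 : (0:ℤ) ≤ if t = v then 1 else 0 := ind_nonneg'
      have n3 : (0:ℤ) ≤ if t = w then 1 else 0 := ind_nonneg'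
      have n4 : (0:ℤ) ≤ if t = x then 1 else 0 := ind_nonneg'
      have n5 : (0:ℤ) ≤ if t = y then 1 else 0 := ind_nonneg'
      have n6 : (0:ℤ) ≤ if t = z then 1 else 0 := ind_nonneg'
      constructor <;> linarith)
    (by
      simp only [sub_smul, add_smul]
      rw [Finset.sum_sub_distrib, Finset.sum_add_distrib, Finset.sum_add_distrib,
        Finset.sum_add_distrib, Finset.sum_add_distrib]
      rw [chiSum _ u hmem.1, chiSum _ v hmem.2.1, chiSum _ w hmem.2.2.1,
        chiSum _ x hmem.2.2.2.1, chiSum _ y hmem.2.2.2.2.1, chiSum _ z hmem.2.2.2.2.2]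
      rw [hsum, sub_self])
  intro t
  by_cases hts : t ∈ ({u,v,w,x,y,z} : Finset H)
  · have h : ((if t = u then (1:ℤ) else 0) + (if t = v then 1 else 0) + (if t = w then 1 else 0))
        - ((if t = x then 1 else 0) + (if t = y then 1 else 0) + (if t = z then 1 else 0)) = 0 :=
      hzero t hts
    linarith
  · have h1 : t ≠ u := fun h => hts (h ▸ hmem.1)
    have h2 : t ≠ v := fun h => hts (h ▸ hmem.2.1)
    have h3 : t ≠ w := fun h => hts (h ▸ hmem.2.2.1)
    have h4 : t ≠ x := fun h => hts (h ▸ hmem.2.2.2.1)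
    have h5 : t ≠ y := fun h => hts (h ▸ hmem.2.2.2.2.1)
    have h6 : t ≠ z := fun h => hts (h ▸ hmem.2.2.2.2.2)
    simp [h1, h2, h3, h4, h5, h6]

private lemma fourQI [DecidableEq H] (B : Set H)
    (hkey : ∀ (s : Finset H) (f : H → ℤ), (∀ x ∈ s, x ∈ B) → s.card ≤ 8 →
      (∀ x ∈ s, |f x| ≤ 2) → ∑ x ∈ s, f x • x = 0 → ∀ x ∈ s, f x = 0)
    (u v x y : H)
    (hu : u ∈ B) (hv : v ∈ B) (hx : x ∈ B) (hy : y ∈ B)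
    (hsum : u + v = x + y) :
    ∀ t : H, ((if t = u then (1:ℤ) else 0) + (if t = v then 1 else 0))
      = ((if t = x then 1 else 0) + (if t = y then 1 else 0)) := by
  have hmem : u ∈ ({u,v,x,y} : Finset H) ∧ v ∈ ({u,v,x,y} : Finset H)
      ∧ x ∈ ({u,v,x,y} : Finset H) ∧ y ∈ ({u,v,x,y} : Finset H) := by
    refine ⟨?_, ?_, ?_, ?_⟩ <;> simp
  have hcard : ({u,v,x,y} : Finset H).card ≤ 8 := by
    have h1 := Finset.card_insert_le u ({v,x,y} : Finset H)
    have h2 := Finset.card_insert_le v ({x,y} : Finset H)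
    have h3 := Finset.card_insert_le x ({y} : Finset H)
    have h4 : ({y} : Finset H).card = 1 := Finset.card_singleton y
    omega
  have hsB : ∀ t ∈ ({u,v,x,y} : Finset H), t ∈ B := by
    intro t ht
    simp only [Finset.mem_insert, Finset.mem_singleton] at ht
    rcases ht with h|h|h|h <;> (subst h; assumption)
  have hzero := hkey {u,v,x,y}
    (fun t => ((if t = u then (1:ℤ) else 0) + (if t = v then 1 else 0))
      - ((if t = x then 1 else 0) + (if t = y then 1 else 0)))
    hsB hcard
    (by
      intro t _
      show |((if t = u then (1:ℤ) else 0) + (if t = v then 1 else 0))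
        - ((if t = x then 1 else 0) + (if t = y then 1 else 0))| ≤ 2
      rw [abs_le]
      have n1 : (0:ℤ) ≤ if t = u then 1 else 0 := ind_nonneg'
      have n2 : (0:ℤ) ≤ if t = v then 1 else 0 := ind_nonneg'
      have n3 : (0:ℤ) ≤ if t = x then 1 else 0 := ind_nonneg'
      have n4 : (0:ℤ) ≤ if t = y then 1 else 0 := ind_nonneg'
      have m1 : (if t = u then (1:ℤ) else 0) ≤ 1 := by split_ifs <;> omega
      have m2 : (if t = v then (1:ℤ) else 0) ≤ 1 := by split_ifs <;> omega
      have m3 : (if t = x then (1:ℤ) else 0) ≤ 1 := by split_ifs <;> omega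
      have m4 : (if t = y then (1:ℤ) else 0) ≤ 1 := by split_ifs <;> omega
      constructor <;> linarith)
    (by
      simp only [sub_smul, add_smul]
      rw [Finset.sum_sub_distrib, Finset.sum_add_distrib, Finset.sum_add_distrib]
      rw [chiSum _ u hmem.1, chiSum _ v hmem.2.1, chiSum _ x hmem.2.2.1,
        chiSum _ y hmem.2.2.2]
      rw [hsum, sub_self])
  intro t
  by_cases hts : t ∈ ({u,v,x,y} : Finset H)
  · have h : ((if t = u then (1:ℤ) else 0) + (if t = v then 1 else 0))
        - ((if t = x then 1 else 0) + (if t = y then 1 else 0)) = 0 :=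
      hzero t hts
    linarith
  · have h1 : t ≠ u := fun h => hts (h ▸ hmem.1)
    have h2 : t ≠ v := fun h => hts (h ▸ hmem.2.1)
    have h3 : t ≠ x := fun h => hts (h ▸ hmem.2.2.1)
    have h4 : t ≠ y := fun h => hts (h ▸ hmem.2.2.2)
    simp [h1, h2, h3, h4]

end FourUpAux

theorem fourUp {H : Type*} [AddCommGroup H] (B : Set H) (hB : QuasiIndep B)
    (A' A : Set H) (hsub : A' ⊆ A) (hAA : A + A ⊆ B + B) (hcard : (4 : ℕ∞) ≤ A'.encard)
    (c : H) (hc : (· + c) '' A' ⊆ B) :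
    (· + c) '' A ⊆ B ∧ c + c = 0 := by
  classical
  have hkey := keyQI B hB
  -- extract four distinct elements of A'
  have hex : ∀ (s : Finset H), s.card ≤ 3 → ∃ x ∈ A', x ∉ s := by
    intro s hs
    by_contra h
    push_neg at h
    have hsub' : A' ⊆ ↑s := fun x hx => h x hx
    have h1 := Set.encard_mono hsub'
    rw [Set.encard_coe_eq_coe_finsetCard] at h1
    have h2 : (4:ℕ∞) ≤ (s.card : ℕ∞) := le_trans hcard h1
    have h3 : (4:ℕ) ≤ s.card := by exact_mod_cast h2
    omega
  obtain ⟨a₁, ha₁, -⟩ := hex ∅ (by simp)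
  obtain ⟨a₂, hm2, hn2⟩ := hex {a₁} (by simp)
  obtain ⟨a₃, hm3, hn3⟩ := hex {a₁, a₂} (by
    have h1 := Finset.card_insert_le a₁ ({a₂} : Finset H)
    have h2 : ({a₂} : Finset H).card = 1 := Finset.card_singleton a₂
    omega)
  obtain ⟨a₄, hm4, hn4⟩ := hex {a₁, a₂, a₃} (by
    have h1 := Finset.card_insert_le a₁ ({a₂, a₃} : Finset H)
    have h2 := Finset.card_insert_le a₂ ({a₃} : Finset H)
    have h3 : ({a₃} : Finset H).card = 1 := Finset.card_singleton a₃
    omega)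
  simp only [Finset.mem_singleton, Finset.mem_insert, not_or] at hn2 hn3 hn4
  have hne12 : a₁ ≠ a₂ := Ne.symm hn2
  have hne13 : a₁ ≠ a₃ := Ne.symm hn3.1
  have hne23 : a₂ ≠ a₃ := Ne.symm hn3.2
  have hne14 : a₁ ≠ a₄ := Ne.symm hn4.1
  have hne24 : a₂ ≠ a₄ := Ne.symm hn4.2.1
  have hne34 : a₃ ≠ a₄ := Ne.symm hn4.2.2
  -- elements of B
  have hcB : ∀ x ∈ A', x + c ∈ B := fun x hx => hc ⟨x, hx, rfl⟩
  -- no two distinct elements of B have equal doubles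
  have htwo : ∀ x y : H, x ∈ B → y ∈ B → x + x = y + y → x = y := by
    intro x y hx hy hxy
    by_contra hne
    have hfour := fourQI B hkey x x y y hx hx hy hy hxy x
    rw [if_pos rfl, if_neg hne] at hfour
    omega
  -- core extraction : every a ∈ A has a - c ∈ B
  have hcore : ∀ a ∈ A, a - c ∈ B := by
    intro a ha
    have hgood : ∃ k, k ∈ A' ∧ k ≠ a₁ ∧ a + a₁ ≠ (k + c) + (k + c)
        ∧ a + k ≠ (a₁ + c) + (a₁ + c) := by
      by_contra hcon
      have hd : ∀ k, k ∈ A' → k ≠ a₁ →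
          a + a₁ = (k + c) + (k + c) ∨ a + k = (a₁ + c) + (a₁ + c) := by
        intro k hk hkne
        by_contra hco
        push_neg at hco
        exact hcon ⟨k, hk, hkne, hco.1, hco.2⟩
      have h₂ := hd a₂ hm2 (Ne.symm hne12)
      have h₃ := hd a₃ hm3 (Ne.symm hne13)
      have h₄ := hd a₄ hm4 (Ne.symm hne14)
      rcases h₂ with h₂ | h₂ <;> rcases h₃ with h₃ | h₃ <;> rcases h₄ with h₄ | h₄
      · exact hne23 (add_right_cancel
          (htwo (a₂ + c) (a₃ + c) (hcB _ hm2) (hcB _ hm3) (h₂.symm.trans h₃)))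
      · exact hne23 (add_right_cancel
          (htwo (a₂ + c) (a₃ + c) (hcB _ hm2) (hcB _ hm3) (h₂.symm.trans h₃)))
      · exact hne24 (add_right_cancel
          (htwo (a₂ + c) (a₄ + c) (hcB _ hm2) (hcB _ hm4) (h₂.symm.trans h₄)))
      · exact hne34 (add_left_cancel (h₃.trans h₄.symm))
      · exact hne34 (add_right_cancel
          (htwo (a₃ + c) (a₄ + c) (hcB _ hm3) (hcB _ hm4) (h₃.symm.trans h₄)))
      · exact hne24 (add_left_cancel (h₂.trans h₄.symm))
      · exact hne23 (add_left_cancel (h₂.trans h₃.symm))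
      · exact hne23 (add_left_cancel (h₂.trans h₃.symm))
    obtain ⟨k, hkA, hkne1, hgood1, hgood2⟩ := hgood
    obtain ⟨p, hp, q, hq, hpq⟩ := Set.mem_add.mp (hAA (Set.add_mem_add ha (hsub ha₁)))
    obtain ⟨r, hr, s, hs, hrs⟩ := Set.mem_add.mp (hAA (Set.add_mem_add ha (hsub hkA)))
    have hsix := sixQI B hkey p q (k + c) r s (a₁ + c) hp hq (hcB k hkA) hr hs (hcB a₁ ha₁)
      (by rw [hpq, hrs]; abel)
      (by rintro ⟨e1, e2⟩; exact hgood1 (by rw [← hpq, e1, e2]))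
      (by rintro ⟨e1, e2⟩; exact hgood2 (by rw [← hrs, e1, e2]))
    have hconc := hsix (k + c)
    rw [if_pos rfl] at hconc
    have hne1 : (k + c) ≠ (a₁ + c) := fun h => hkne1 (add_right_cancel h)
    rw [if_neg hne1] at hconc
    by_cases h1 : (k + c) = r
    · have hval : s = a - c := by
        have h2 : (k + c) + s = a + k := by rw [h1]; exact hrs
        have h3 : (k + c) + s = (k + c) + (a - c) := by rw [h2]; abel
        exact add_left_cancel h3
      exact hval ▸ hs
    · by_cases h2 : (k + c) = s
      · have hval : r = a - c := by
          have h3 : r + (k + c) = a + k := by rw [h2]; exact hrs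
          have h4 : (k + c) + r = (k + c) + (a - c) := by
            rw [add_comm (k+c) r, h3]; abel
          exact add_left_cancel h4
        exact hval ▸ hr
      · exfalso
        rw [if_neg h1, if_neg h2] at hconc
        have n1 : (0:ℤ) ≤ if (k+c) = p then 1 else 0 := ind_nonneg'
        have n2 : (0:ℤ) ≤ if (k+c) = q then 1 else 0 := ind_nonneg'
        omega
  -- now deduce c + c = 0
  have h2c : c + c = 0 := by
    have hy1 := hcore a₁ (hsub ha₁)
    have hy2 := hcore a₂ (hsub hm2)
    have hfour := fourQI B hkey (a₁ + c) (a₂ - c) (a₂ + c) (a₁ - c)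
      (hcB a₁ ha₁) hy2 (hcB a₂ hm2) hy1 (by abel) (a₁ + c)
    rw [if_pos rfl] at hfour
    have hne : (a₁ + c) ≠ (a₂ + c) := fun h => hne12 (add_right_cancel h)
    rw [if_neg hne] at hfour
    by_cases h1 : (a₁ + c) = (a₁ - c)
    · have : c = -c := by
        have := add_left_cancel (show a₁ + c = a₁ + -c by rw [h1]; abel)
        exact this
      linear_combination (norm := abel) this
    · exfalso
      rw [if_neg h1] at hfour
      have n1 : (0:ℤ) ≤ if (a₁+c) = (a₂-c) then 1 else 0 := ind_nonneg'
      omega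
  refine ⟨?_, h2c⟩
  rintro _ ⟨a, ha, rfl⟩
  show a + c ∈ B
  have : a + c = a - c := by
    have hcc : c = -c := by linear_combination (norm := abel) h2c
    rw [sub_eq_add_neg, ← hcc]
  rw [this]
  exact hcore a ha
end

section
/- Suppose (H,+,0) is an Abelian group, B ⊆ H is quasi independent, m → (6)⁴_{2^{144}}, A ⊆ H with |A| ≥ m, and A+A ⊆ B+B. Then there is a unique c ∈ H of order at most 2 such that A+c ⊆ B. -/
open Pointwise

section Helpers
variable {H : Type*} [AddCommGroup H] [DecidableEq H]

lemma count_pair_le (a b z : H) (hab : a ≠ b) : ({a, b} : Multiset H).count z ≤ 1 := by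
  simp only [Multiset.insert_eq_cons, Multiset.count_cons, Multiset.count_singleton]
  split_ifs with h1 h2
  · exact absurd (h2 ▸ h1.symm ▸ rfl) hab.symm
  all_goals omega

lemma count_quad_le (a b c d z : H) (hab : a ≠ b) (hcd : c ≠ d) :
    ({a, b, c, d} : Multiset H).count z ≤ 2 := by
  have hsplit : ({a, b, c, d} : Multiset H) = {a, b} + {c, d} := by
    rfl
  rw [hsplit, Multiset.count_add]
  exact Nat.add_le_add (count_pair_le a b z hab) (count_pair_le c d z hcd)

lemma pair_rep {p q s : H} (z : H) (h : z = p ∨ z = q) (hs : p + q = s) :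
    ({p, q} : Multiset H) = {z, s - z} := by
  rcases h with h | h
  · subst h
    have : q = s - z := by rw [← hs]; abel
    rw [← this]
  · subst h
    have : p = s - z := by rw [← hs]; abel
    rw [← this, Multiset.insert_eq_cons, Multiset.insert_eq_cons]
    exact Multiset.cons_swap _ _ _

lemma pair_cancel (u v A B C D : H)
    (h : ({u, A} : Multiset H) + {v, B} = ({u, C} : Multiset H) + {v, D}) :
    ({A, B} : Multiset H) = {C, D} := by
  have h1 : (u ::ₘ A ::ₘ v ::ₘ {B} : Multiset H) = u ::ₘ C ::ₘ v ::ₘ {D} := h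
  have h2 : (A ::ₘ v ::ₘ {B} : Multiset H) = C ::ₘ v ::ₘ {D} :=
    (Multiset.cons_inj_right u).1 h1
  rw [Multiset.cons_swap A v, Multiset.cons_swap C v] at h2
  exact (Multiset.cons_inj_right v).1 h2

omit [AddCommGroup H] [DecidableEq H] in
lemma mem_quad {a b c d z : H} (h : z ∈ ({a, b, c, d} : Multiset H)) :
    z = a ∨ z = b ∨ z = c ∨ z = d := by
  simpa using h

lemma count_quad_le' (a c z : H) (hac : a ≠ c) :
    ({a, a, c, c} : Multiset H).count z ≤ 2 := by
  have expand : ({a, a, c, c} : Multiset H).count z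
      = ((((if z = c then 1 else 0) + if z = c then 1 else 0) + if z = a then 1 else 0)
        + if z = a then 1 else 0 : ℕ) := by
    rw [show ({a, a, c, c} : Multiset H) = a ::ₘ a ::ₘ c ::ₘ {c} from rfl]
    rw [Multiset.count_cons, Multiset.count_cons, Multiset.count_cons,
      Multiset.count_singleton]
  rw [expand]
  split_ifs with h1 h2
  · exact absurd (h2.symm.trans h1) hac
  all_goals omega

lemma count_triple_le (a b c z : H) (h : ¬(a = b ∧ a = c)) :
    ({a, b, c} : Multiset H).count z ≤ 2 := by
  have expand : ({a, b, c} : Multiset H).count z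
      = (((if z = c then 1 else 0) + if z = b then 1 else 0) + if z = a then 1 else 0 : ℕ) := by
    rw [show ({a, b, c} : Multiset H) = a ::ₘ b ::ₘ {c} from rfl]
    rw [Multiset.count_cons, Multiset.count_cons, Multiset.count_singleton]
  rw [expand]
  split_ifs with h1 h2 h3
  · exact absurd ⟨h3.symm.trans h2, h3.symm.trans h1⟩ h
  all_goals omega

variable {H : Type*} [AddCommGroup H] {B : Set H}

lemma multiset_eq_of_sum_eq [DecidableEq H] (hB : QuasiIndep B) (S T : Multiset H)
    (hS : ∀ x ∈ S, x ∈ B) (hT : ∀ x ∈ T, x ∈ B) (hSc : Multiset.card S ≤ 4)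
    (hTc : Multiset.card T ≤ 4)
    (hS2 : ∀ x, S.count x ≤ 2) (hT2 : ∀ x, T.count x ≤ 2) (hsum : S.sum = T.sum) : S = T := by
  classical
  by_contra hne
  obtain ⟨x0, hx0⟩ : ∃ x, S.count x ≠ T.count x := by
    by_contra h
    push_neg at h
    exact hne (Multiset.ext.2 h)
  set D : Finset H := S.toFinset ∪ T.toFinset with hD
  have hDB : (D : Set H) ⊆ B := by
    intro z hz
    simp only [hD, Finset.coe_union, Set.mem_union, Multiset.mem_toFinset] at hz
    rcases hz with h | h
    · exact hS z (by simpa using h)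
    · exact hT z (by simpa using h)
  have hDcard : D.card ≤ 8 := by
    calc D.card ≤ S.toFinset.card + T.toFinset.card := Finset.card_union_le _ _
    _ ≤ Multiset.card S + Multiset.card T := by
        exact Nat.add_le_add (Multiset.toFinset_card_le _) (Multiset.toFinset_card_le _)
    _ ≤ 8 := by omega
  -- extend D to an 8-element subset of B
  have hencard : ((8 - D.card : ℕ) : ℕ∞) ≤ (B \ (D : Set H)).encard := by
    have h1 : (8 : ℕ∞) ≤ B.encard := hB.1
    have h2 : B.encard ≤ (B \ (D : Set H)).encard + (D : Set H).encard :=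
      (Set.encard_union_le _ _).trans_eq' (by rw [Set.diff_union_of_subset hDB]) |>.trans_eq rfl
    have h3 : ((D : Set H)).encard = (D.card : ℕ∞) := Set.encard_coe_eq_coe_finsetCard D
    have : ((8 - D.card : ℕ) : ℕ∞) + (D.card : ℕ∞) ≤ (B \ (D : Set H)).encard + (D.card : ℕ∞) := by
      calc ((8 - D.card : ℕ) : ℕ∞) + (D.card : ℕ∞) = ((8 - D.card + D.card : ℕ) : ℕ∞) := by
            norm_cast
      _ = ((8 : ℕ) : ℕ∞) := by rw [Nat.sub_add_cancel hDcard]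
      _ = (8 : ℕ∞) := by norm_cast
      _ ≤ B.encard := h1
      _ ≤ _ := h2.trans_eq (by rw [h3])
    exact (WithTop.add_le_add_iff_right (by simp : (D.card : ℕ∞) ≠ ⊤)).1 this
  obtain ⟨t, htsub, htcard⟩ := Set.exists_subset_encard_eq hencard
  have htfin : t.Finite := Set.finite_of_encard_eq_coe htcard
  set F : Finset H := htfin.toFinset with hF
  have hFcard : F.card = 8 - D.card := by
    have := htcard
    rw [htfin.encard_eq_coe_toFinset_card] at this
    exact_mod_cast this
  have hFD : Disjoint F D := by
    rw [Finset.disjoint_left]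
    intro z hz hzD
    have : z ∈ B \ (D : Set H) := htsub (by simpa [hF] using hz)
    exact this.2 (by simpa using hzD)
  set D' : Finset H := D ∪ F with hD'
  have hD'card : D'.card = 8 := by
    rw [hD', Finset.card_union_of_disjoint hFD.symm, hFcard]
    omega
  have hD'B : ∀ z ∈ D', z ∈ B := by
    intro z hz
    rcases Finset.mem_union.1 hz with h | h
    · exact hDB (by simpa using h)
    · exact (htsub (by simpa [hF] using h)).1
  set v : Fin 8 → H := fun i => ((D'.equivFinOfCardEq hD'card).symm i : H) with hv
  have hvinj : Function.Injective v := by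
    intro i j hij
    have := Subtype.coe_injective hij
    exact (D'.equivFinOfCardEq hD'card).symm.injective this
  have hvmem : ∀ i, v i ∈ D' := fun i => ((D'.equivFinOfCardEq hD'card).symm i).2
  set ι : Fin 8 → ℤ := fun i => (S.count (v i) : ℤ) - (T.count (v i) : ℤ) with hι
  have hιbd : ∀ i, |ι i| ≤ 2 := by
    intro i
    have h1 := hS2 (v i)
    have h2 := hT2 (v i)
    rw [abs_le]
    constructor <;> simp only [hι] <;> omega
  have hιne : ∃ i, ι i ≠ 0 := by
    refine ⟨D'.equivFinOfCardEq hD'card ⟨x0, ?_⟩, ?_⟩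
    · have hx0' : x0 ∈ S ∨ x0 ∈ T := by
        by_contra h
        push_neg at h
        rw [Multiset.count_eq_zero_of_notMem h.1, Multiset.count_eq_zero_of_notMem h.2] at hx0
        exact hx0 rfl
      refine Finset.mem_union.2 (Or.inl ?_)
      rcases hx0' with h | h
      · exact Finset.mem_union.2 (Or.inl (Multiset.mem_toFinset.2 h))
      · exact Finset.mem_union.2 (Or.inr (Multiset.mem_toFinset.2 h))
    · simp only [hι, hv, Equiv.symm_apply_apply]
      intro h
      apply hx0
      omega
  have hsum0 : ∑ i, ι i • v i = 0 := by
    have hre : ∑ i, ι i • v i = ∑ z ∈ D', ((S.count z : ℤ) - (T.count z : ℤ)) • z := by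
      rw [← Finset.sum_coe_sort D' (fun z => ((S.count (z : H) : ℤ) - (T.count (z : H) : ℤ)) • (z : H))]
      exact Fintype.sum_equiv (D'.equivFinOfCardEq hD'card).symm _ _ (fun i => rfl)
    have key : ∀ U : Multiset H, U.toFinset ⊆ D' → ∑ z ∈ D', (U.count z : ℤ) • z = U.sum := by
      intro U hUsub
      have h1 : ∑ z ∈ D', (U.count z : ℤ) • z = ∑ z ∈ D', U.count z • z :=
        Finset.sum_congr rfl (fun z _ => natCast_zsmul _ _)
      have h2 : ∑ z ∈ D', U.count z • z = ∑ z ∈ U.toFinset, U.count z • z := by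
        refine (Finset.sum_subset hUsub ?_).symm
        intro z _ hz
        rw [Multiset.count_eq_zero_of_notMem (fun hmem => hz (Multiset.mem_toFinset.2 hmem))]
        simp
      rw [h1, h2]
      have h3 : ∑ z ∈ U.toFinset, U.count z • z
          = Multiset.sumAddMonoidHom (∑ a ∈ U.toFinset, U.count a • ({a} : Multiset H)) := by
        rw [map_sum]
        refine Finset.sum_congr rfl (fun z _ => ?_)
        rw [AddMonoidHom.map_nsmul]
        simp [Multiset.sumAddMonoidHom]
      rw [h3, Multiset.toFinset_sum_count_nsmul_eq]
      simp [Multiset.sumAddMonoidHom]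
    have hSsum : ∑ z ∈ D', (S.count z : ℤ) • z = S.sum :=
      key S (fun z hz => Finset.mem_union.2 (Or.inl (Finset.mem_union.2 (Or.inl hz))))
    have hTsum : ∑ z ∈ D', (T.count z : ℤ) • z = T.sum :=
      key T (fun z hz => Finset.mem_union.2 (Or.inl (Finset.mem_union.2 (Or.inr hz))))
    rw [hre]
    have : ∑ z ∈ D', ((S.count z : ℤ) - (T.count z : ℤ)) • z
        = ∑ z ∈ D', ((S.count z : ℤ) • z - (T.count z : ℤ) • z) := by
      exact Finset.sum_congr rfl (fun z _ => sub_smul _ _ _)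
    rw [this, Finset.sum_sub_distrib, hSsum, hTsum, hsum, sub_self]
  exact hB.2 v ι hvinj (fun i => hD'B _ (hvmem i)) hιbd hιne hsum0

end Helpers

def pdx : Fin 6 → Fin 4 × Fin 4 := fun k =>
  match k with
  | 0 => (0, 1) | 1 => (0, 2) | 2 => (0, 3) | 3 => (1, 2) | 4 => (1, 3) | 5 => (2, 3)

def slv {H : Type*} {δ : Type*} (x y : δ → δ → H) (g : Fin 4 → δ) (s : Fin 6 × Bool) : H :=
  match s.2 with
  | true => x (g (pdx s.1).1) (g (pdx s.1).2)
  | false => y (g (pdx s.1).1) (g (pdx s.1).2)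

def g0123 : Fin 4 → Fin 6 := fun i => match i with | 0 => 0 | 1 => 1 | 2 => 2 | 3 => 3
def g0124 : Fin 4 → Fin 6 := fun i => match i with | 0 => 0 | 1 => 1 | 2 => 2 | 3 => 4
def g0125 : Fin 4 → Fin 6 := fun i => match i with | 0 => 0 | 1 => 1 | 2 => 2 | 3 => 5
def g0134 : Fin 4 → Fin 6 := fun i => match i with | 0 => 0 | 1 => 1 | 2 => 3 | 3 => 4
def g0145 : Fin 4 → Fin 6 := fun i => match i with | 0 => 0 | 1 => 1 | 2 => 4 | 3 => 5
def g0234 : Fin 4 → Fin 6 := fun i => match i with | 0 => 0 | 1 => 2 | 2 => 3 | 3 => 4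
def g0345 : Fin 4 → Fin 6 := fun i => match i with | 0 => 0 | 1 => 3 | 2 => 4 | 3 => 5
def g1234 : Fin 4 → Fin 6 := fun i => match i with | 0 => 1 | 1 => 2 | 2 => 3 | 3 => 4
def g1345 : Fin 4 → Fin 6 := fun i => match i with | 0 => 1 | 1 => 3 | 2 => 4 | 3 => 5
def g2345 : Fin 4 → Fin 6 := fun i => match i with | 0 => 2 | 1 => 3 | 2 => 4 | 3 => 5

lemma core {H : Type*} [AddCommGroup H] [DecidableEq H] {B : Set H} (hB : QuasiIndep B)
    (α : Fin 6 → H) (hα : Function.Injective α)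
    (x y : Fin 6 → Fin 6 → H)
    (hx : ∀ i j : Fin 6, x i j ∈ B) (hy : ∀ i j : Fin 6, y i j ∈ B)
    (hxy : ∀ i j : Fin 6, x i j + y i j = α i + α j)
    (homog : ∀ g g' : Fin 4 → Fin 6, StrictMono g → StrictMono g' →
      ∀ u v : Fin 6 × Bool, (slv x y g u = slv x y g v ↔ slv x y g' u = slv x y g' v)) :
    ∃ c : H, c + c = 0 ∧ ∀ j, α j + c ∈ B := by
  have m0123 : StrictMono g0123 := by decide
  have m0124 : StrictMono g0124 := by decide
  have m0125 : StrictMono g0125 := by decide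
  have m0134 : StrictMono g0134 := by decide
  have m0145 : StrictMono g0145 := by decide
  have m0234 : StrictMono g0234 := by decide
  have m0345 : StrictMono g0345 := by decide
  have m1234 : StrictMono g1234 := by decide
  have m1345 : StrictMono g1345 := by decide
  have m2345 : StrictMono g2345 := by decide
  have TR : ∀ (g g' : Fin 4 → Fin 6), StrictMono g → StrictMono g' →
      ∀ (k k' : Fin 6) (ε ε' : Bool),
      slv x y g (k, ε) = slv x y g (k', ε') → slv x y g' (k, ε) = slv x y g' (k', ε') :=
    fun g g' hg hg' k k' ε ε' h => (homog g g' hg hg' (k, ε) (k', ε')).mp h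
  have memq : ∀ S T : Multiset H, S = T → ∀ z : H, z ∈ S → z ∈ T := fun S T h z hz => h ▸ hz
  by_cases hQ : x 0 1 = y 0 1
  · -- Case I : all slots of an edge coincide; refute.
    exfalso
    have hQ23 : x 2 3 = y 2 3 := TR g0123 g2345 m0123 m2345 0 0 true false hQ
    have hQ02 : x 0 2 = y 0 2 := TR g0123 g0234 m0123 m0234 0 0 true false hQ
    have hQ24 : x 2 4 = y 2 4 := TR g0123 g2345 m0123 m2345 1 1 true false hQ02
    have hQ13 : x 1 3 = y 1 3 := TR g0123 g1345 m0123 m1345 0 0 true false hQ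
    have hQ14 : x 1 4 = y 1 4 := TR g0123 g1345 m0123 m1345 1 1 true false hQ02
    have l01 : x 0 1 + x 0 1 = α 0 + α 1 := by rw [← hxy 0 1, hQ]
    have l23 : x 2 3 + x 2 3 = α 2 + α 3 := by rw [← hxy 2 3, hQ23]
    have l02 : x 0 2 + x 0 2 = α 0 + α 2 := by rw [← hxy 0 2, hQ02]
    have l13 : x 1 3 + x 1 3 = α 1 + α 3 := by rw [← hxy 1 3, hQ13]
    have l24 : x 2 4 + x 2 4 = α 2 + α 4 := by rw [← hxy 2 4, hQ24]
    have l14 : x 1 4 + x 1 4 = α 1 + α 4 := by rw [← hxy 1 4, hQ14]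
    by_cases h23 : x 0 1 = x 2 3
    · have h24 : x 0 1 = x 2 4 := TR g0123 g0124 m0123 m0124 0 5 true true h23
      have e1 : α 0 + α 1 = α 2 + α 3 := by rw [← l01, ← l23, h23]
      have e2 : α 0 + α 1 = α 2 + α 4 := by rw [← l01, ← l24, h24]
      have : α 3 = α 4 := add_left_cancel (e1.symm.trans e2)
      exact absurd (hα this) (by decide)
    · by_cases h13 : x 0 2 = x 1 3
      · have h14 : x 0 2 = x 1 4 := TR g0123 g0124 m0123 m0124 1 4 true true h13
        have e1 : α 0 + α 2 = α 1 + α 3 := by rw [← l02, ← l13, h13]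
        have e2 : α 0 + α 2 = α 1 + α 4 := by rw [← l02, ← l14, h14]
        have : α 3 = α 4 := add_left_cancel (e1.symm.trans e2)
        exact absurd (hα this) (by decide)
      · have heq : ({x 0 1, x 0 1, x 2 3, x 2 3} : Multiset H)
            = {x 0 2, x 0 2, x 1 3, x 1 3} := by
          apply multiset_eq_of_sum_eq hB
          · intro z hz
            rcases mem_quad hz with h|h|h|h <;> subst h <;> exact hx _ _
          · intro z hz
            rcases mem_quad hz with h|h|h|h <;> subst h <;> exact hx _ _
          · simp
          · simp
          · intro z; exact count_quad_le' _ _ z h23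
          · intro z; exact count_quad_le' _ _ z h13
          · simp only [Multiset.insert_eq_cons, Multiset.sum_cons, Multiset.sum_singleton]
            calc x 0 1 + (x 0 1 + (x 2 3 + x 2 3))
                = (x 0 1 + x 0 1) + (x 2 3 + x 2 3) := by abel
              _ = (α 0 + α 1) + (α 2 + α 3) := by rw [l01, l23]
              _ = (α 0 + α 2) + (α 1 + α 3) := by abel
              _ = (x 0 2 + x 0 2) + (x 1 3 + x 1 3) := by rw [l02, l13]
              _ = x 0 2 + (x 0 2 + (x 1 3 + x 1 3)) := by abel
        have hmem : x 0 1 ∈ ({x 0 2, x 0 2, x 1 3, x 1 3} : Multiset H) :=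
          memq _ _ heq _ (by simp)
        rcases mem_quad hmem with h|h|h|h
        · have e : α 0 + α 1 = α 0 + α 2 := by rw [← l01, ← l02, h]
          exact absurd (hα (add_left_cancel e)) (by decide)
        · have e : α 0 + α 1 = α 0 + α 2 := by rw [← l01, ← l02, h]
          exact absurd (hα (add_left_cancel e)) (by decide)
        · have e : α 0 + α 1 = α 1 + α 3 := by rw [← l01, ← l13, h]
          rw [add_comm (α 1) (α 3)] at e
          exact absurd (hα (add_right_cancel e)) (by decide)
        · have e : α 0 + α 1 = α 1 + α 3 := by rw [← l01, ← l13, h]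
          rw [add_comm (α 1) (α 3)] at e
          exact absurd (hα (add_right_cancel e)) (by decide)
  · -- Case II
    have ne01 : x 0 1 ≠ y 0 1 := hQ
    have ne02 : x 0 2 ≠ y 0 2 := fun h => hQ (TR g0234 g0123 m0234 m0123 0 0 true false h)
    have ne03 : x 0 3 ≠ y 0 3 := fun h => hQ (TR g0345 g0123 m0345 m0123 0 0 true false h)
    have ne12 : x 1 2 ≠ y 1 2 := fun h => hQ (TR g1234 g0123 m1234 m0123 0 0 true false h)
    have ne13 : x 1 3 ≠ y 1 3 := fun h => hQ (TR g1345 g0123 m1345 m0123 0 0 true false h)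
    have ne23 : x 2 3 ≠ y 2 3 := fun h => hQ (TR g2345 g0123 m2345 m0123 0 0 true false h)
    have ne04 : x 0 4 ≠ y 0 4 := fun h => ne02 (TR g0145 g0123 m0145 m0123 1 1 true false h)
    have ne14 : x 1 4 ≠ y 1 4 := fun h => ne02 (TR g1345 g0123 m1345 m0123 1 1 true false h)
    have ne34 : x 3 4 ≠ y 3 4 := fun h => ne23 (TR g0134 g0123 m0134 m0123 5 5 true false h)
    -- matching identities
    have MI : ∀ i j k l : Fin 6, x i j ≠ y i j → x k l ≠ y k l → x i k ≠ y i k →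
        x j l ≠ y j l →
        ({x i j, y i j, x k l, y k l} : Multiset H) = {x i k, y i k, x j l, y j l} := by
      intro i j k l n1 n2 n3 n4
      apply multiset_eq_of_sum_eq hB
      · intro z hz
        rcases mem_quad hz with h|h|h|h <;> subst h
        · exact hx _ _
        · exact hy _ _
        · exact hx _ _
        · exact hy _ _
      · intro z hz
        rcases mem_quad hz with h|h|h|h <;> subst h
        · exact hx _ _
        · exact hy _ _
        · exact hx _ _
        · exact hy _ _
      · simp
      · simp
      · intro z; exact count_quad_le _ _ _ _ z n1 n2
      · intro z; exact count_quad_le _ _ _ _ z n3 n4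
      · simp only [Multiset.insert_eq_cons, Multiset.sum_cons, Multiset.sum_singleton]
        calc x i j + (y i j + (x k l + y k l))
            = (x i j + y i j) + (x k l + y k l) := by abel
          _ = (α i + α j) + (α k + α l) := by rw [hxy, hxy]
          _ = (α i + α k) + (α j + α l) := by abel
          _ = (x i k + y i k) + (x j l + y j l) := by rw [hxy, hxy]
          _ = x i k + (y i k + (x j l + y j l)) := by abel
    have MI2 : ∀ i j k l : Fin 6, x i j ≠ y i j → x k l ≠ y k l → x i l ≠ y i l →
        x j k ≠ y j k →
        ({x i j, y i j, x k l, y k l} : Multiset H) = {x i l, y i l, x j k, y j k} := by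
      intro i j k l n1 n2 n3 n4
      apply multiset_eq_of_sum_eq hB
      · intro z hz
        rcases mem_quad hz with h|h|h|h <;> subst h
        · exact hx _ _
        · exact hy _ _
        · exact hx _ _
        · exact hy _ _
      · intro z hz
        rcases mem_quad hz with h|h|h|h <;> subst h
        · exact hx _ _
        · exact hy _ _
        · exact hx _ _
        · exact hy _ _
      · simp
      · simp
      · intro z; exact count_quad_le _ _ _ _ z n1 n2
      · intro z; exact count_quad_le _ _ _ _ z n3 n4
      · simp only [Multiset.insert_eq_cons, Multiset.sum_cons, Multiset.sum_singleton]
        calc x i j + (y i j + (x k l + y k l))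
            = (x i j + y i j) + (x k l + y k l) := by abel
          _ = (α i + α j) + (α k + α l) := by rw [hxy, hxy]
          _ = (α i + α l) + (α j + α k) := by abel
          _ = (x i l + y i l) + (x j k + y j k) := by rw [hxy, hxy]
          _ = x i l + (y i l + (x j k + y j k)) := by abel
    have hM1 : ({x 0 1, y 0 1, x 2 3, y 2 3} : Multiset H) = {x 0 2, y 0 2, x 1 3, y 1 3} :=
      MI 0 1 2 3 ne01 ne23 ne02 ne13
    have hM2 : ({x 0 1, y 0 1, x 2 3, y 2 3} : Multiset H) = {x 0 3, y 0 3, x 1 2, y 1 2} :=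
      MI2 0 1 2 3 ne01 ne23 ne03 ne12
    have hM3 : ({x 0 2, y 0 2, x 1 3, y 1 3} : Multiset H) = {x 0 3, y 0 3, x 1 2, y 1 2} :=
      hM1.symm.trans hM2
    have hM3' : ({x 0 3, y 0 3, x 1 4, y 1 4} : Multiset H) = {x 0 4, y 0 4, x 1 3, y 1 3} :=
      (MI 0 1 3 4 ne01 ne34 ne03 ne14).symm.trans (MI2 0 1 3 4 ne01 ne34 ne04 ne13)
    -- star subproof
    have star : ∀ u v : H, u + v = α 0 + α 1 → (u = x 0 1 ∨ u = y 0 1) →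
        (v = x 0 1 ∨ v = y 0 1) →
        (u = x 0 2 ∨ u = y 0 2) → (u = x 0 3 ∨ u = y 0 3) →
        (v = x 1 2 ∨ v = y 1 2) → (v = x 1 3 ∨ v = y 1 3) →
        ∃ c : H, c + c = 0 ∧ ∀ j, α j + c ∈ B := by
      intro u v huv hu01 hv01 hu02 hu03 hv12 hv13
      have hv : v = α 0 + α 1 - u := by rw [← huv]; abel
      -- transfers : u ∈ m04 and m05
      have hu04 : u = x 0 4 ∨ u = y 0 4 := by
        rcases hu01 with h0 | h0 <;> rcases hu03 with h3 | h3
        · exact Or.inl (h0.trans (TR g0123 g0124 m0123 m0124 0 2 true true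
            (h0.symm.trans h3)))
        · exact Or.inr (h0.trans (TR g0123 g0124 m0123 m0124 0 2 true false
            (h0.symm.trans h3)))
        · exact Or.inl (h0.trans (TR g0123 g0124 m0123 m0124 0 2 false true
            (h0.symm.trans h3)))
        · exact Or.inr (h0.trans (TR g0123 g0124 m0123 m0124 0 2 false false
            (h0.symm.trans h3)))
      have hu05 : u = x 0 5 ∨ u = y 0 5 := by
        rcases hu01 with h0 | h0 <;> rcases hu03 with h3 | h3
        · exact Or.inl (h0.trans (TR g0123 g0125 m0123 m0125 0 2 true true
            (h0.symm.trans h3)))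
        · exact Or.inr (h0.trans (TR g0123 g0125 m0123 m0125 0 2 true false
            (h0.symm.trans h3)))
        · exact Or.inl (h0.trans (TR g0123 g0125 m0123 m0125 0 2 false true
            (h0.symm.trans h3)))
        · exact Or.inr (h0.trans (TR g0123 g0125 m0123 m0125 0 2 false false
            (h0.symm.trans h3)))
      -- pair representations
      have p02 : ({x 0 2, y 0 2} : Multiset H) = {u, α 0 + α 2 - u} :=
        pair_rep u hu02 (hxy 0 2)
      have p03 : ({x 0 3, y 0 3} : Multiset H) = {u, α 0 + α 3 - u} :=
        pair_rep u hu03 (hxy 0 3)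
      have p12 : ({x 1 2, y 1 2} : Multiset H) = {v, α 1 + α 2 - v} :=
        pair_rep v hv12 (hxy 1 2)
      have p13 : ({x 1 3, y 1 3} : Multiset H) = {v, α 1 + α 3 - v} :=
        pair_rep v hv13 (hxy 1 3)
      have hM3s : ({x 0 2, y 0 2} : Multiset H) + {x 1 3, y 1 3}
          = ({x 0 3, y 0 3} : Multiset H) + {x 1 2, y 1 2} := hM3
      rw [p02, p13, p03, p12] at hM3s
      have hpc := pair_cancel u v _ _ _ _ hM3s
      have hmemA : α 0 + α 2 - u ∈ ({α 0 + α 3 - u, α 1 + α 2 - v} : Multiset H) :=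
        memq _ _ hpc _ (by simp)
      have hAD : α 0 + α 2 - u = α 1 + α 2 - v := by
        rcases (by simpa using hmemA : α 0 + α 2 - u = α 0 + α 3 - u
            ∨ α 0 + α 2 - u = α 1 + α 2 - v) with h | h
        · exfalso
          have : α 0 + α 2 = α 0 + α 3 := by
            have := sub_left_inj.mp h
            exact this
          exact absurd (hα (add_left_cancel this)) (by decide)
        · exact h
      set c : H := u - α 0 with hcdef
      have hc : c + c = 0 := by
        rw [hv] at hAD
        have h2 : α 0 + α 2 - u - (α 1 + α 2 - (α 0 + α 1 - u)) = 0 :=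
          sub_eq_zero.mpr hAD
        have h3 : c + c = -(α 0 + α 2 - u - (α 1 + α 2 - (α 0 + α 1 - u))) := by
          rw [hcdef]; abel
        rw [h3, h2, neg_zero]
      refine ⟨c, hc, ?_⟩
      have final : ∀ j : Fin 6, (u = x 0 j ∨ u = y 0 j) → α j + c ∈ B := by
        intro j hj
        have pj := pair_rep u hj (hxy 0 j)
        have hval : α j + c = α 0 + α j - u := by
          have h4 : α j + c - (α 0 + α j - u) = c + c := by rw [hcdef]; abel
          have h5 : α j + c - (α 0 + α j - u) = 0 := by rw [h4, hc]
          exact sub_eq_zero.mp h5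
        have hmem : α 0 + α j - u ∈ ({x 0 j, y 0 j} : Multiset H) :=
          memq _ _ pj.symm _ (by simp)
        rw [hval]
        rcases (by simpa using hmem : α 0 + α j - u = x 0 j ∨ α 0 + α j - u = y 0 j)
            with h | h
        · rw [h]; exact hx 0 j
        · rw [h]; exact hy 0 j
      have hj0 : α 0 + c ∈ B := by
        have h0 : α 0 + c = u := by rw [hcdef]; abel
        rw [h0]
        rcases hu01 with h | h
        · rw [h]; exact hx 0 1
        · rw [h]; exact hy 0 1
      have hj1 : α 1 + c ∈ B := by
        have h1 : α 1 + c = v := by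
          have h4 : α 1 + c - v = c + c := by rw [hcdef, hv]; abel
          have h5 : α 1 + c - v = 0 := by rw [h4, hc]
          exact sub_eq_zero.mp h5
        rw [h1]
        rcases hv01 with h | h
        · rw [h]; exact hx 0 1
        · rw [h]; exact hy 0 1
      intro j
      fin_cases j
      · exact hj0
      · exact hj1
      · exact final 2 hu02
      · exact final 3 hu03
      · exact final 4 hu04
      · exact final 5 hu05
    -- dichotomy
    have hx01mem : x 0 1 = x 0 2 ∨ x 0 1 = y 0 2 ∨ x 0 1 = x 1 3 ∨ x 0 1 = y 1 3 :=
      mem_quad (memq _ _ hM1 _ (by simp))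
    have hy01mem : y 0 1 = x 0 2 ∨ y 0 1 = y 0 2 ∨ y 0 1 = x 1 3 ∨ y 0 1 = y 1 3 :=
      mem_quad (memq _ _ hM1 _ (by simp))
    have hx01mem2 : x 0 1 = x 0 3 ∨ x 0 1 = y 0 3 ∨ x 0 1 = x 1 2 ∨ x 0 1 = y 1 2 :=
      mem_quad (memq _ _ hM2 _ (by simp))
    have hy01mem2 : y 0 1 = x 0 3 ∨ y 0 1 = y 0 3 ∨ y 0 1 = x 1 2 ∨ y 0 1 = y 1 2 :=
      mem_quad (memq _ _ hM2 _ (by simp))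
    have excl : ∀ i j k l : Fin 6, x i j ≠ y i j →
        (x i j = x k l ∨ x i j = y k l) → (y i j = x k l ∨ y i j = y k l) →
        α i + α j = α k + α l := by
      intro i j k l hne h1 h2
      rcases h1 with h1 | h1 <;> rcases h2 with h2 | h2
      · exact absurd (h1.trans h2.symm) hne
      · rw [← hxy i j, ← hxy k l, h1, h2]
      · rw [← hxy i j, ← hxy k l, h1, h2, add_comm (y k l) (x k l)]
      · exact absurd (h1.trans h2.symm) hne
    have d1 : ((x 0 1 = x 0 2 ∨ x 0 1 = y 0 2) ∧ (y 0 1 = x 1 3 ∨ y 0 1 = y 1 3))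
        ∨ ((x 0 1 = x 1 3 ∨ x 0 1 = y 1 3) ∧ (y 0 1 = x 0 2 ∨ y 0 1 = y 0 2)) := by
      have hx' : (x 0 1 = x 0 2 ∨ x 0 1 = y 0 2) ∨ (x 0 1 = x 1 3 ∨ x 0 1 = y 1 3) := by
        rcases hx01mem with h|h|h|h
        exacts [Or.inl (Or.inl h), Or.inl (Or.inr h), Or.inr (Or.inl h), Or.inr (Or.inr h)]
      have hy' : (y 0 1 = x 0 2 ∨ y 0 1 = y 0 2) ∨ (y 0 1 = x 1 3 ∨ y 0 1 = y 1 3) := by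
        rcases hy01mem with h|h|h|h
        exacts [Or.inl (Or.inl h), Or.inl (Or.inr h), Or.inr (Or.inl h), Or.inr (Or.inr h)]
      rcases hx' with hA | hA <;> rcases hy' with hB | hB
      · exfalso
        have e := excl 0 1 0 2 ne01 hA hB
        exact absurd (hα (add_left_cancel e)) (by decide)
      · exact Or.inl ⟨hA, hB⟩
      · exact Or.inr ⟨hA, hB⟩
      · exfalso
        have e := excl 0 1 1 3 ne01 hA hB
        rw [add_comm (α 1) (α 3)] at e
        exact absurd (hα (add_right_cancel e)) (by decide)
    have d2 : ((x 0 1 = x 0 3 ∨ x 0 1 = y 0 3) ∧ (y 0 1 = x 1 2 ∨ y 0 1 = y 1 2))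
        ∨ ((x 0 1 = x 1 2 ∨ x 0 1 = y 1 2) ∧ (y 0 1 = x 0 3 ∨ y 0 1 = y 0 3)) := by
      have hx' : (x 0 1 = x 0 3 ∨ x 0 1 = y 0 3) ∨ (x 0 1 = x 1 2 ∨ x 0 1 = y 1 2) := by
        rcases hx01mem2 with h|h|h|h
        exacts [Or.inl (Or.inl h), Or.inl (Or.inr h), Or.inr (Or.inl h), Or.inr (Or.inr h)]
      have hy' : (y 0 1 = x 0 3 ∨ y 0 1 = y 0 3) ∨ (y 0 1 = x 1 2 ∨ y 0 1 = y 1 2) := by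
        rcases hy01mem2 with h|h|h|h
        exacts [Or.inl (Or.inl h), Or.inl (Or.inr h), Or.inr (Or.inl h), Or.inr (Or.inr h)]
      rcases hx' with hA | hA <;> rcases hy' with hB | hB
      · exfalso
        have e := excl 0 1 0 3 ne01 hA hB
        exact absurd (hα (add_left_cancel e)) (by decide)
      · exact Or.inl ⟨hA, hB⟩
      · exact Or.inr ⟨hA, hB⟩
      · exfalso
        have e := excl 0 1 1 2 ne01 hA hB
        rw [add_comm (α 1) (α 2)] at e
        exact absurd (hα (add_right_cancel e)) (by decide)
    rcases d1 with ⟨hA1, hB1⟩ | ⟨hA1, hB1⟩ <;> rcases d2 with ⟨hA2, hB2⟩ | ⟨hA2, hB2⟩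
    · -- star with u = x 0 1
      exact star (x 0 1) (y 0 1) (hxy 0 1) (Or.inl rfl) (Or.inr rfl) hA1 hA2 hB2 hB1
    · -- triangle B : u = x 0 1 ∈ m02 ∩ m12
      exfalso
      -- transfers to get u ∈ m03, m13 via g0134
      have hu03 : x 0 1 = x 0 3 ∨ x 0 1 = y 0 3 := by
        rcases hA1 with h | h
        · exact Or.inl (TR g0123 g0134 m0123 m0134 0 1 true true h)
        · exact Or.inr (TR g0123 g0134 m0123 m0134 0 1 true false h)
      have hu13 : x 0 1 = x 1 3 ∨ x 0 1 = y 1 3 := by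
        rcases hA2 with h | h
        · exact Or.inl (TR g0123 g0134 m0123 m0134 0 3 true true h)
        · exact Or.inr (TR g0123 g0134 m0123 m0134 0 3 true false h)
      have p02 := pair_rep (x 0 1) hA1 (hxy 0 2)
      have p13 := pair_rep (x 0 1) hu13 (hxy 1 3)
      have p03 := pair_rep (x 0 1) hu03 (hxy 0 3)
      have p12 := pair_rep (x 0 1) hA2 (hxy 1 2)
      have hM3s : ({x 0 2, y 0 2} : Multiset H) + {x 1 3, y 1 3}
          = ({x 0 3, y 0 3} : Multiset H) + {x 1 2, y 1 2} := hM3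
      rw [p02, p13, p03, p12] at hM3s
      have hpc := pair_cancel _ _ _ _ _ _ hM3s
      have hmemA : α 0 + α 2 - x 0 1 ∈
          ({α 0 + α 3 - x 0 1, α 1 + α 2 - x 0 1} : Multiset H) :=
        memq _ _ hpc _ (by simp)
      rcases (by simpa using hmemA : α 0 + α 2 - x 0 1 = α 0 + α 3 - x 0 1
          ∨ α 0 + α 2 - x 0 1 = α 1 + α 2 - x 0 1) with h | h
      · have e : α 0 + α 2 = α 0 + α 3 := sub_left_inj.mp h
        exact absurd (hα (add_left_cancel e)) (by decide)
      · have e : α 0 + α 2 = α 1 + α 2 := sub_left_inj.mp h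
        exact absurd (hα (add_right_cancel e)) (by decide)
    · -- triangle C : u = x 0 1 ∈ m13 ∩ m03
      exfalso
      have hu04 : x 0 1 = x 0 4 ∨ x 0 1 = y 0 4 := by
        rcases hA2 with h | h
        · exact Or.inl (TR g0123 g0124 m0123 m0124 0 2 true true h)
        · exact Or.inr (TR g0123 g0124 m0123 m0124 0 2 true false h)
      have hu14 : x 0 1 = x 1 4 ∨ x 0 1 = y 1 4 := by
        rcases hA1 with h | h
        · exact Or.inl (TR g0123 g0124 m0123 m0124 0 4 true true h)
        · exact Or.inr (TR g0123 g0124 m0123 m0124 0 4 true false h)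
      have p03 := pair_rep (x 0 1) hA2 (hxy 0 3)
      have p14 := pair_rep (x 0 1) hu14 (hxy 1 4)
      have p04 := pair_rep (x 0 1) hu04 (hxy 0 4)
      have p13 := pair_rep (x 0 1) hA1 (hxy 1 3)
      have hM3s : ({x 0 3, y 0 3} : Multiset H) + {x 1 4, y 1 4}
          = ({x 0 4, y 0 4} : Multiset H) + {x 1 3, y 1 3} := hM3'
      rw [p03, p14, p04, p13] at hM3s
      have hpc := pair_cancel _ _ _ _ _ _ hM3s
      have hmemA : α 0 + α 3 - x 0 1 ∈
          ({α 0 + α 4 - x 0 1, α 1 + α 3 - x 0 1} : Multiset H) :=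
        memq _ _ hpc _ (by simp)
      rcases (by simpa using hmemA : α 0 + α 3 - x 0 1 = α 0 + α 4 - x 0 1
          ∨ α 0 + α 3 - x 0 1 = α 1 + α 3 - x 0 1) with h | h
      · have e : α 0 + α 3 = α 0 + α 4 := sub_left_inj.mp h
        exact absurd (hα (add_left_cancel e)) (by decide)
      · have e : α 0 + α 3 = α 1 + α 3 := sub_left_inj.mp h
        exact absurd (hα (add_right_cancel e)) (by decide)
    · -- star with u = y 0 1
      exact star (y 0 1) (x 0 1) (by rw [add_comm]; exact hxy 0 1) (Or.inr rfl)
        (Or.inl rfl) hB1 hB2 hA2 hA1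

theorem gettransl_sum {H : Type*} [AddCommGroup H] (B : Set H) (hB : QuasiIndep B)
    (m : ℕ) (harrow : ErdosRado m 6 4 (2 ^ 144))
    (A : Set H) (hA : (m : ℕ∞) ≤ A.encard) (hsum : A + A ⊆ B + B) :
    ∃! c : H, c + c = 0 ∧ (· + c) '' A ⊆ B := by
  classical
  -- an injective enumeration of m elements of A
  obtain ⟨Asub, hsubA, hAcard⟩ := Set.exists_subset_encard_eq hA
  have hfinA : Asub.Finite := Set.finite_of_encard_eq_coe hAcard
  have hAscard : hfinA.toFinset.card = m := by
    have h := hAcard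
    rw [hfinA.encard_eq_coe_toFinset_card] at h
    exact_mod_cast h
  set a : Fin m → H := fun i => ((hfinA.toFinset.equivFinOfCardEq hAscard).symm i : H)
    with hadef
  have hainj : Function.Injective a := fun i j h =>
    (hfinA.toFinset.equivFinOfCardEq hAscard).symm.injective (Subtype.coe_injective h)
  have haA : ∀ i, a i ∈ A := by
    intro i
    apply hsubA
    have h2 := ((hfinA.toFinset.equivFinOfCardEq hAscard).symm i).2
    rw [Set.Finite.mem_toFinset] at h2
    exact h2
  -- choice of representations of pairwise sums
  have hrep : ∀ p q : Fin m, ∃ uv : H × H, uv.1 ∈ B ∧ uv.2 ∈ B ∧ a p + a q = uv.1 + uv.2 := by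
    intro p q
    have hmem : a p + a q ∈ B + B := hsum (Set.add_mem_add (haA p) (haA q))
    rw [Set.mem_add] at hmem
    obtain ⟨u, hu, v, hv, huv⟩ := hmem
    exact ⟨(u, v), hu, hv, huv.symm⟩
  choose R hR1 hR2 hR3 using hrep
  set X : Fin m → Fin m → H := fun p q => (R p q).1 with hXdef
  set Y : Fin m → Fin m → H := fun p q => (R p q).2 with hYdef
  -- the coloring
  have hcard144 : Fintype.card (((Fin 6 × Bool) × (Fin 6 × Bool)) → Bool) = 2 ^ 144 := by
    rw [Fintype.card_fun]
    simp
  set enc : (((Fin 6 × Bool) × (Fin 6 × Bool)) → Bool) ≃ Fin (2 ^ 144) :=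
    Fintype.equivFinOfCardEq hcard144 with hencdef
  set pat : (Fin 4 → Fin m) → (((Fin 6 × Bool) × (Fin 6 × Bool)) → Bool) :=
    fun g p => decide (slv X Y g p.1 = slv X Y g p.2) with hpatdef
  set f : Finset (Fin m) → Fin (2 ^ 144) := fun t =>
    if h : t.card = 4 then enc (pat (t.orderEmbOfFin h)) else enc (fun _ => false) with hfdef
  obtain ⟨s, hscard, hhom⟩ := harrow f
  set φ : Fin 6 → Fin m := fun i => s.orderEmbOfFin hscard i with hφdef
  have hφmono : StrictMono φ := (s.orderEmbOfFin hscard).strictMono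
  have hφmem : ∀ i, φ i ∈ s := fun i => Finset.orderEmbOfFin_mem s hscard i
  have colg : ∀ g : Fin 4 → Fin 6, StrictMono g →
      f (Finset.image (fun i => φ (g i)) Finset.univ) = enc (pat (fun i => φ (g i))) := by
    intro g hg
    have hmono : StrictMono (fun i => φ (g i)) := hφmono.comp hg
    have hcard4 : (Finset.image (fun i => φ (g i)) Finset.univ).card = 4 := by
      rw [Finset.card_image_of_injective _ hmono.injective, Finset.card_univ,
        Fintype.card_fin]
    have hstep : f (Finset.image (fun i => φ (g i)) Finset.univ)
        = enc (pat ⇑((Finset.image (fun i => φ (g i)) Finset.univ).orderEmbOfFin hcard4)) := by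
      simp only [hfdef]
      rw [dif_pos hcard4]
    have hueq : (fun i => φ (g i))
        = ⇑((Finset.image (fun i => φ (g i)) Finset.univ).orderEmbOfFin hcard4) :=
      Finset.orderEmbOfFin_unique hcard4
        (fun i => Finset.mem_image_of_mem _ (Finset.mem_univ i)) hmono
    rw [hstep, ← hueq]
  have homog : ∀ g g' : Fin 4 → Fin 6, StrictMono g → StrictMono g' →
      ∀ u v : Fin 6 × Bool,
      (slv (fun i j => X (φ i) (φ j)) (fun i j => Y (φ i) (φ j)) g u
        = slv (fun i j => X (φ i) (φ j)) (fun i j => Y (φ i) (φ j)) g v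
      ↔ slv (fun i j => X (φ i) (φ j)) (fun i j => Y (φ i) (φ j)) g' u
        = slv (fun i j => X (φ i) (φ j)) (fun i j => Y (φ i) (φ j)) g' v) := by
    intro g g' hg hg' u v
    have hsub1 : Finset.image (fun i => φ (g i)) Finset.univ ⊆ s := by
      intro z hz
      rw [Finset.mem_image] at hz
      obtain ⟨i, _, rfl⟩ := hz
      exact hφmem _
    have hsub2 : Finset.image (fun i => φ (g' i)) Finset.univ ⊆ s := by
      intro z hz
      rw [Finset.mem_image] at hz
      obtain ⟨i, _, rfl⟩ := hz
      exact hφmem _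
    have hmono1 : StrictMono (fun i => φ (g i)) := hφmono.comp hg
    have hmono2 : StrictMono (fun i => φ (g' i)) := hφmono.comp hg'
    have hcard1 : (Finset.image (fun i => φ (g i)) Finset.univ).card = 4 := by
      rw [Finset.card_image_of_injective _ hmono1.injective, Finset.card_univ,
        Fintype.card_fin]
    have hcard2 : (Finset.image (fun i => φ (g' i)) Finset.univ).card = 4 := by
      rw [Finset.card_image_of_injective _ hmono2.injective, Finset.card_univ,
        Fintype.card_fin]
    have heqf := hhom _ _ hsub1 hsub2 hcard1 hcard2
    rw [colg g hg, colg g' hg'] at heqf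
    have hpat : pat (fun i => φ (g i)) = pat (fun i => φ (g' i)) := enc.injective heqf
    have hdec := congrFun hpat (u, v)
    exact decide_eq_decide.mp hdec
  obtain ⟨c, hc, hcB⟩ := core hB (fun i => a (φ i)) (hainj.comp hφmono.injective)
    (fun i j => X (φ i) (φ j)) (fun i j => Y (φ i) (φ j))
    (fun i j => hR1 _ _) (fun i j => hR2 _ _)
    (fun i j => (hR3 _ _).symm) homog
  set α : Fin 6 → H := fun i => a (φ i) with hαdef
  have hαinj : Function.Injective α := hainj.comp hφmono.injective
  have hαA : ∀ i, α i ∈ A := fun i => haA _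
  set w : Fin 6 → H := fun j => α j + c with hwdef
  have hwB : ∀ j, w j ∈ B := hcB
  have hwinj : Function.Injective w := by
    intro i j h
    have h' : α i + c = α j + c := h
    exact hαinj (add_right_cancel h')
  have hnegc : -c = c := by
    rw [neg_eq_iff_add_eq_zero]
    exact hc
  -- extension to all of A
  have main : ∀ z ∈ A, z + c ∈ B := by
    intro z hz
    have hrepz : ∀ j : Fin 6, ∃ uv : H × H, uv.1 ∈ B ∧ uv.2 ∈ B ∧ z + α j = uv.1 + uv.2 := by
      intro j
      have hmem : z + α j ∈ B + B := hsum (Set.add_mem_add hz (hαA j))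
      rw [Set.mem_add] at hmem
      obtain ⟨u, hu, v, hv, huv⟩ := hmem
      exact ⟨(u, v), hu, hv, huv.symm⟩
    choose P hP1 hP2 hP3 using hrepz
    set p : Fin 6 → H := fun j => (P j).1 with hpdef
    set q : Fin 6 → H := fun j => (P j).2 with hqdef
    have hP1' : ∀ j, p j ∈ B := hP1
    have hP2' : ∀ j, q j ∈ B := hP2
    have hP3' : ∀ j, z + α j = p j + q j := hP3
    -- find a good index k
    have hbad2 : ∀ k k' : Fin 6, (p k = q k ∧ p k = w 0) → (p k' = q k' ∧ p k' = w 0) →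
        k = k' := by
      intro k k' ⟨hk1, hk2⟩ ⟨hk1', hk2'⟩
      have e1 : z + α k = w 0 + w 0 := by rw [hP3' k, ← hk1, hk2]
      have e2 : z + α k' = w 0 + w 0 := by rw [hP3' k', ← hk1', hk2']
      exact hαinj (add_left_cancel (e1.trans e2.symm))
    have hbad1 : ∀ k k' : Fin 6, (p 0 = q 0 ∧ p 0 = w k) → (p 0 = q 0 ∧ p 0 = w k') →
        k = k' := by
      intro k k' ⟨_, hk2⟩ ⟨_, hk2'⟩
      exact hwinj (hk2.symm.trans hk2')
    have hk : ∃ k : Fin 6, k ≠ 0 ∧ ¬(p 0 = q 0 ∧ p 0 = w k) ∧ ¬(p k = q k ∧ p k = w 0) := by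
      by_contra hcon
      push_neg at hcon
      have hcon' : ∀ k : Fin 6, k ≠ 0 → ¬(p 0 = q 0 ∧ p 0 = w k) → (p k = q k ∧ p k = w 0) :=
        fun k hk hn => hcon k hk (fun h1 h2 => hn ⟨h1, h2⟩)
      by_cases a1 : (p 0 = q 0 ∧ p 0 = w 1) <;>
        by_cases a2 : (p 0 = q 0 ∧ p 0 = w 2) <;>
        by_cases a3 : (p 0 = q 0 ∧ p 0 = w 3)
      · exact absurd (hbad1 1 2 a1 a2) (by decide)
      · exact absurd (hbad1 1 2 a1 a2) (by decide)
      · exact absurd (hbad1 1 3 a1 a3) (by decide)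
      · exact absurd (hbad2 2 3 (hcon' 2 (by decide) a2) (hcon' 3 (by decide) a3)) (by decide)
      · exact absurd (hbad1 2 3 a2 a3) (by decide)
      · exact absurd (hbad2 1 3 (hcon' 1 (by decide) a1) (hcon' 3 (by decide) a3)) (by decide)
      · exact absurd (hbad2 1 2 (hcon' 1 (by decide) a1) (hcon' 2 (by decide) a2)) (by decide)
      · exact absurd (hbad2 1 2 (hcon' 1 (by decide) a1) (hcon' 2 (by decide) a2)) (by decide)
    obtain ⟨k, hk0, hnb1, hnb2⟩ := hk
    have hw0 : w 0 = α 0 + c := rfl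
    have hwk : w k = α k + c := rfl
    have hsum3 : ({p 0, q 0, w k} : Multiset H).sum = ({p k, q k, w 0} : Multiset H).sum := by
      simp only [Multiset.insert_eq_cons, Multiset.sum_cons, Multiset.sum_singleton]
      calc p 0 + (q 0 + w k) = (p 0 + q 0) + (α k + c) := by rw [hwk]; abel
        _ = (z + α 0) + (α k + c) := by rw [← hP3' 0]
        _ = (z + α k) + (α 0 + c) := by abel
        _ = (p k + q k) + (α 0 + c) := by rw [← hP3' k]
        _ = p k + (q k + w 0) := by rw [hw0]; abel
    have heq3 : ({p 0, q 0, w k} : Multiset H) = {p k, q k, w 0} := by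
      apply multiset_eq_of_sum_eq hB
      · intro z' hz'
        rcases (by simpa using hz' : z' = p 0 ∨ z' = q 0 ∨ z' = w k) with h | h | h
        · rw [h]; exact hP1' 0
        · rw [h]; exact hP2' 0
        · rw [h]; exact hwB k
      · intro z' hz'
        rcases (by simpa using hz' : z' = p k ∨ z' = q k ∨ z' = w 0) with h | h | h
        · rw [h]; exact hP1' k
        · rw [h]; exact hP2' k
        · rw [h]; exact hwB 0
      · simp
      · simp
      · intro z'; exact count_triple_le _ _ _ _ hnb1
      · intro z'; exact count_triple_le _ _ _ _ hnb2
      · exact hsum3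
    have hw0mem : w 0 ∈ ({p 0, q 0, w k} : Multiset H) := by
      rw [heq3]; simp
    rcases (by simpa using hw0mem : w 0 = p 0 ∨ w 0 = q 0 ∨ w 0 = w k) with h | h | h
    · -- z + c = q 0
      have : z + c = q 0 := by
        have h4 : z + c - q 0 = (z + α 0) - (p 0 + q 0) + (p 0 - w 0) + (c + c) := by
          rw [hw0]; abel
        have h5 : z + c - q 0 = 0 := by
          rw [h4, hP3 0, sub_self, ← h, sub_self, hc]
          abel
        exact sub_eq_zero.mp h5
      rw [this]; exact hP2' 0
    · have : z + c = p 0 := by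
        have h4 : z + c - p 0 = (z + α 0) - (p 0 + q 0) + (q 0 - w 0) + (c + c) := by
          rw [hw0]; abel
        have h5 : z + c - p 0 = 0 := by
          rw [h4, hP3 0, sub_self, ← h, sub_self, hc]
          abel
        exact sub_eq_zero.mp h5
      rw [this]; exact hP1' 0
    · exact absurd (hwinj h).symm hk0
  -- conclusion
  refine ⟨c, ⟨hc, ?_⟩, ?_⟩
  · rintro _ ⟨z, hz, rfl⟩
    exact main z hz
  · rintro c' ⟨hc', hc'B⟩
    have h0c : α 0 + c ∈ B := hcB 0
    have h1c : α 1 + c ∈ B := hcB 1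
    have h0c' : α 0 + c' ∈ B := hc'B ⟨α 0, hαA 0, rfl⟩
    have h1c' : α 1 + c' ∈ B := hc'B ⟨α 1, hαA 1, rfl⟩
    have hequ : ({α 0 + c', α 1 + c} : Multiset H) = {α 0 + c, α 1 + c'} := by
      apply multiset_eq_of_sum_eq hB
      · intro z' hz'
        rcases (by simpa using hz' : z' = α 0 + c' ∨ z' = α 1 + c) with h | h
        · rw [h]; exact h0c'
        · rw [h]; exact h1c
      · intro z' hz'
        rcases (by simpa using hz' : z' = α 0 + c ∨ z' = α 1 + c') with h | h
        · rw [h]; exact h0c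
        · rw [h]; exact h1c'
      · simp
      · simp
      · intro z'
        calc ({α 0 + c', α 1 + c} : Multiset H).count z'
            ≤ Multiset.card ({α 0 + c', α 1 + c} : Multiset H) := Multiset.count_le_card _ _
          _ ≤ 2 := by simp
      · intro z'
        calc ({α 0 + c, α 1 + c'} : Multiset H).count z'
            ≤ Multiset.card ({α 0 + c, α 1 + c'} : Multiset H) := Multiset.count_le_card _ _
          _ ≤ 2 := by simp
      · simp only [Multiset.insert_eq_cons, Multiset.sum_cons, Multiset.sum_singleton]
        abel
    have hmem : α 0 + c' ∈ ({α 0 + c, α 1 + c'} : Multiset H) := by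
      rw [← hequ]; simp
    rcases (by simpa using hmem : α 0 + c' = α 0 + c ∨ α 0 + c' = α 1 + c') with h | h
    · exact add_left_cancel h
    · exact absurd (hαinj (add_right_cancel h)) (by decide)
end

section
/- Suppose (H,+,0) is an Abelian group and B ⊆ H is quasi independent. If A ⊆ H has at least 4 elements and c ≠ d are such that A+c ⊆ B and A+d ⊆ B, then a contradiction follows; that is, there is at most one c ∈ H with A+c ⊆ B. -/
theorem unique_translation {H : Type*} [AddCommGroup H] (B : Set H) (hB : QuasiIndep B)
    (A : Set H) (hA : (4 : ℕ∞) ≤ A.encard) (c d : H)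
    (hc : (· + c) '' A ⊆ B) (hd : (· + d) '' A ⊆ B) : c = d := by
  classical
  by_contra hcd
  obtain ⟨hB8, hB2⟩ := hB
  obtain ⟨a₀, a₁, ha₀, ha₁, hne⟩ := Set.one_lt_encard_iff.1 (lt_of_lt_of_le (by norm_num) hA)
  set x1 := a₀ + c with hx1
  set x2 := a₀ + d with hx2
  set x3 := a₁ + c with hx3
  set x4 := a₁ + d with hx4
  have hx1B : x1 ∈ B := hc ⟨a₀, ha₀, rfl⟩
  have hx2B : x2 ∈ B := hd ⟨a₀, ha₀, rfl⟩
  have hx3B : x3 ∈ B := hc ⟨a₁, ha₁, rfl⟩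
  have hx4B : x4 ∈ B := hd ⟨a₁, ha₁, rfl⟩
  have h12 : x1 ≠ x2 := fun h => hcd (add_left_cancel h)
  have h13 : x1 ≠ x3 := fun h => hne (add_right_cancel h)
  have h24 : x2 ≠ x4 := fun h => hne (add_right_cancel h)
  have h34 : x3 ≠ x4 := fun h => hcd (add_left_cancel h)
  set S : Finset H := {x1, x2, x3, x4} with hS
  have hSB : ↑S ⊆ B := by
    intro x hx
    simp only [hS, Finset.coe_insert, Set.mem_insert_iff, Finset.coe_singleton,
      Set.mem_singleton_iff] at hx
    rcases hx with rfl | rfl | rfl | rfl <;> assumption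
  have hScard : S.card ≤ 4 := by
    have c1 := Finset.card_insert_le x1 ({x2, x3, x4} : Finset H)
    have c2 := Finset.card_insert_le x2 ({x3, x4} : Finset H)
    have c3 := Finset.card_insert_le x3 ({x4} : Finset H)
    have c4 : ({x4} : Finset H).card = 1 := Finset.card_singleton _
    rw [hS]
    omega
  -- find extra elements
  have hdiff : ((8 - S.card : ℕ) : ℕ∞) ≤ (B \ ↑S).encard := by
    have h1 : B.encard ≤ (B \ ↑S).encard + (↑S : Set H).encard :=
      Set.encard_le_encard_diff_add_encard B ↑S
    have h2 : (↑S : Set H).encard = (S.card : ℕ∞) := by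
      rw [Set.encard_coe_eq_coe_finsetCard]
    have h3 : (8 : ℕ∞) ≤ (B \ ↑S).encard + (S.card : ℕ∞) := by
      calc (8 : ℕ∞) ≤ B.encard := hB8
        _ ≤ (B \ ↑S).encard + (↑S : Set H).encard := h1
        _ = (B \ ↑S).encard + (S.card : ℕ∞) := by rw [h2]
    rcases eq_or_ne (B \ ↑S).encard ⊤ with h | h
    · rw [h]; exact le_top
    · lift (B \ ↑S).encard to ℕ using h with m hm
      have h4 : 8 ≤ m + S.card := by exact_mod_cast h3
      exact Nat.cast_le.mpr (by omega)
  obtain ⟨t, hts, htcard⟩ := Set.exists_subset_encard_eq hdiff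
  have htfin : t.Finite := Set.finite_of_encard_eq_coe htcard
  have htcard' : htfin.toFinset.card = 8 - S.card := by
    have := htfin.encard_eq_coe_toFinset_card
    rw [this] at htcard
    exact_mod_cast htcard
  set T : Finset H := S ∪ htfin.toFinset with hT
  have hdisj : Disjoint S htfin.toFinset := by
    rw [Finset.disjoint_left]
    intro a haS hat
    have := hts (htfin.mem_toFinset.mp hat)
    exact this.2 haS
  have hTcard : T.card = 8 := by
    rw [hT, Finset.card_union_of_disjoint hdisj, htcard']
    omega
  have hTB : ↑T ⊆ B := by
    intro x hx
    rw [hT] at hx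
    simp only [Finset.coe_union, Set.mem_union, Set.Finite.coe_toFinset] at hx
    rcases hx with hx | hx
    · exact hSB hx
    · exact (hts hx).1
  have hST : S ⊆ T := Finset.subset_union_left
  have hx1T : x1 ∈ T := hST (by simp [hS])
  have hx2T : x2 ∈ T := hST (by simp [hS])
  have hx3T : x3 ∈ T := hST (by simp [hS])
  have hx4T : x4 ∈ T := hST (by simp [hS])
  -- build the coefficient function
  set f : H → ℤ := fun x =>
    (if x = x1 then 1 else 0) - (if x = x2 then 1 else 0)
      - (if x = x3 then 1 else 0) + (if x = x4 then 1 else 0) with hf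
  have hfbound : ∀ x, |f x| ≤ 2 := by
    intro x
    simp only [hf]
    split_ifs <;> decide
  have hfx1 : f x1 ≠ 0 := by
    simp only [hf, if_pos rfl, if_neg h12, if_neg h13]
    split_ifs <;> norm_num
  have hsum : ∑ x ∈ T, f x • x = 0 := by
    simp only [hf, sub_smul, add_smul, ite_smul, one_smul, zero_smul]
    rw [Finset.sum_add_distrib, Finset.sum_sub_distrib, Finset.sum_sub_distrib]
    simp only [Finset.sum_ite_eq' T, hx1T, hx2T, hx3T, hx4T, if_pos]
    rw [hx1, hx2, hx3, hx4]
    abel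
  -- assemble Fin 8 data
  let e : Fin 8 ≃ T := (T.equivFinOfCardEq hTcard).symm
  have := hB2 (fun i => (e i : H)) (fun i => f (e i))
    (fun i j hij => e.injective (Subtype.coe_injective hij))
    (fun i => hTB (e i).2) (fun i => hfbound _)
    ⟨e.symm ⟨x1, hx1T⟩, by simpa using hfx1⟩
  apply this
  rw [← hsum, ← Finset.sum_coe_sort T (fun x => f x • x)]
  exact Equiv.sum_comp e (fun x : T => f (x : H) • (x : H))
end

section
/- Let H be an Abelian group in which every element has order at most 2, B ⊆ H, and x ≠ y. If the intersection (B+x) ∩ (B+y) is finite, then its cardinality is even. -/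
theorem even_overlap_exponent_two {H : Type*} [AddCommGroup H]
    (hexp : ∀ a : H, a + a = 0) (B : Set H) (x y : H) (hxy : x ≠ y)
    (hfin : ((· + x) '' B ∩ (· + y) '' B).Finite) :
    Even ((· + x) '' B ∩ (· + y) '' B).ncard := by
  classical
  set S : Set H := (· + x) '' B ∩ (· + y) '' B with hS
  have hmem : ∀ z ∈ S, z + x + y ∈ S := by
    rintro z ⟨⟨b0, hb0, rfl⟩, ⟨b1, hb1, he⟩⟩
    simp only [] at he
    constructor
    · refine ⟨b1, hb1, ?_⟩
      show b1 + x = b0 + x + x + y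
      have h2 : b0 + x + x + y = b1 + x + (y + y) := by rw [← he]; abel
      rw [h2, hexp, add_zero]
    · refine ⟨b0, hb0, ?_⟩
      show b0 + y = b0 + x + x + y
      rw [show b0 + x + x + y = b0 + y + (x + x) by abel, hexp, add_zero]
  haveI : Fintype S := hfin.fintype
  let f : Function.End S := fun z => ⟨z.1 + x + y, hmem z.1 z.2⟩
  have hf2 : f ^ (2 ^ 1) = 1 := by
    rw [pow_one, sq]
    funext z
    refine Subtype.ext ?_
    show z.1 + x + y + x + y = z.1
    rw [show z.1 + x + y + x + y = z.1 + (x + x) + (y + y) by abel, hexp, hexp,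
      add_zero, add_zero]
  haveI : Fact (Nat.Prime 2) := ⟨Nat.prime_two⟩
  have hmod := Equiv.Perm.card_fixedPoints_modEq (p := 2) (n := 1) hf2
  have hfix : Function.fixedPoints f = ∅ := by
    ext z
    simp only [Function.mem_fixedPoints, Function.IsFixedPt, Set.mem_empty_iff_false,
      iff_false]
    intro h
    apply hxy
    have h1 : z.1 + x + y = z.1 := congrArg Subtype.val h
    have h2 : x + y = 0 := by
      have h3 : z.1 + (x + y) = z.1 + 0 := by rw [add_zero, ← add_assoc]; exact h1
      exact add_left_cancel h3
    calc x = x + (x + y) := by rw [h2, add_zero]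
    _ = y := by rw [← add_assoc, hexp, zero_add]
  have hzero : Fintype.card (Function.fixedPoints f) = 0 := by
    simp [hfix]
  rw [hzero] at hmod
  have heven : Even (Fintype.card S) := by
    rcases (Nat.modEq_zero_iff_dvd.mp hmod) with ⟨k, hk⟩
    exact ⟨k, by omega⟩
  rwa [Set.ncard_eq_toFinset_card' S, Set.toFinset_card]
end

section
/- Suppose that for i < j < 10 we are given pairs W̄₀(i,j), W̄₁(i,j) from a family 𝒲, with W̄₀(i,j) ≠ W̄₁(i,j) for all i < j (injective in each pair), and the indexed family is homogeneous: the truth of any equality W̄_j(i_x,i_y) = W̄_{j'}(i_{x'},i_{y'}) depends only on the order type of the indices. If {W̄₀(i,j) : i<j<10} ∩ {W̄₁(i,j) : i<j<10} ≠ ∅, then either W̄₀(0,1) = W̄₁(1,2) or W̄₁(0,1) = W̄₀(1,2). -/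
set_option linter.unnecessarySeqFocus false

private lemma hmc_sm4 {a b c d : Fin 10} (h1 : a < b) (h2 : b < c) (h3 : c < d) :
    StrictMono ![a, b, c, d] := by
  intro u v huv
  fin_cases u <;> fin_cases v <;> simp_all <;> omega

private lemma hmc_sm3 {a b c : Fin 10} (h1 : a < b) (h2 : b < c) :
    StrictMono ![a, b, c] := by
  intro u v huv
  fin_cases u <;> fin_cases v <;> simp_all <;> omega

/-- Extend a strictly monotone triple and the canonical triple `![1,3,5]` to
quadruples along a common position embedding. -/
private lemma hmc_ext (t : Fin 3 → Fin 10) (ht : StrictMono t) :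
    ∃ (p : Fin 3 → Fin 4) (q q' : Fin 4 → Fin 10), StrictMono p ∧ StrictMono q ∧
      StrictMono q' ∧ (∀ z, q (p z) = t z) ∧ (∀ z, q' (p z) = ![1, 3, 5] z) := by
  have h01 : t 0 < t 1 := ht (show (0 : Fin 3) < 1 by decide)
  have h12 : t 1 < t 2 := ht (show (1 : Fin 3) < 2 by decide)
  by_cases h9 : t 2 < 9
  · exact ⟨![0,1,2], ![t 0, t 1, t 2, 9], ![1,3,5,9], by decide,
      hmc_sm4 h01 h12 h9, hmc_sm4 (by decide) (by decide) (by decide),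
      by intro z; fin_cases z <;> rfl, by decide⟩
  · by_cases h0 : 0 < t 0
    · exact ⟨![1,2,3], ![0, t 0, t 1, t 2], ![0,1,3,5], by decide,
        hmc_sm4 h0 h01 h12, hmc_sm4 (by decide) (by decide) (by decide),
        by intro z; fin_cases z <;> rfl, by decide⟩
    · by_cases h1 : 1 < t 1
      · exact ⟨![0,2,3], ![t 0, 1, t 1, t 2], ![1,2,3,5], by decide,
          hmc_sm4 (by omega) h1 h12, hmc_sm4 (by decide) (by decide) (by decide),
          by intro z; fin_cases z <;> rfl, by decide⟩
      · exact ⟨![0,1,3], ![t 0, t 1, 2, t 2], ![1,3,4,5], by decide,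
          hmc_sm4 h01 (by omega) (by omega),
          hmc_sm4 (by decide) (by decide) (by decide),
          by intro z; fin_cases z <;> rfl, by decide⟩

theorem homogeneous_meeting_claim {α : Type*} (W : Fin 2 → Fin 10 → Fin 10 → α)
    (hne : ∀ i j : Fin 10, i < j → W 0 i j ≠ W 1 i j)
    (hhom : ∀ (j j' : Fin 2) (x y x' y' : Fin 4), x < y → x' < y' →
      ∀ i i' : Fin 4 → Fin 10, StrictMono i → StrictMono i' →
        ((W j (i x) (i y) = W j' (i x') (i y')) ↔
          (W j (i' x) (i' y) = W j' (i' x') (i' y'))))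
    (hmeet : ∃ i j i' j' : Fin 10, i < j ∧ i' < j' ∧ W 0 i j = W 1 i' j') :
    W 0 0 1 = W 1 1 2 ∨ W 1 0 1 = W 0 1 2 := by
  -- generalized non-equality
  have hne' : ∀ (j j' : Fin 2), j ≠ j' → ∀ a b : Fin 10, a < b → W j a b ≠ W j' a b := by
    intro j j' hjj a b hab h
    fin_cases j <;> fin_cases j'
    · exact hjj rfl
    · exact hne a b hab h
    · exact hne a b hab h.symm
    · exact hjj rfl
  -- from a single instance to all quadruples
  have gen4 : ∀ (j j' : Fin 2) (x y x' y' : Fin 4), x < y → x' < y' →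
      (∃ i0 : Fin 4 → Fin 10, StrictMono i0 ∧ W j (i0 x) (i0 y) = W j' (i0 x') (i0 y')) →
      ∀ i : Fin 4 → Fin 10, StrictMono i → W j (i x) (i y) = W j' (i x') (i y') := by
    rintro j j' x y x' y' hxy hx'y' ⟨i0, hi0, h0⟩ i hi
    exact (hhom j j' x y x' y' hxy hx'y' i0 i hi0 hi).mp h0
  -- from an instance at an arbitrary triple to the canonical triple ![1,3,5]
  have link : ∀ (j j' : Fin 2) (x y x' y' : Fin 3), x < y → x' < y' →
      ∀ t : Fin 3 → Fin 10, StrictMono t →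
      W j (t x) (t y) = W j' (t x') (t y') →
      W j (![1,3,5] x) (![1,3,5] y) = W j' (![1,3,5] x') (![1,3,5] y') := by
    intro j j' x y x' y' hxy hx'y' t ht h
    obtain ⟨p, q, q', hp, hq, hq', hcq, hcq'⟩ := hmc_ext t ht
    have key := hhom j j' (p x) (p y) (p x') (p y') (hp hxy) (hp hx'y') q q' hq hq'
    simp only [hcq, hcq'] at key
    exact key.mp h
  -- lift an instance at an arbitrary triple to a full quadruple relation
  have lift3 : ∀ (j j' : Fin 2) (x y x' y' : Fin 3), x < y → x' < y' →
      ∀ t : Fin 3 → Fin 10, StrictMono t →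
      W j (t x) (t y) = W j' (t x') (t y') →
      ∀ i : Fin 4 → Fin 10, StrictMono i →
        W j (i x.castSucc) (i y.castSucc) = W j' (i x'.castSucc) (i y'.castSucc) := by
    intro j j' x y x' y' hxy hx'y' t ht h
    have hc := link j j' x y x' y' hxy hx'y' t ht h
    refine gen4 j j' x.castSucc y.castSucc x'.castSucc y'.castSucc
      (by simpa using hxy) (by simpa using hx'y')
      ⟨![1,3,5,9], hmc_sm4 (by decide) (by decide) (by decide), ?_⟩
    have hv : ∀ z : Fin 3, (![1,3,5,9] : Fin 4 → Fin 10) z.castSucc = ![1,3,5] z := by decide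
    simp only [hv]
    exact hc
  -- contradiction lemmas
  have contra1 : ∀ (j j' : Fin 2), j ≠ j' →
      (∀ i : Fin 4 → Fin 10, StrictMono i → W j (i 0) (i 1) = W j' (i 0) (i 2)) → False := by
    intro j j' hjj h
    have e1 : W j 0 1 = W j' 0 3 := h ![0,1,3,4] (hmc_sm4 (by decide) (by decide) (by decide))
    have e2 : W j 0 2 = W j' 0 3 := h ![0,2,3,4] (hmc_sm4 (by decide) (by decide) (by decide))
    have h2 := gen4 j j 0 1 0 2 (by decide) (by decide)
      ⟨![0,1,2,9], hmc_sm4 (by decide) (by decide) (by decide), e1.trans e2.symm⟩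
    have e3 : W j 0 2 = W j 0 3 := h2 ![0,2,3,9] (hmc_sm4 (by decide) (by decide) (by decide))
    exact hne' j j' hjj 0 3 (by decide) (e3.symm.trans e2)
  have contra2 : ∀ (j j' : Fin 2), j ≠ j' →
      (∀ i : Fin 4 → Fin 10, StrictMono i → W j (i 0) (i 2) = W j' (i 1) (i 2)) → False := by
    intro j j' hjj h
    have e1 : W j 0 3 = W j' 2 3 := h ![0,2,3,9] (hmc_sm4 (by decide) (by decide) (by decide))
    have e2 : W j 1 3 = W j' 2 3 := h ![1,2,3,9] (hmc_sm4 (by decide) (by decide) (by decide))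
    have h2 := gen4 j j 0 2 1 2 (by decide) (by decide)
      ⟨![0,1,3,9], hmc_sm4 (by decide) (by decide) (by decide), e1.trans e2.symm⟩
    have e3 : W j 1 3 = W j 2 3 := h2 ![1,2,3,9] (hmc_sm4 (by decide) (by decide) (by decide))
    exact hne' j j' hjj 2 3 (by decide) (e3.symm.trans e2)
  have contra3 : ∀ (j j' : Fin 2), j ≠ j' →
      (∀ i : Fin 4 → Fin 10, StrictMono i → W j (i 0) (i 1) = W j' (i 2) (i 3)) → False := by
    intro j j' hjj h
    have e1 : W j 0 1 = W j' 2 3 := h ![0,1,2,3] (hmc_sm4 (by decide) (by decide) (by decide))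
    have e2 : W j 0 1 = W j' 4 5 := h ![0,1,4,5] (hmc_sm4 (by decide) (by decide) (by decide))
    have h4 := gen4 j' j' 2 3 0 1 (by decide) (by decide)
      ⟨![2,3,4,5], hmc_sm4 (by decide) (by decide) (by decide), (e1.symm.trans e2).symm⟩
    have e3 : W j 4 5 = W j' 6 7 := h ![4,5,6,7] (hmc_sm4 (by decide) (by decide) (by decide))
    have e4 : W j' 6 7 = W j' 4 5 := h4 ![4,5,6,7] (hmc_sm4 (by decide) (by decide) (by decide))
    exact hne' j j' hjj 4 5 (by decide) (e3.trans e4)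
  have contra4 : ∀ (j j' : Fin 2), j ≠ j' →
      (∀ i : Fin 4 → Fin 10, StrictMono i → W j (i 0) (i 2) = W j' (i 1) (i 3)) → False := by
    intro j j' hjj h
    have e1 : W j 0 4 = W j' 2 6 := h ![0,2,4,6] (hmc_sm4 (by decide) (by decide) (by decide))
    have e2 : W j 0 4 = W j' 3 6 := h ![0,3,4,6] (hmc_sm4 (by decide) (by decide) (by decide))
    have h3 := gen4 j' j' 1 2 0 2 (by decide) (by decide)
      ⟨![2,3,6,9], hmc_sm4 (by decide) (by decide) (by decide), (e1.symm.trans e2).symm⟩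
    have e3 : W j 0 2 = W j' 1 3 := h ![0,1,2,3] (hmc_sm4 (by decide) (by decide) (by decide))
    have e4 : W j' 1 3 = W j' 0 3 := h3 ![0,1,3,9] (hmc_sm4 (by decide) (by decide) (by decide))
    have h5 := gen4 j j' 0 1 0 2 (by decide) (by decide)
      ⟨![0,2,3,9], hmc_sm4 (by decide) (by decide) (by decide), e3.trans e4⟩
    exact contra1 j j' hjj h5
  have contra5 : ∀ (j j' : Fin 2), j ≠ j' →
      (∀ i : Fin 4 → Fin 10, StrictMono i → W j (i 0) (i 3) = W j' (i 1) (i 2)) → False := by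
    intro j j' hjj h
    have e1 : W j 0 6 = W j' 2 4 := h ![0,2,4,6] (hmc_sm4 (by decide) (by decide) (by decide))
    have e2 : W j 0 6 = W j' 3 4 := h ![0,3,4,6] (hmc_sm4 (by decide) (by decide) (by decide))
    have h3 := gen4 j' j' 1 2 0 2 (by decide) (by decide)
      ⟨![2,3,4,9], hmc_sm4 (by decide) (by decide) (by decide), (e1.symm.trans e2).symm⟩
    have e3 : W j 0 3 = W j' 1 2 := h ![0,1,2,3] (hmc_sm4 (by decide) (by decide) (by decide))
    have e4 : W j' 1 2 = W j' 0 2 := h3 ![0,1,2,9] (hmc_sm4 (by decide) (by decide) (by decide))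
    have h5 := gen4 j' j 0 1 0 2 (by decide) (by decide)
      ⟨![0,2,3,9], hmc_sm4 (by decide) (by decide) (by decide), (e3.trans e4).symm⟩
    exact contra1 j' j hjj.symm h5
  obtain ⟨a, b, c, d, hab, hcd, heq⟩ := hmeet
  rcases lt_trichotomy a c with hac | hac | hac
  · rcases lt_trichotomy b c with hbc | hbc | hbc
    · -- a < b < c < d : pattern (0,1)(2,3)
      exact absurd (gen4 0 1 0 1 2 3 (by decide) (by decide)
        ⟨![a,b,c,d], hmc_sm4 hab hbc hcd, heq⟩) (contra3 0 1 (by decide))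
    · -- b = c : goal left
      subst hbc
      exact Or.inl (lift3 0 1 0 1 1 2 (by decide) (by decide) ![a,b,d]
        (hmc_sm3 hab hcd) heq ![0,1,2,9] (hmc_sm4 (by decide) (by decide) (by decide)))
    · rcases lt_trichotomy b d with hbd | hbd | hbd
      · -- a < c < b < d : pattern (0,2)(1,3)
        exact absurd (gen4 0 1 0 2 1 3 (by decide) (by decide)
          ⟨![a,c,b,d], hmc_sm4 hac hbc hbd, heq⟩) (contra4 0 1 (by decide))
      · -- b = d : a < c < b : pattern (0,2)(1,2)
        subst hbd
        exact absurd (lift3 0 1 0 2 1 2 (by decide) (by decide) ![a,c,b]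
          (hmc_sm3 hac hbc) heq) (contra2 0 1 (by decide))
      · -- a < c < d < b : pattern (0,3)(1,2)
        exact absurd (gen4 0 1 0 3 1 2 (by decide) (by decide)
          ⟨![a,c,d,b], hmc_sm4 hac hcd hbd, heq⟩) (contra5 0 1 (by decide))
  · -- a = c
    subst hac
    rcases lt_trichotomy b d with hbd | hbd | hbd
    · exact absurd (lift3 0 1 0 1 0 2 (by decide) (by decide) ![a,b,d]
        (hmc_sm3 hab hbd) heq) (contra1 0 1 (by decide))
    · subst hbd; exact absurd heq (hne a b hab)
    · exact absurd (lift3 1 0 0 1 0 2 (by decide) (by decide) ![a,d,b]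
        (hmc_sm3 hcd hbd) heq.symm) (contra1 1 0 (by decide))
  · rcases lt_trichotomy d a with hda | hda | hda
    · -- c < d < a < b
      exact absurd (gen4 1 0 0 1 2 3 (by decide) (by decide)
        ⟨![c,d,a,b], hmc_sm4 hcd hda hab, heq.symm⟩) (contra3 1 0 (by decide))
    · -- d = a : goal right
      subst hda
      exact Or.inr (lift3 1 0 0 1 1 2 (by decide) (by decide) ![c,d,b]
        (hmc_sm3 hcd hab) heq.symm ![0,1,2,9] (hmc_sm4 (by decide) (by decide) (by decide)))
    · rcases lt_trichotomy d b with hdb | hdb | hdb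
      · -- c < a < d < b
        exact absurd (gen4 1 0 0 2 1 3 (by decide) (by decide)
          ⟨![c,a,d,b], hmc_sm4 hac hda hdb, heq.symm⟩) (contra4 1 0 (by decide))
      · -- d = b : c < a < b
        subst hdb
        exact absurd (lift3 1 0 0 2 1 2 (by decide) (by decide) ![c,a,d]
          (hmc_sm3 hac hab) heq.symm) (contra2 1 0 (by decide))
      · -- c < a < b < d
        exact absurd (gen4 1 0 0 3 1 2 (by decide) (by decide)
          ⟨![c,a,b,d], hmc_sm4 hac hab hdb, heq.symm⟩) (contra5 1 0 (by decide))
end
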